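/- arXiv:1507.05226 — 4 statements merged into one kernel-verified Lean document; each statement's English description precedes it below -/
import Mathlib

section
/- For every ε > 0 there exists a natural number r_ε such that every triangle-free graph H with minimum degree δ(H) > (1/3 + ε)·v(H), where v(H) is the number of vertices of H, has chromatic number at most r_ε. -/
open Finset SimpleGraph

namespace ThomassenAux



/-! ### Numeric lemmas -/

lemma poly_lt_pow (d : ℕ) : 2*d^2 + 8*d + 1 < 6 * 4^d := by
  induction d with
  | zero => norm_num
  | succ d ih =>
    rcases Nat.eq_zero_or_pos d with h | h
    · subst h; norm_num
    · have h4 : 6 * 4^(d+1) = 4 * (6 * 4^d) := by ring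
      nlinarith [ih, h]

lemma key_numeric (d : ℕ) : 2*((d+1) * (2*(36*4^d))^d) < 2^(6*4^d) := by
  have h1 : d + 1 ≤ 2^d := Nat.lt_two_pow_self (n := d)
  have h2 : 2*(36*4^d) ≤ 2^(2*d+7) := by
    have : (4:ℕ)^d = 2^(2*d) := by
      rw [show (4:ℕ) = 2^2 by norm_num, ← pow_mul]
    rw [this, pow_add]
    have : (2:ℕ)^7 = 128 := by norm_num
    nlinarith [(Nat.pow_pos (show 0 < 2 by norm_num) : 0 < 2^(2*d))]
  calc 2*((d+1) * (2*(36*4^d))^d)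
      ≤ 2*(2^d * (2^(2*d+7))^d) := by
        gcongr
    _ = 2^(2*d^2 + 8*d + 1) := by
        rw [← pow_mul, show 2*(2^d * 2^((2*d+7)*d)) = 2^1 * 2^d * 2^((2*d+7)*d) by ring,
          ← pow_add, ← pow_add]
        congr 1; ring
    _ < 2^(6*4^d) := Nat.pow_lt_pow_right (by norm_num) (poly_lt_pow d)




variable {n : ℕ}

/-- A graph is *closed* if any two distinct non-adjacent vertices have a common
neighbour (i.e. it is maximal triangle-free, in the relevant sense). -/
def Closed (G : SimpleGraph (Fin n)) : Prop :=
  ∀ u v : Fin n, u ≠ v → ¬ G.Adj u v → ∃ w, G.Adj u w ∧ G.Adj v w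

open scoped Classical in
noncomputable def mes (G : SimpleGraph (Fin n)) : ℕ :=
  #(univ.filter fun p : Fin n × Fin n => p.1 ≠ p.2 ∧ ¬ G.Adj p.1 p.2)

lemma tri_free_common {G : SimpleGraph (Fin n)} (h3 : G.CliqueFree 3)
    {x y z : Fin n} (h1 : G.Adj x y) (h2 : G.Adj x z) (h12 : G.Adj y z) : False :=
  h3 {x, y, z} (is3Clique_triple_iff.mpr ⟨h1, h2, h12⟩)

lemma closure_aux : ∀ (k : ℕ) (G : SimpleGraph (Fin n)), G.CliqueFree 3 → mes G ≤ k →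
    ∃ G', G ≤ G' ∧ G'.CliqueFree 3 ∧ Closed G' := by
  classical
  intro k
  induction k with
  | zero =>
    intro G h3 hm
    refine ⟨G, le_refl _, h3, ?_⟩
    intro u v hne hnadj
    by_contra h
    have hmem : (u, v) ∈ (univ.filter fun p : Fin n × Fin n => p.1 ≠ p.2 ∧ ¬ G.Adj p.1 p.2) := by
      simp [hne, hnadj]
    have : 0 < mes G := by
      rw [mes]; exact card_pos.mpr ⟨(u,v), by convert hmem⟩
    omega
  | succ k ih =>
    intro G h3 hm
    by_cases hc : Closed G
    · exact ⟨G, le_refl _, h3, hc⟩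
    · rw [Closed] at hc
      push_neg at hc
      obtain ⟨u, v, hne, hnadj, hnocommon⟩ := hc
      set G'' : SimpleGraph (Fin n) := G ⊔ SimpleGraph.fromEdgeSet {s(u,v)} with hG''
      have hle : G ≤ G'' := le_sup_left
      have hadj'' : G''.Adj u v := by
        refine Or.inr ?_
        rw [SimpleGraph.fromEdgeSet_adj]
        exact ⟨by simp, hne⟩
      have new2 : ∀ {x y}, G''.Adj x y → G.Adj x y ∨ s(x, y) = s(u, v) := by
        intro x y h
        rcases h with h | h
        · exact Or.inl h
        · rw [SimpleGraph.fromEdgeSet_adj] at h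
          exact Or.inr (by simpa using h.1)
      have h3'' : G''.CliqueFree 3 := by
        intro t ht
        obtain ⟨a, b, c, hab, hac, hbc, rfl⟩ := is3Clique_iff.mp ht
        rcases new2 hab with hab' | hab'
        · rcases new2 hac with hac' | hac'
          · rcases new2 hbc with hbc' | hbc'
            · exact tri_free_common h3 hab' hac' hbc'
            · -- only bc new
              rcases Sym2.eq_iff.mp hbc' with ⟨h1, h2⟩ | ⟨h1, h2⟩
              · subst h1; subst h2; exact hnocommon a hab'.symm hac'.symm
              · subst h1; subst h2; exact hnocommon a hac'.symm hab'.symm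
          · rcases new2 hbc with hbc' | hbc'
            · -- only ac new
              rcases Sym2.eq_iff.mp hac' with ⟨h1, h2⟩ | ⟨h1, h2⟩
              · subst h1; subst h2; exact hnocommon b hab' hbc'.symm
              · subst h1; subst h2; exact hnocommon b hbc'.symm hab'
            · -- ac, bc new : a = b
              have hab2 : a = b := by
                rcases Sym2.eq_iff.mp (hac'.trans hbc'.symm) with ⟨h1, h2⟩ | ⟨h1, h2⟩
                · exact h1
                · exact h1.trans h2
              exact hab.ne hab2
        · rcases new2 hac with hac' | hac'
          · rcases new2 hbc with hbc' | hbc'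
            · -- only ab new
              rcases Sym2.eq_iff.mp hab' with ⟨h1, h2⟩ | ⟨h1, h2⟩
              · subst h1; subst h2; exact hnocommon c hac' hbc'
              · subst h1; subst h2; exact hnocommon c hbc' hac'
            · -- ab, bc new : a = c
              have hac2 : a = c := by
                rcases Sym2.eq_iff.mp (hab'.trans hbc'.symm) with ⟨h1, h2⟩ | ⟨h1, h2⟩
                · exact h1.trans h2
                · exact h1
              exact hac.ne hac2
          · -- ab, ac new : b = c
            have hbc2 : b = c := by
              rcases Sym2.eq_iff.mp (hab'.trans hac'.symm) with ⟨h1, h2⟩ | ⟨h1, h2⟩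
              · exact h2
              · exact h2.trans h1
            exact hbc.ne hbc2
      have hmes : mes G'' < mes G := by
        apply card_lt_card
        rw [ssubset_iff_of_subset]
        · exact ⟨(u, v), by simp [hne, hnadj], by simp [hadj'']⟩
        · intro p hp
          simp only [mem_filter, mem_univ, true_and] at hp ⊢
          exact ⟨hp.1, fun h => hp.2 (hle h)⟩
      obtain ⟨G', hle', h3', hc'⟩ := ih G'' h3'' (by omega)
      exact ⟨G', le_trans hle hle', h3', hc'⟩

lemma exists_closure (H : SimpleGraph (Fin n)) (h3 : H.CliqueFree 3) :
    ∃ G, H ≤ G ∧ G.CliqueFree 3 ∧ Closed G :=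
  closure_aux (mes H) H h3 le_rfl

open scoped Classical in
/-- The neighbourhood of `w` as a `Finset`. -/
noncomputable def NB (G : SimpleGraph (Fin n)) (w : Fin n) : Finset (Fin n) :=
  univ.filter fun v => G.Adj w v

lemma mem_NB {G : SimpleGraph (Fin n)} {w v : Fin n} : v ∈ NB G w ↔ G.Adj w v := by
  classical
  rw [NB]
  simp only [mem_filter, mem_univ, true_and]

section Closed

variable {ε : ℝ} {G : SimpleGraph (Fin n)}

/-- In a closed triangle-free graph with min degree `> (1/3+ε)n`, any two distinct
non-adjacent vertices have more than `3εn` common neighbours. -/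
lemma codeg_lower (h3 : G.CliqueFree 3) (hcl : Closed G)
    (hdeg : ∀ v, (1/3 + ε) * n < #(NB G v)) {u v : Fin n}
    (hne : u ≠ v) (hnadj : ¬ G.Adj u v) :
    3*ε*(n:ℝ) < #(NB G u ∩ NB G v) := by
  obtain ⟨w, hu, hv⟩ := hcl u v hne hnadj
  have hdisj : Disjoint (NB G u ∪ NB G v) (NB G w) := by
    rw [Finset.disjoint_left]
    intro x hx hxw
    rcases mem_union.mp hx with hxu | hxu
    · exact tri_free_common h3 hu (mem_NB.mp hxu) (mem_NB.mp hxw)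
    · exact tri_free_common h3 hv (mem_NB.mp hxu) (mem_NB.mp hxw)
  have hsub : #(NB G u ∪ NB G v) + #(NB G w) ≤ n := by
    rw [← card_union_of_disjoint hdisj]
    simpa using (card_le_card (subset_univ _)).trans_eq (by simp)
  have hiu : #(NB G u ∩ NB G v) + #(NB G u ∪ NB G v) = #(NB G u) + #(NB G v) :=
    card_inter_add_card_union _ _
  have h1 := hdeg u
  have h2 := hdeg v
  have h3' := hdeg w
  have c1 : ((#(NB G u ∪ NB G v) : ℕ) : ℝ) + #(NB G w) ≤ n := by exact_mod_cast hsub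
  have c2 : ((#(NB G u ∩ NB G v) : ℕ) : ℝ) + #(NB G u ∪ NB G v) = #(NB G u) + #(NB G v) := by
    exact_mod_cast hiu
  linarith

/-- Bound on shattered sets: the "private neighbourhood" argument. -/
lemma shattered_card_le (h3 : G.CliqueFree 3) (hcl : Closed G)
    (hdeg : ∀ v, (1/3 + ε) * n < #(NB G v)) (hε : 0 < ε) {d : ℕ}
    (hd1 : 1 ≤ d) (hd : 1/(3*ε) ≤ (d:ℝ))
    (S : Finset (Fin n)) (hS : ∀ T ⊆ S, ∃ w, S ∩ NB G w = T) : S.card ≤ d := by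
  classical
  by_contra hcon
  push_neg at hcon
  have hcard2 : 2 ≤ S.card := by omega
  -- S is contained in a neighbourhood, hence pairwise non-adjacent
  obtain ⟨w₀, hw₀⟩ := hS S (Finset.Subset.refl S)
  have hSsub : S ⊆ NB G w₀ := by
    intro x hx
    have := hw₀.symm ▸ hx
    exact (mem_inter.mp this).2
  have hpairwise : ∀ x ∈ S, ∀ y ∈ S, x ≠ y → ¬ G.Adj x y := by
    intro x hx y hy hxy hadj
    exact tri_free_common h3 (mem_NB.mp (hSsub hx)) (mem_NB.mp (hSsub hy)) hadj
  -- private parts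
  have hpriv : ∀ x ∈ S, ∃ P : Finset (Fin n),
      P ⊆ NB G x ∧ (∀ y ∈ S.erase x, Disjoint P (NB G y)) ∧ 3*ε*(n:ℝ) < #P := by
    intro x hx
    obtain ⟨wx, hwx⟩ := hS (S.erase x) (erase_subset _ _)
    have hwx_adj : ∀ y ∈ S, y ≠ x → G.Adj wx y := by
      intro y hy hyx
      have : y ∈ S ∩ NB G wx := hwx.symm ▸ (mem_erase.mpr ⟨hyx, hy⟩)
      exact mem_NB.mp (mem_inter.mp this).2
    have hwx_nadj : ¬ G.Adj wx x := by
      intro hadj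
      have : x ∈ S.erase x := hwx ▸ (mem_inter.mpr ⟨hx, mem_NB.mpr hadj⟩)
      simp at this
    have hwx_ne : wx ≠ x := by
      obtain ⟨y, hy⟩ := Finset.card_pos.mp (show 0 < (S.erase x).card by
        rw [card_erase_of_mem hx]; omega)
      intro hwxx
      have hyx := (mem_erase.mp hy).1
      have hyS := (mem_erase.mp hy).2
      exact hpairwise x hx y hyS (Ne.symm hyx)
        (hwxx ▸ hwx_adj y hyS hyx)
    refine ⟨NB G wx ∩ NB G x, inter_subset_right, ?_, ?_⟩
    · intro y hy
      rw [Finset.disjoint_left]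
      intro t ht hty
      have hyx := (mem_erase.mp hy).1
      have hyS := (mem_erase.mp hy).2
      exact tri_free_common h3 (hwx_adj y hyS hyx)
        (mem_NB.mp (mem_inter.mp ht).1) (mem_NB.mp hty)
    · exact codeg_lower h3 hcl hdeg hwx_ne hwx_nadj
  -- choose private parts as a function
  have hpriv' : ∀ x : Fin n, ∃ P : Finset (Fin n), x ∈ S →
      (P ⊆ NB G x ∧ (∀ y ∈ S.erase x, Disjoint P (NB G y)) ∧ 3*ε*(n:ℝ) < #P) := by
    intro x
    by_cases hx : x ∈ S
    · exact (hpriv x hx).imp (fun P h => fun _ => h)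
    · exact ⟨∅, fun hx' => absurd hx' hx⟩
  choose P hP using hpriv'
  have hPdisj : ∀ x ∈ S, ∀ y ∈ S, x ≠ y → Disjoint (P x) (P y) := by
    intro x hx y hy hxy
    have h1 : P x ⊆ NB G x := (hP x hx).1
    have h2 : Disjoint (P y) (NB G x) := (hP y hy).2.1 x (mem_erase.mpr ⟨hxy, hx⟩)
    exact h2.symm.mono_left h1
  have hsum : ∑ x ∈ S, #(P x) = #(S.biUnion P) := (card_biUnion hPdisj).symm
  have hsum_le : ∑ x ∈ S, #(P x) ≤ n := by
    rw [hsum]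
    simpa using (card_le_card (subset_univ (S.biUnion P)))
  -- real arithmetic
  obtain ⟨x₀, hx₀⟩ := Finset.card_pos.mp (show 0 < S.card by omega)
  have hn : (0:ℝ) < n := by exact_mod_cast x₀.pos
  have hlow : (S.card : ℝ) * (3*ε*n) ≤ ∑ x ∈ S, (#(P x) : ℝ) := by
    rw [← nsmul_eq_mul]
    exact Finset.card_nsmul_le_sum S _ _ (fun x hx => le_of_lt (hP x hx).2.2)
  have hup : (∑ x ∈ S, (#(P x) : ℝ)) ≤ n := by
    rw [← Nat.cast_sum]
    exact_mod_cast hsum_le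
  have hε3 : (0:ℝ) < 3*ε := by linarith
  have hc1 : (S.card : ℝ) * (3*ε) ≤ 1 := by
    have := hlow.trans hup
    rw [show (S.card : ℝ) * (3*ε*n) = ((S.card : ℝ) * (3*ε)) * n by ring] at this
    nlinarith
  have hc2 : (S.card : ℝ) ≤ 1/(3*ε) := by
    rw [le_div_iff₀ hε3]
    linarith
  have : (S.card : ℝ) ≤ d := hc2.trans hd
  have : S.card ≤ d := by exact_mod_cast this
  omega

end Closed





lemma card_forced {ι K : Type*} [Fintype ι] [DecidableEq ι] [Fintype K] [DecidableEq K]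
    (F : Finset ι) (φ : ι → K) :
    #(univ.filter fun f : ι → K => ∀ i ∈ F, f i = φ i)
      = Fintype.card K ^ (Fintype.card ι - F.card) := by
  classical
  have e : {f : ι → K // ∀ i ∈ F, f i = φ i} ≃ ({i : ι // i ∉ F} → K) :=
    { toFun := fun f j => f.1 j.1
      invFun := fun g => ⟨fun i => if h : i ∈ F then φ i else g ⟨i, h⟩,
        fun i hi => by simp [hi]⟩
      left_inv := by
        intro f; ext i
        by_cases h : i ∈ F
        · simp [h, (f.2 i h).symm]
        · simp [h]
      right_inv := by
        intro g; ext j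
        simp [j.2] }
  rw [← Fintype.card_subtype]
  rw [Fintype.card_congr e, Fintype.card_fun]
  congr 1
  rw [Fintype.card_subtype_compl, Fintype.card_coe]

section Cheby

variable {n m : ℕ}

/-- number of `i` with `g i ∈ A` -/
private def hitCount (A : Finset (Fin n)) (g : Fin m → Fin n) : ℕ :=
  #(univ.filter fun i => g i ∈ A)

private lemma single_count (A : Finset (Fin n)) (i : Fin m) :
    #(univ.filter fun g : Fin m → Fin n => g i ∈ A) = #A * n ^ (m - 1) := by
  rw [card_eq_sum_card_fiberwise (f := fun g : Fin m → Fin n => g i) (t := A)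
    (s := univ.filter fun g : Fin m → Fin n => g i ∈ A)
    (fun g hg => (mem_filter.mp hg).2)]
  have : ∀ a ∈ A, #((univ.filter fun g : Fin m → Fin n => g i ∈ A).filter
      fun g => g i = a) = n ^ (m - 1) := by
    intro a ha
    rw [filter_filter]
    have he : ((univ : Finset (Fin m → Fin n)).filter fun g => g i ∈ A ∧ g i = a)
        = (univ.filter fun g : Fin m → Fin n => ∀ j ∈ ({i} : Finset (Fin m)), g j = a) := by
      apply filter_congr
      intro g _
      simp only [mem_singleton, forall_eq]
      constructor
      · exact fun h => h.2
      · exact fun h => ⟨h ▸ ha, h⟩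
    have hcf := card_forced ({i} : Finset (Fin m)) (fun _ => a)
    simp only [Fintype.card_fin, card_singleton] at hcf
    rw [he]
    convert hcf using 2
    congr
  rw [sum_congr rfl this, sum_const, smul_eq_mul]

private lemma pair_count (A : Finset (Fin n)) {i j : Fin m} (hij : i ≠ j) :
    #(univ.filter fun g : Fin m → Fin n => g i ∈ A ∧ g j ∈ A) = #A ^ 2 * n ^ (m - 2) := by
  rw [card_eq_sum_card_fiberwise (f := fun g : Fin m → Fin n => (g i, g j)) (t := A ×ˢ A)
    (fun g hg => by
      have := (mem_filter.mp hg).2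
      exact mem_product.mpr ⟨this.1, this.2⟩)]
  have : ∀ p ∈ A ×ˢ A, #((univ.filter fun g : Fin m → Fin n => g i ∈ A ∧ g j ∈ A).filter
      fun g => (g i, g j) = p) = n ^ (m - 2) := by
    intro p hp
    have hp1 := (mem_product.mp hp).1
    have hp2 := (mem_product.mp hp).2
    rw [filter_filter]
    have he : ((univ : Finset (Fin m → Fin n)).filter
          fun g => (g i ∈ A ∧ g j ∈ A) ∧ (g i, g j) = p)
        = (univ.filter fun g : Fin m → Fin n => ∀ l ∈ ({i, j} : Finset (Fin m)),
            g l = (if l = i then p.1 else p.2)) := by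
      apply filter_congr
      intro g _
      constructor
      · rintro ⟨-, h2⟩ l hl
        rcases mem_insert.mp hl with rfl | hl
        · simp [Prod.ext_iff] at h2
          simp [h2.1]
        · rw [mem_singleton] at hl
          subst hl
          simp [Prod.ext_iff] at h2
          simp [hij.symm, h2.2]
      · intro h
        have h1 := h i (by simp)
        have h2 := h j (by simp)
        rw [if_pos rfl] at h1
        rw [if_neg hij.symm] at h2
        refine ⟨⟨h1 ▸ hp1, h2 ▸ hp2⟩, ?_⟩
        rw [h1, h2]
    have hcf := card_forced ({i, j} : Finset (Fin m)) (fun l => if l = i then p.1 else p.2)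
    have hij2 : #({i, j} : Finset (Fin m)) = 2 := by
      rw [card_insert_of_notMem (by simpa using hij), card_singleton]
    simp only [Fintype.card_fin, hij2] at hcf
    rw [he]
    convert hcf using 2
    congr
  rw [sum_congr rfl this, sum_const, smul_eq_mul, card_product]
  ring

private lemma sum_hit (A : Finset (Fin n)) :
    ∑ g : Fin m → Fin n, hitCount A g = m * (#A * n ^ (m - 1)) := by
  have : ∀ g : Fin m → Fin n, hitCount A g = ∑ i : Fin m, if g i ∈ A then 1 else 0 := by
    intro g; rw [hitCount, card_filter]
  rw [Fintype.sum_congr _ _ this, Finset.sum_comm]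
  have : ∀ i : Fin m, (∑ g : Fin m → Fin n, if g i ∈ A then 1 else 0)
      = #A * n ^ (m - 1) := by
    intro i
    rw [← card_filter]
    exact single_count A i
  rw [Fintype.sum_congr _ _ this, sum_const, smul_eq_mul]
  simp [card_univ]

private lemma sum_hit_sq (A : Finset (Fin n)) :
    ∑ g : Fin m → Fin n, (hitCount A g)^2
      = m * (#A * n ^ (m - 1)) + (m * (m-1)) * (#A ^ 2 * n ^ (m - 2)) := by
  have expand : ∀ g : Fin m → Fin n, (hitCount A g)^2
      = ∑ i : Fin m, ∑ j : Fin m, (if g i ∈ A ∧ g j ∈ A then 1 else 0) := by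
    intro g
    rw [hitCount, card_filter, sq, Finset.sum_mul_sum]
    congr 1; ext i; congr 1; ext j
    by_cases h1 : g i ∈ A <;> by_cases h2 : g j ∈ A <;> simp [h1, h2]
  rw [Fintype.sum_congr _ _ expand, Finset.sum_comm]
  have inner : ∀ i : Fin m, (∑ g : Fin m → Fin n, ∑ j : Fin m,
      (if g i ∈ A ∧ g j ∈ A then 1 else 0))
      = (#A * n ^ (m - 1)) + (m-1) * (#A ^ 2 * n ^ (m - 2)) := by
    intro i
    rw [Finset.sum_comm]
    have hsplit : (univ : Finset (Fin m)) = insert i (univ.erase i) := by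
      rw [insert_erase (mem_univ i)]
    rw [hsplit, Finset.sum_insert (notMem_erase i univ)]
    have hdiag : (∑ g : Fin m → Fin n, if g i ∈ A ∧ g i ∈ A then 1 else 0)
        = #A * n ^ (m - 1) := by
      rw [← single_count A i, ← card_filter]
      congr 1; ext g; simp
    have hoff : ∀ j ∈ univ.erase i, (∑ g : Fin m → Fin n, if g i ∈ A ∧ g j ∈ A then 1 else 0)
        = #A ^ 2 * n ^ (m - 2) := by
      intro j hj
      rw [← card_filter]
      exact pair_count A (Ne.symm (mem_erase.mp hj).1)
    rw [hdiag, sum_congr rfl hoff, sum_const, smul_eq_mul, card_erase_of_mem (mem_univ i)]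
    simp [card_univ]
  rw [Fintype.sum_congr _ _ inner, sum_const, smul_eq_mul, card_univ, Fintype.card_fin,
    Nat.mul_add]
  ring

end Cheby


section Cheby2
variable {n m : ℕ}

set_option maxHeartbeats 1000000 in
lemma cheby_half (hm : 24 ≤ m) (A : Finset (Fin n)) (hA : (n:ℝ) ≤ 3 * #A) (hn : 1 ≤ n) :
    ((n:ℝ))^m ≤ 2 * #(univ.filter fun g : Fin m → Fin n => m ≤ 6 * hitCount A g) := by
  have hm1 : 1 ≤ m := by omega
  set q : ℝ := (#A : ℝ) with hqdef
  have hq0 : (0:ℝ) < q := by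
    have : (1:ℝ) ≤ n := by exact_mod_cast hn
    nlinarith
  have hn0 : (0:ℝ) ≤ n := by positivity
  have hm0 : (0:ℝ) < m := by
    have : (24:ℝ) ≤ m := by exact_mod_cast hm
    linarith
  have hpow1 : ((n:ℝ))^m = (n:ℝ)^(m-1) * n := by
    rw [← pow_succ]; congr 1; omega
  have hpow12 : ((n:ℝ))^(m-1) = (n:ℝ)^(m-2) * n := by
    rw [← pow_succ]; congr 1; omega
  have hcardP : ((Fintype.card (Fin m → Fin n) : ℕ) : ℝ) = (n:ℝ)^m := by
    rw [Fintype.card_fun, Fintype.card_fin, Fintype.card_fin]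
    push_cast
    rfl
  have S1 : (∑ g : Fin m → Fin n, (hitCount A g : ℝ)) = m * q * ((n:ℝ))^(m-1) := by
    have h1 := sum_hit (m := m) A
    have h2 : ((∑ g : Fin m → Fin n, hitCount A g : ℕ) : ℝ)
        = ((m * (#A * n ^ (m - 1)) : ℕ) : ℝ) := by exact_mod_cast h1
    push_cast at h2
    rw [h2, hqdef]
    ring
  have S2 : (∑ g : Fin m → Fin n, ((hitCount A g : ℝ))^2)
      = m * q * ((n:ℝ))^(m-1) + (m*((m:ℝ)-1)) * (q^2 * ((n:ℝ))^(m-2)) := by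
    have h1 := sum_hit_sq (m := m) A
    have h2 : ((∑ g : Fin m → Fin n, (hitCount A g)^2 : ℕ) : ℝ)
        = (((m * (#A * n ^ (m - 1)) + (m * (m-1)) * (#A ^ 2 * n ^ (m - 2))) : ℕ) : ℝ) := by
      exact_mod_cast h1
    push_cast [Nat.cast_sub hm1] at h2
    rw [h2, hqdef]
    ring
  have hvar : (∑ g : Fin m → Fin n, ((n:ℝ) * (hitCount A g) - m*q)^2)
      = m*q*((n:ℝ)-q)*((n:ℝ))^m := by
    have hexp : (∑ g : Fin m → Fin n, ((n:ℝ) * (hitCount A g) - m*q)^2)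
        = ∑ g : Fin m → Fin n,
            ((n:ℝ)^2*((hitCount A g : ℝ))^2 - 2*(m*q)*((n:ℝ)*(hitCount A g)) + (m*q)^2) := by
      apply Finset.sum_congr rfl
      intro g _
      ring
    rw [hexp, Finset.sum_add_distrib, Finset.sum_sub_distrib, ← Finset.mul_sum,
      Finset.sum_const, card_univ, nsmul_eq_mul, hcardP]
    have hmul : (∑ g : Fin m → Fin n, 2*(m*q)*((n:ℝ)*(hitCount A g)))
        = 2*(m*q)*(n:ℝ) * (∑ g : Fin m → Fin n, (hitCount A g : ℝ)) := by
      rw [Finset.mul_sum]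
      apply Finset.sum_congr rfl
      intro g _
      ring
    rw [hmul, S1, S2, hpow1, hpow12]
    ring
  set BAD : Finset (Fin m → Fin n) :=
    univ.filter (fun g : Fin m → Fin n => ¬ (m ≤ 6 * hitCount A g)) with hBADdef
  have hbadsq : ∀ g ∈ BAD, ((m:ℝ)*q/2)^2 ≤ ((n:ℝ) * (hitCount A g) - m*q)^2 := by
    intro g hg
    have h6 : 6 * hitCount A g < m := by
      have := (mem_filter.mp hg).2
      omega
    have h6' : 6 * ((hitCount A g : ℝ)) < m := by
      have : ((6 * hitCount A g : ℕ) : ℝ) < m := by exact_mod_cast h6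
      push_cast at this
      linarith
    have hX0 : (0:ℝ) ≤ (hitCount A g : ℝ) := by positivity
    have hnX : (n:ℝ) * (hitCount A g) < m*q/2 := by
      calc (n:ℝ) * (hitCount A g) ≤ 3*q*(hitCount A g) := by
            apply mul_le_mul_of_nonneg_right hA hX0
        _ < m*q/2 := by nlinarith [mul_pos hq0 (show (0:ℝ) < (m:ℝ) - 6*(hitCount A g) by linarith)]
    have f1 : (0:ℝ) < m*q/2 - (n:ℝ) * (hitCount A g) := by linarith
    have f2 : (0:ℝ) < 3*((m:ℝ)*q)/2 - (n:ℝ) * (hitCount A g) := by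
      nlinarith [mul_pos hm0 hq0]
    nlinarith [mul_pos f1 f2]
  have hbadcount : (#BAD : ℝ) * (((m:ℝ)*q/2)^2) ≤ m*q*((n:ℝ)-q)*((n:ℝ))^m := by
    rw [← hvar]
    calc (#BAD : ℝ) * (((m:ℝ)*q/2)^2)
        = ∑ _g ∈ BAD, (((m:ℝ)*q/2)^2) := by rw [Finset.sum_const, nsmul_eq_mul]
      _ ≤ ∑ g ∈ BAD, ((n:ℝ) * (hitCount A g) - m*q)^2 := Finset.sum_le_sum hbadsq
      _ ≤ ∑ g : Fin m → Fin n, ((n:ℝ) * (hitCount A g) - m*q)^2 :=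
          Finset.sum_le_sum_of_subset_of_nonneg (subset_univ _)
            (fun g _ _ => sq_nonneg _)
  have hup : m*q*((n:ℝ)-q)*((n:ℝ))^m ≤ ((n:ℝ)^m/2) * (((m:ℝ)*q/2)^2) := by
    have hnm0 : (0:ℝ) ≤ (n:ℝ)^m := by positivity
    have h1 : (n:ℝ) - q ≤ 2*q := by linarith
    have h2 : m*q*((n:ℝ)-q) ≤ m*q*(2*q) := by nlinarith [mul_pos hm0 hq0, h1]
    have h3 : m*q*(2*q) ≤ ((m:ℝ)*m*q*q/8) := by
      nlinarith [mul_pos hm0 (mul_pos hq0 hq0), (show (24:ℝ) ≤ m by exact_mod_cast hm)]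
    have h4 : m*q*((n:ℝ)-q) ≤ ((m:ℝ)*m*q*q/8) := le_trans h2 h3
    calc m*q*((n:ℝ)-q)*((n:ℝ))^m ≤ ((m:ℝ)*m*q*q/8)*((n:ℝ))^m :=
          mul_le_mul_of_nonneg_right h4 hnm0
      _ = ((n:ℝ)^m/2) * (((m:ℝ)*q/2)^2) := by ring
  have hBAD_le : (#BAD:ℝ) ≤ (n:ℝ)^m / 2 := by
    have hc2 : (0:ℝ) < ((m:ℝ)*q/2)^2 := by positivity
    have := le_trans hbadcount hup
    exact le_of_mul_le_mul_right this hc2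
  have hsplit : #(univ.filter fun g : Fin m → Fin n => m ≤ 6 * hitCount A g) + #BAD
      = Fintype.card (Fin m → Fin n) := by
    rw [hBADdef]
    rw [Finset.card_filter_add_card_filter_not]
    exact card_univ
  have hsplit' : (#(univ.filter fun g : Fin m → Fin n => m ≤ 6 * hitCount A g) : ℝ) + #BAD
      = (n:ℝ)^m := by
    rw [← hcardP]
    exact_mod_cast hsplit
  linarith

end Cheby2


section Swap

variable {m : ℕ}

/-- The swap-counting lemma: the number of swap patterns `s` for which the
left half misses a trace entirely while the right half hits it at least `m/6`
times is at most `2 ^ (m - m/6)`. -/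
lemma swap_count {k : ℕ} (hk : 6 * k = m) (T₁ T₂ : Finset (Fin m)) :
    #(univ.filter fun s : Fin m → Bool =>
       (∀ i, (if s i then i ∉ T₂ else i ∉ T₁)) ∧
       (m ≤ 6 * #(univ.filter fun i => if s i then i ∈ T₁ else i ∈ T₂)))
      ≤ 2^(m - k) := by
  classical
  set D : Finset (Fin m) := (T₁ \ T₂) ∪ (T₂ \ T₁) with hD
  set Ev : Finset (Fin m → Bool) := univ.filter fun s : Fin m → Bool =>
       (∀ i, (if s i then i ∉ T₂ else i ∉ T₁)) ∧
       (m ≤ 6 * #(univ.filter fun i => if s i then i ∈ T₁ else i ∈ T₂)) with hEv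
  rcases Ev.eq_empty_or_nonempty with he | ⟨s₀, hs₀⟩
  · rw [he]; simp
  · -- from a member, deduce k ≤ #D
    obtain ⟨hmiss, hhits⟩ := (mem_filter.mp hs₀).2
    have hsubD : (univ.filter fun i => if s₀ i then i ∈ T₁ else i ∈ T₂) ⊆ D := by
      intro i hi
      have hi' := (mem_filter.mp hi).2
      have hm' := hmiss i
      by_cases h : s₀ i
      · rw [if_pos h] at hi' hm'
        exact mem_union_left _ (mem_sdiff.mpr ⟨hi', hm'⟩)
      · rw [if_neg h] at hi' hm'
        exact mem_union_right _ (mem_sdiff.mpr ⟨hi', hm'⟩)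
    have hkD : k ≤ #D := by
      have := card_le_card hsubD
      omega
    -- all members have values forced on D
    have hforce : Ev ⊆ univ.filter fun s : Fin m → Bool =>
        ∀ i ∈ D, s i = decide (i ∈ T₁) := by
      intro s hs
      obtain ⟨hmiss', -⟩ := (mem_filter.mp hs).2
      rw [mem_filter]
      refine ⟨mem_univ _, ?_⟩
      intro i hiD
      have hm' := hmiss' i
      rcases mem_union.mp hiD with h | h
      · have h1 := (mem_sdiff.mp h).1
        have h2 := (mem_sdiff.mp h).2
        by_cases hsi : s i
        · simp [hsi, h1]
        · rw [if_neg hsi] at hm'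
          exact absurd h1 hm'
      · have h1 := (mem_sdiff.mp h).1
        have h2 := (mem_sdiff.mp h).2
        by_cases hsi : s i
        · rw [if_pos hsi] at hm'
          exact absurd h1 hm'
        · simp [hsi, h2]
    calc #Ev ≤ #(univ.filter fun s : Fin m → Bool => ∀ i ∈ D, s i = decide (i ∈ T₁)) :=
          card_le_card hforce
      _ = 2 ^ (m - #D) := by
          have hcf := card_forced (ι := Fin m) (K := Bool) D (fun i => decide (i ∈ T₁))
          simp only [Fintype.card_fin, Fintype.card_bool] at hcf
          convert hcf using 2
          congr
      _ ≤ 2 ^ (m - k) := Nat.pow_le_pow_right (by norm_num) (by omega)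

end Swap


section Sampling

variable {n m : ℕ}

open scoped Classical in
/-- Sauer–Shelah bound for the traces of neighbourhoods on a (double) sample. -/
lemma trace_bound {ε : ℝ} {G : SimpleGraph (Fin n)} (h3 : G.CliqueFree 3) (hcl : Closed G)
    (hdeg : ∀ v, (1/3 + ε) * n < #(NB G v)) (hε : 0 < ε) {d : ℕ}
    (hd1 : 1 ≤ d) (hd : 1/(3*ε) ≤ (d:ℝ)) (hm1 : 1 ≤ m)
    (gg : Fin m ⊕ Fin m → Fin n) :
    #((univ : Finset (Fin n)).image (fun w => (univ : Finset (Fin m ⊕ Fin m)).filter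
        (fun x => gg x ∈ NB G w))) ≤ (d+1) * (2*m)^d := by
  set 𝒯 : Finset (Finset (Fin m ⊕ Fin m)) :=
    (univ : Finset (Fin n)).image (fun w => (univ : Finset (Fin m ⊕ Fin m)).filter
        (fun x => gg x ∈ NB G w)) with h𝒯
  have hvc : 𝒯.vcDim ≤ d := by
    apply Finset.sup_le
    intro u hu
    have hsh : 𝒯.Shatters u := mem_shatterer.mp hu
    -- gg is injective on u
    have hinj : Set.InjOn gg u := by
      intro x hx y hy hxy
      by_contra hne
      obtain ⟨e, he𝒯, hint⟩ := hsh (show {x} ⊆ u by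
        rw [singleton_subset_iff]; exact_mod_cast hx)
      obtain ⟨w, -, hw⟩ := mem_image.mp he𝒯
      have hxe : x ∈ e := by
        have : x ∈ u ∩ e := by
          rw [hint]; exact mem_singleton_self x
        exact (mem_inter.mp this).2
      have hxw : gg x ∈ NB G w := by
        rw [← hw] at hxe
        exact (mem_filter.mp hxe).2
      have hye : y ∈ e := by
        rw [← hw, mem_filter]
        exact ⟨mem_univ _, hxy ▸ hxw⟩
      have : y ∈ u ∩ e := mem_inter.mpr ⟨by exact_mod_cast hy, hye⟩
      rw [hint, mem_singleton] at this
      exact hne this.symm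
    -- the image of u under gg is shattered by neighbourhoods
    have himg : ∀ T ⊆ u.image gg, ∃ w, (u.image gg) ∩ NB G w = T := by
      intro T hT
      have htsub : u.filter (fun x => gg x ∈ T) ⊆ u := filter_subset _ _
      obtain ⟨e, he𝒯, hint⟩ := hsh htsub
      obtain ⟨w, -, hw⟩ := mem_image.mp he𝒯
      refine ⟨w, ?_⟩
      ext v
      constructor
      · intro hv
        obtain ⟨hv1, hv2⟩ := mem_inter.mp hv
        obtain ⟨x, hxu, rfl⟩ := mem_image.mp hv1
        have hxe : x ∈ e := by
          rw [← hw, mem_filter]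
          exact ⟨mem_univ _, hv2⟩
        have : x ∈ u ∩ e := mem_inter.mpr ⟨hxu, hxe⟩
        rw [hint, mem_filter] at this
        exact this.2
      · intro hv
        have hv1 : v ∈ u.image gg := hT hv
        obtain ⟨x, hxu, rfl⟩ := mem_image.mp hv1
        have hx : x ∈ u.filter (fun x => gg x ∈ T) := mem_filter.mpr ⟨hxu, hv⟩
        rw [← hint] at hx
        have hxe : x ∈ e := (mem_inter.mp hx).2
        rw [← hw, mem_filter] at hxe
        exact mem_inter.mpr ⟨hv1, hxe.2⟩
    have hcard : #(u.image gg) ≤ d :=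
      shattered_card_le h3 hcl hdeg hε hd1 hd (u.image gg) himg
    rw [card_image_of_injOn hinj] at hcard
    exact hcard
  calc #𝒯 ≤ #𝒯.shatterer := card_le_card_shatterer 𝒯
    _ ≤ ∑ j ∈ Iic 𝒯.vcDim, (Fintype.card (Fin m ⊕ Fin m)).choose j :=
        card_shatterer_le_sum_vcDim
    _ ≤ ∑ j ∈ Iic d, (Fintype.card (Fin m ⊕ Fin m)).choose j := by
        apply sum_le_sum_of_subset
        exact Iic_subset_Iic.mpr hvc
    _ ≤ ∑ _j ∈ Iic d, (2*m)^d := by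
        apply sum_le_sum
        intro j hj
        have h2m : Fintype.card (Fin m ⊕ Fin m) = 2*m := by
          rw [Fintype.card_sum, Fintype.card_fin]
          omega
        rw [h2m]
        calc (2*m).choose j ≤ (2*m)^j := Nat.choose_le_pow _ _
          _ ≤ (2*m)^d := Nat.pow_le_pow_right (by omega) (mem_Iic.mp hj)
    _ = (d+1) * (2*m)^d := by
        rw [sum_const, Nat.card_Iic, smul_eq_mul]

end Sampling


section MainSampling

variable {n m : ℕ}

/-- Swapping the two halves of a double sample according to a pattern `s`. -/
def swapFn (s : Fin m → Bool) (g : (Fin m → Fin n) × (Fin m → Fin n)) :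
    (Fin m → Fin n) × (Fin m → Fin n) :=
  (fun i => if s i then g.2 i else g.1 i, fun i => if s i then g.1 i else g.2 i)

lemma swapFn_invol (s : Fin m → Bool) (g : (Fin m → Fin n) × (Fin m → Fin n)) :
    swapFn s (swapFn s g) = g := by
  cases g with
  | mk g₁ g₂ =>
    unfold swapFn
    dsimp only
    congr 1 <;> funext i <;> by_cases h : s i <;> simp [h]

open scoped Classical in
lemma exists_dominating {ε : ℝ} {G : SimpleGraph (Fin n)} (h3 : G.CliqueFree 3)
    (hcl : Closed G) (hdeg : ∀ v, (1/3 + ε) * n < #(NB G v)) (hε : 0 < ε) {d : ℕ}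
    (hd1 : 1 ≤ d) (hd : 1/(3*ε) ≤ (d:ℝ)) {k : ℕ} (hk6 : 6*k = m) (hm24 : 24 ≤ m)
    (hΦ : 2*((d+1)*(2*m)^d) < 2^k) (hn : 1 ≤ n) :
    ∃ S : Finset (Fin n), #S ≤ m ∧ ∀ w, ∃ v ∈ S, G.Adj w v := by
  have hkm : k ≤ m := by omega
  have hm1 : 1 ≤ m := by omega
  set Y : Finset ((Fin m → Fin n) × (Fin m → Fin n)) := univ.filter
    (fun g => ∃ w, (∀ i, g.1 i ∉ NB G w) ∧ (m ≤ 6 * hitCount (NB G w) g.2)) with hY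
  set X₁ : Finset (Fin m → Fin n) := univ.filter
    (fun g₁ => ∃ w, ∀ i, g₁ i ∉ NB G w) with hX₁
  -- Step A : #X₁ * n^m ≤ 2 * #Y
  have hv0 : Fin n := ⟨0, by omega⟩
  have hWex : ∀ g₁ : Fin m → Fin n, ∃ w, g₁ ∈ X₁ → ∀ i, g₁ i ∉ NB G w := by
    intro g₁
    by_cases h : g₁ ∈ X₁
    · obtain ⟨w, hw⟩ := (mem_filter.mp h).2
      exact ⟨w, fun _ => hw⟩
    · exact ⟨hv0, fun h' => absurd h' h⟩
  choose W hW using hWex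
  have hcheb : ∀ g₁ ∈ X₁, n^m ≤
      2 * #(univ.filter fun g₂ : Fin m → Fin n => m ≤ 6 * hitCount (NB G (W g₁)) g₂) := by
    intro g₁ _
    have hA : (n:ℝ) ≤ 3 * #(NB G (W g₁)) := by
      have h1 := hdeg (W g₁)
      have hn0 : (0:ℝ) ≤ n := by positivity
      nlinarith
    have := cheby_half (by omega : 24 ≤ m) (NB G (W g₁)) hA hn
    exact_mod_cast this
  have hstepA : #X₁ * n^m ≤ 2 * #Y := by
    set B := X₁.biUnion (fun g₁ => {g₁} ×ˢ
      (univ.filter fun g₂ : Fin m → Fin n => m ≤ 6 * hitCount (NB G (W g₁)) g₂)) with hB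
    have hBsub : B ⊆ Y := by
      intro p hp
      obtain ⟨g₁, hg₁, hpmem⟩ := mem_biUnion.mp hp
      obtain ⟨hp1, hp2⟩ := mem_product.mp hpmem
      rw [mem_singleton] at hp1
      rw [hY, mem_filter]
      refine ⟨mem_univ _, ⟨W g₁, ?_, ?_⟩⟩
      · rw [hp1]; exact hW g₁ hg₁
      · exact (mem_filter.mp hp2).2
    have hdisj : ∀ g₁ ∈ X₁, ∀ g₁' ∈ X₁, g₁ ≠ g₁' → Disjoint
        ({g₁} ×ˢ (univ.filter fun g₂ : Fin m → Fin n => m ≤ 6 * hitCount (NB G (W g₁)) g₂))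
        ({g₁'} ×ˢ (univ.filter fun g₂ : Fin m → Fin n => m ≤ 6 * hitCount (NB G (W g₁')) g₂)) := by
      intro g₁ _ g₁' _ hne
      rw [Finset.disjoint_left]
      intro p hp hp'
      have h1 := (mem_product.mp hp).1
      have h2 := (mem_product.mp hp').1
      rw [mem_singleton] at h1 h2
      exact hne (h1 ▸ h2 ▸ rfl)
    have hcardB : #B = ∑ g₁ ∈ X₁,
        #(univ.filter fun g₂ : Fin m → Fin n => m ≤ 6 * hitCount (NB G (W g₁)) g₂) := by
      rw [hB, card_biUnion hdisj]
      apply sum_congr rfl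
      intro g₁ _
      rw [card_product, card_singleton, one_mul]
    calc #X₁ * n^m = ∑ _g₁ ∈ X₁, n^m := by rw [sum_const, smul_eq_mul]
      _ ≤ ∑ g₁ ∈ X₁, 2 * #(univ.filter fun g₂ : Fin m → Fin n =>
            m ≤ 6 * hitCount (NB G (W g₁)) g₂) := sum_le_sum hcheb
      _ = 2 * #B := by rw [hcardB, mul_sum]
      _ ≤ 2 * #Y := by
          have := card_le_card hBsub
          omega
  -- Step B : 2^k * #Y ≤ ((d+1)*(2*m)^d) * (n^m * n^m)
  have hperg : ∀ g : (Fin m → Fin n) × (Fin m → Fin n),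
      #(univ.filter fun s : Fin m → Bool => swapFn s g ∈ Y)
        ≤ ((d+1)*(2*m)^d) * 2^(m-k) := by
    intro g
    set gg : Fin m ⊕ Fin m → Fin n := Sum.elim g.1 g.2 with hgg
    set 𝒯 : Finset (Finset (Fin m ⊕ Fin m)) :=
      (univ : Finset (Fin n)).image (fun w => (univ : Finset (Fin m ⊕ Fin m)).filter
        (fun x => gg x ∈ NB G w)) with h𝒯
    have htb : #𝒯 ≤ (d+1) * (2*m)^d := trace_bound h3 hcl hdeg hε hd1 hd hm1 gg
    set T1E : Finset (Fin m ⊕ Fin m) → Finset (Fin m) :=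
      fun E => univ.filter (fun i : Fin m => Sum.inl i ∈ E) with hT1E
    set T2E : Finset (Fin m ⊕ Fin m) → Finset (Fin m) :=
      fun E => univ.filter (fun i : Fin m => Sum.inr i ∈ E) with hT2E
    have hsub : univ.filter (fun s : Fin m → Bool => swapFn s g ∈ Y) ⊆
        𝒯.biUnion (fun E => univ.filter fun s : Fin m → Bool =>
          (∀ i, (if s i then i ∉ T2E E else i ∉ T1E E)) ∧
          (m ≤ 6 * #(univ.filter fun i => if s i then i ∈ T1E E else i ∈ T2E E))) := by
      intro s hs
      have hsY : swapFn s g ∈ Y := (mem_filter.mp hs).2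
      rw [hY, mem_filter] at hsY
      obtain ⟨w, hmiss, hhits⟩ := hsY.2
      rw [mem_biUnion]
      refine ⟨univ.filter (fun x => gg x ∈ NB G w),
        mem_image_of_mem _ (mem_univ w), ?_⟩
      have hT1 : ∀ i : Fin m, (i ∈ T1E (univ.filter (fun x => gg x ∈ NB G w)))
          ↔ g.1 i ∈ NB G w := by
        intro i
        rw [hT1E]
        simp [hgg]
      have hT2 : ∀ i : Fin m, (i ∈ T2E (univ.filter (fun x => gg x ∈ NB G w)))
          ↔ g.2 i ∈ NB G w := by
        intro i
        rw [hT2E]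
        simp [hgg]
      rw [mem_filter]
      refine ⟨mem_univ _, ?_, ?_⟩
      · intro i
        have hm' := hmiss i
        by_cases hsi : s i
        · rw [if_pos hsi]
          simp only [swapFn, hsi, if_true] at hm'
          rw [hT2 i]
          exact hm'
        · rw [if_neg hsi]
          simp only [swapFn, hsi, Bool.false_eq_true, if_false] at hm'
          rw [hT1 i]
          exact hm'
      · have hfe : (univ.filter fun i => if s i then
            i ∈ T1E (univ.filter (fun x => gg x ∈ NB G w))
            else i ∈ T2E (univ.filter (fun x => gg x ∈ NB G w)))
            = univ.filter (fun i => (swapFn s g).2 i ∈ NB G w) := by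
          apply filter_congr
          intro i _
          by_cases hsi : s i
          · simp [swapFn, hsi, hT1 i]
          · simp [swapFn, hsi, hT2 i]
        rw [hfe]
        exact hhits
    calc #(univ.filter fun s : Fin m → Bool => swapFn s g ∈ Y)
        ≤ #(𝒯.biUnion (fun E => univ.filter fun s : Fin m → Bool =>
            (∀ i, (if s i then i ∉ T2E E else i ∉ T1E E)) ∧
            (m ≤ 6 * #(univ.filter fun i => if s i then i ∈ T1E E else i ∈ T2E E)))) :=
          card_le_card hsub
      _ ≤ ∑ E ∈ 𝒯, #(univ.filter fun s : Fin m → Bool =>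
            (∀ i, (if s i then i ∉ T2E E else i ∉ T1E E)) ∧
            (m ≤ 6 * #(univ.filter fun i => if s i then i ∈ T1E E else i ∈ T2E E))) :=
          card_biUnion_le
      _ ≤ ∑ _E ∈ 𝒯, 2^(m-k) := sum_le_sum (fun E _ => swap_count hk6 (T1E E) (T2E E))
      _ = #𝒯 * 2^(m-k) := by rw [sum_const, smul_eq_mul]
      _ ≤ ((d+1)*(2*m)^d) * 2^(m-k) := Nat.mul_le_mul_right _ htb
  have hswap_card : ∀ s : Fin m → Bool,
      #(univ.filter fun g : (Fin m → Fin n) × (Fin m → Fin n) => swapFn s g ∈ Y) = #Y := by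
    intro s
    apply card_bij' (fun g _ => swapFn s g) (fun g _ => swapFn s g)
    · intro g hg
      exact (mem_filter.mp hg).2
    · intro g hg
      rw [mem_filter]
      refine ⟨mem_univ _, ?_⟩
      rw [swapFn_invol]
      exact hg
    · intro g _
      exact swapFn_invol s g
    · intro g _
      exact swapFn_invol s g
  have hsum1 : ∑ s : Fin m → Bool,
      #(univ.filter fun g : (Fin m → Fin n) × (Fin m → Fin n) => swapFn s g ∈ Y)
        = 2^m * #Y := by
    rw [Fintype.sum_congr _ _ hswap_card, sum_const, smul_eq_mul, card_univ,
      Fintype.card_fun, Fintype.card_bool, Fintype.card_fin]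
  have hsum2 : ∑ s : Fin m → Bool,
      #(univ.filter fun g : (Fin m → Fin n) × (Fin m → Fin n) => swapFn s g ∈ Y)
        = ∑ g : (Fin m → Fin n) × (Fin m → Fin n),
            #(univ.filter fun s : Fin m → Bool => swapFn s g ∈ Y) := by
    simp_rw [card_filter]
    exact Finset.sum_comm
  have hstepB : 2^k * #Y ≤ ((d+1)*(2*m)^d) * (n^m * n^m) := by
    have h1 : 2^m * #Y ≤ (n^m * n^m) * (((d+1)*(2*m)^d) * 2^(m-k)) := by
      rw [← hsum1, hsum2]
      calc (∑ g : (Fin m → Fin n) × (Fin m → Fin n),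
            #(univ.filter fun s : Fin m → Bool => swapFn s g ∈ Y))
          ≤ ∑ _g : (Fin m → Fin n) × (Fin m → Fin n), ((d+1)*(2*m)^d) * 2^(m-k) :=
            sum_le_sum (fun g _ => hperg g)
        _ = (n^m * n^m) * (((d+1)*(2*m)^d) * 2^(m-k)) := by
            rw [sum_const, smul_eq_mul, card_univ, Fintype.card_prod,
              Fintype.card_fun, Fintype.card_fin, Fintype.card_fin]
    have h2m : (2:ℕ)^m = 2^(m-k) * 2^k := by
      rw [← pow_add]
      congr 1
      omega
    rw [h2m] at h1
    have h3' : 2^(m-k) * (2^k * #Y) ≤ 2^(m-k) * (((d+1)*(2*m)^d) * (n^m * n^m)) := by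
      calc 2^(m-k) * (2^k * #Y) = 2^(m-k) * 2^k * #Y := by ring
        _ ≤ (n^m * n^m) * (((d+1)*(2*m)^d) * 2^(m-k)) := h1
        _ = 2^(m-k) * (((d+1)*(2*m)^d) * (n^m * n^m)) := by ring
    exact Nat.le_of_mul_le_mul_left h3' (Nat.pow_pos (by norm_num))
  -- Step C : combine
  have hX₁lt : #X₁ < n^m := by
    have hN0 : 0 < n^m := Nat.pow_pos (by omega)
    by_contra hcon
    push_neg at hcon
    have h1 : n^m * n^m ≤ #X₁ * n^m := Nat.mul_le_mul_right _ hcon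
    have h2 : 2^k * (n^m * n^m) ≤ 2^k * (2 * #Y) :=
      Nat.mul_le_mul_left _ (le_trans h1 hstepA)
    have h3' : 2^k * (2 * #Y) = 2 * (2^k * #Y) := by ring
    have h4 : 2 * (2^k * #Y) ≤ 2 * (((d+1)*(2*m)^d) * (n^m * n^m)) :=
      Nat.mul_le_mul_left _ hstepB
    have h5 : 2^k * (n^m * n^m) ≤ (2*((d+1)*(2*m)^d)) * (n^m * n^m) := by
      calc 2^k * (n^m * n^m) ≤ 2 * (((d+1)*(2*m)^d) * (n^m * n^m)) := by omega
        _ = (2*((d+1)*(2*m)^d)) * (n^m * n^m) := by ring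
    have h6 : 2^k ≤ 2*((d+1)*(2*m)^d) :=
      Nat.le_of_mul_le_mul_right h5 (Nat.mul_pos hN0 hN0)
    omega
  have hg₁ : ∃ g₁ : Fin m → Fin n, g₁ ∉ X₁ := by
    by_contra h
    push_neg at h
    have : X₁ = univ := eq_univ_iff_forall.mpr h
    rw [this, card_univ, Fintype.card_fun, Fintype.card_fin, Fintype.card_fin] at hX₁lt
    omega
  obtain ⟨g₁, hg₁⟩ := hg₁
  have hdom : ∀ w, ∃ i, g₁ i ∈ NB G w := by
    intro w
    by_contra h
    push_neg at h
    exact hg₁ (mem_filter.mpr ⟨mem_univ _, ⟨w, h⟩⟩)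
  refine ⟨univ.image g₁, ?_, ?_⟩
  · calc #(univ.image g₁) ≤ #(univ : Finset (Fin m)) := card_image_le
      _ = m := by rw [card_univ, Fintype.card_fin]
  · intro w
    obtain ⟨i, hi⟩ := hdom w
    exact ⟨g₁ i, mem_image_of_mem _ (mem_univ i), mem_NB.mp hi⟩

end MainSampling


end ThomassenAux

open Finset SimpleGraph ThomassenAux in
/-- **Thomassen.** For every `ε > 0` there is `r_ε` such that every triangle-free
graph with minimum degree greater than `(1/3 + ε)·v(H)` has chromatic number at
most `r_ε`. -/
theorem thomassen_chromatic (ε : ℝ) (hε : 0 < ε) :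
    ∃ r : ℕ, ∀ (n : ℕ) (H : SimpleGraph (Fin n)),
      H.CliqueFree 3 →
      (∀ v : Fin n, (1 / 3 + ε) * n < ((H.neighborSet v).ncard : ℝ)) →
      H.Colorable r := by
  classical
  obtain ⟨d₀, hd₀⟩ := exists_nat_ge (1/(3*ε))
  set d := max d₀ 1 with hddef
  have hd1 : 1 ≤ d := le_max_right _ _
  have hd : 1/(3*ε) ≤ (d:ℝ) := le_trans hd₀ (by exact_mod_cast le_max_left _ _)
  refine ⟨2^(36 * 4^d), ?_⟩
  intro n H h3 hdegH
  rcases Nat.eq_zero_or_pos n with hn0 | hn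
  · subst hn0
    exact SimpleGraph.Colorable.of_isEmpty _
  · obtain ⟨G, hHG, hG3, hGcl⟩ := exists_closure H h3
    have hdegG : ∀ v, (1/3 + ε) * n < #(NB G v) := by
      intro v
      refine lt_of_lt_of_le (hdegH v) ?_
      have he : ((NB H v : Finset (Fin n)) : Set (Fin n)) = H.neighborSet v := by
        ext w
        simp only [Finset.mem_coe, mem_NB, SimpleGraph.mem_neighborSet]
      have h1 : (H.neighborSet v).ncard = #(NB H v) := by
        rw [← he, Set.ncard_coe_finset]
      have h2 : NB H v ⊆ NB G v := fun w hw => mem_NB.mpr (hHG (mem_NB.mp hw))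
      rw [h1]
      exact_mod_cast card_le_card h2
    have hk6 : 6 * (6 * 4^d) = 36 * 4^d := by ring
    have hm24 : 24 ≤ 36 * 4^d := by
      have : 1 ≤ 4^d := Nat.one_le_pow _ _ (by norm_num)
      omega
    obtain ⟨S, hScard, hSdom⟩ := exists_dominating hG3 hGcl hdegG hε hd1 hd
      hk6 hm24 (key_numeric d) hn
    -- colour every vertex by the trace of its neighbourhood on `S`
    have valid : ∀ {a b : Fin n}, G.Adj a b →
        (⟨S.filter (fun v => G.Adj a v), mem_powerset.mpr (filter_subset _ _)⟩ :
          {T // T ∈ S.powerset})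
        ≠ ⟨S.filter (fun v => G.Adj b v), mem_powerset.mpr (filter_subset _ _)⟩ := by
      intro a b hab heq
      have heq' : S.filter (fun v => G.Adj a v) = S.filter (fun v => G.Adj b v) :=
        congrArg Subtype.val heq
      obtain ⟨v, hvS, hav⟩ := hSdom a
      have hva : v ∈ S.filter (fun v => G.Adj a v) := mem_filter.mpr ⟨hvS, hav⟩
      rw [heq'] at hva
      have hbv : G.Adj b v := (mem_filter.mp hva).2
      exact tri_free_common hG3 hab hav hbv
    have C : G.Coloring {T // T ∈ S.powerset} :=
      SimpleGraph.Coloring.mk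
        (fun w => ⟨S.filter (fun v => G.Adj w v), mem_powerset.mpr (filter_subset _ _)⟩)
        (fun hab => valid hab)
    have h1 : G.Colorable (Fintype.card {T // T ∈ S.powerset}) := C.colorable
    have h2 : Fintype.card {T // T ∈ S.powerset} = 2^(#S) := by
      rw [Fintype.card_coe, card_powerset]
    have h3' : G.Colorable (2^(36 * 4^d)) := by
      rw [h2] at h1
      exact h1.mono (Nat.pow_le_pow_right (by norm_num) hScard)
    exact SimpleGraph.Colorable.mono_left hHG h3'
end

section
/- Let r, ℓ be natural numbers, let F be a triangle-free graph on vertex set [ℓ] which is not r-partite (i.e. has chromatic number greater than r), and let m ≥ 0. Let G be a graph whose vertex set B is partitioned into nonempty parts B_1, …, B_ℓ, all of whose edges go between parts B_i and B_j with ij an edge of F. Suppose that for every edge ij of F and all sets U ⊆ B_i, V ⊆ B_j with |U| ≥ |B_i|/r and |V| ≥ |B_j|/r, the number of edges of G between U and V is strictly greater than m. Then G cannot be made r-partite by deleting at most m edges. -/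
open MeasureTheory Filter

/-- Number of ordered pairs `(a,b) ∈ A × B` with `a` adjacent to `b`; for
disjoint `A`, `B` this is the number of edges between `A` and `B`. -/
noncomputable def edgeCount {V : Type*} (G : SimpleGraph V) (A B : Set V) : ℕ :=
  Set.ncard {q : V × V | q.1 ∈ A ∧ q.2 ∈ B ∧ G.Adj q.1 q.2}

/-- Number of edges with both ends in `A`. -/
noncomputable def edgesIn {V : Type*} (G : SimpleGraph V) (A : Set V) : ℕ :=
  Set.ncard {e ∈ G.edgeSet | ∀ v ∈ e, v ∈ A}

/-- Number of neighbours of `v` in `A`. -/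
noncomputable def degIn {V : Type*} (G : SimpleGraph V) (v : V) (A : Set V) : ℕ :=
  (G.neighborSet v ∩ A).ncard


/-- **Claim 3.2** (deterministic form). If `F` is triangle-free and not
`r`-partite, `G` has all edges between parts `B_i, B_j` with `ij ∈ F`, and every
pair of large subsets of parts joined by an `F`-edge spans more than `m` edges,
then `G` cannot be made `r`-partite by deleting at most `m` edges. -/
theorem blowup_far_from_rpartite {α : Type*} [Fintype α] [DecidableEq α]
    (r ℓ : ℕ) (F : SimpleGraph (Fin ℓ)) (hF3 : F.CliqueFree 3)
    (hFr : ¬ F.Colorable r) (m : ℕ)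
    (G : SimpleGraph α) (B : Fin ℓ → Finset α)
    (hBne : ∀ i, (B i).Nonempty)
    (hBdisj : ∀ i j, i ≠ j → Disjoint (B i) (B j))
    (hBcover : ∀ v : α, ∃ i, v ∈ B i)
    (hGedges : ∀ u v : α, G.Adj u v → ∃ i j, F.Adj i j ∧ u ∈ B i ∧ v ∈ B j)
    (hdense : ∀ i j, F.Adj i j → ∀ U ⊆ B i, ∀ V ⊆ B j,
      ((B i).card : ℝ) / r ≤ (U.card : ℝ) → ((B j).card : ℝ) / r ≤ (V.card : ℝ) →
      m < edgeCount G ↑U ↑V) :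
    ¬ ∃ S : Finset (Sym2 α), ↑S ⊆ G.edgeSet ∧ S.card ≤ m ∧
        (G.deleteEdges ↑S).Colorable r := by
  classical
  rintro ⟨S, hS, hScard, ⟨C⟩⟩
  have hℓ : 0 < ℓ := by
    rcases Nat.eq_zero_or_pos ℓ with h | h
    · subst h
      exact absurd ⟨SimpleGraph.Coloring.mk (fun v => v.elim0)
        (fun {a b} _ => a.elim0)⟩ hFr
    · exact h
  obtain ⟨v0, hv0⟩ := hBne ⟨0, hℓ⟩
  have hr : 0 < r := (C v0).pos
  have pig : ∀ i : Fin ℓ, ∃ k : Fin r,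
      ((B i).card : ℝ) / r ≤ (((B i).filter (fun v => C v = k)).card : ℝ) := by
    intro i
    have hsum : (B i).card = ∑ k : Fin r, ((B i).filter (fun v => C v = k)).card :=
      Finset.card_eq_sum_card_fiberwise (fun v _ => Finset.mem_univ (C v))
    by_contra h
    push_neg at h
    have h' : ∀ k : Fin r, ((B i).filter (fun v => C v = k)).card * r + 1 ≤ (B i).card := by
      intro k
      have hk := h k
      rw [lt_div_iff₀ (by exact_mod_cast hr : (0:ℝ) < r)] at hk
      have : ((B i).filter (fun v => C v = k)).card * r < (B i).card := by
        exact_mod_cast hk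
      omega
    have hle : ∑ k : Fin r, (((B i).filter (fun v => C v = k)).card * r + 1)
        ≤ ∑ _k : Fin r, (B i).card := Finset.sum_le_sum (fun k _ => h' k)
    rw [Finset.sum_add_distrib, ← Finset.sum_mul, ← hsum] at hle
    simp only [Finset.sum_const, Finset.card_univ, Fintype.card_fin, smul_eq_mul,
      mul_one, mul_comm] at hle
    omega
  choose f hf using pig
  have hbad : ∃ i j, F.Adj i j ∧ f i = f j := by
    by_contra h
    push_neg at h
    exact hFr ⟨SimpleGraph.Coloring.mk f (fun {a b} hab => h a b hab)⟩
  obtain ⟨i, j, hij, hfij⟩ := hbad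
  set U := (B i).filter (fun v => C v = f i) with hU
  set V := (B j).filter (fun v => C v = f j) with hV
  have hm := hdense i j hij U (Finset.filter_subset _ _) V (Finset.filter_subset _ _)
    (hf i) (hf j)
  have hle : edgeCount G ↑U ↑V ≤ S.card := by
    rw [← Set.ncard_coe_finset]
    refine Set.ncard_le_ncard_of_injOn (fun q : α × α => Sym2.mk q.1 q.2) ?_ ?_ S.finite_toSet
    · rintro ⟨a, b⟩ ⟨ha, hb, hab⟩
      simp only [Set.mem_setOf_eq] at ha hb
      by_contra hnot
      have hadj : (G.deleteEdges ↑S).Adj a b := by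
        rw [SimpleGraph.deleteEdges_adj]
        exact ⟨hab, fun hmem => hnot hmem⟩
      have ha2 : a ∈ U := ha
      have hb2 : b ∈ V := hb
      rw [hU, Finset.mem_filter] at ha2
      rw [hV, Finset.mem_filter] at hb2
      have hca : C a = f i := ha2.2
      have hcb : C b = f j := hb2.2
      exact C.valid hadj (by rw [hca, hcb, hfij])
    · rintro ⟨a, b⟩ ⟨ha, hb, -⟩ ⟨a', b'⟩ ⟨ha', hb', -⟩ heq
      simp only [Set.mem_setOf_eq] at ha hb ha' hb'
      have ha2 : a ∈ U := ha
      have hb2 : b ∈ V := hb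
      have ha2' : a' ∈ U := ha'
      have hb2' : b' ∈ V := hb'
      rw [hU, Finset.mem_filter] at ha2 ha2'
      rw [hV, Finset.mem_filter] at hb2 hb2'
      have haB : a ∈ B i := ha2.1
      have hb'B : b' ∈ B j := hb2'.1
      have : Sym2.mk a b = Sym2.mk a' b' := heq
      rcases Sym2.eq_iff.mp this with ⟨h1, h2⟩ | ⟨h1, h2⟩
      · simp [Prod.ext_iff, h1, h2]
      · exfalso
        exact (Finset.disjoint_left.mp (hBdisj i j hij.ne)) haB (h1 ▸ hb'B)
  omega
end

section
/- For any 0 < ε < 1/2, any M ∈ ℕ, and any function p : ℕ → (0,1) with p(n)·n/ln n → ∞, the random graph Γ = G(n, p(n)) asymptotically almost surely has the following property: for any two subsets A, B of V(Γ) with |A|, |B| ≥ n/M, all but at most 10³·M·ε⁻²·p⁻¹·n edges uv of Γ satisfy all of: deg_Γ(u,A) = (1 ± ε)p|A| and deg_Γ(v,A) = (1 ± ε)p|A|; deg_Γ(u,B) = (1 ± ε)p|B| and deg_Γ(v,B) = (1 ± ε)p|B|; and deg_Γ(u,v,B) ≥ (1−ε)·p²·|B|. -/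
open MeasureTheory Filter

set_option maxHeartbeats 1600000

/-- The graph on `Fin n` determined by a boolean function on potential edges. -/
def graphOfFlip {n : ℕ} (ω : Sym2 (Fin n) → Bool) : SimpleGraph (Fin n) where
  Adj u v := u ≠ v ∧ ω s(u, v) = true
  symm := by
    constructor
    intro u v h
    exact ⟨h.1.symm, by rw [Sym2.eq_swap]; exact h.2⟩
  loopless := by constructor; intro u h; exact h.1 rfl

/-- The binomial random graph measure `G(n,p)`: the product over the 2-element
subsets of `[n]` of Bernoulli measures with parameter `p`. -/
noncomputable def gnp (n : ℕ) (p : ℝ) : Measure (Sym2 (Fin n) → Bool) :=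
  Measure.pi fun _ =>
    (PMF.bernoulli (min (Real.toNNReal p) 1) (min_le_right _ _)).toMeasure

namespace GnpAux
open Finset Real
open scoped Classical

variable {n : ℕ}

noncomputable def wt (q : ℝ) (b : Bool) : ℝ := if b then q else 1 - q

noncomputable def prW (q : ℝ) (ω : Sym2 (Fin n) → Bool) : ℝ := ∏ e, wt q (ω e)

noncomputable def Ex (q : ℝ) (X : (Sym2 (Fin n) → Bool) → ℝ) : ℝ := ∑ ω, prW q ω * X ω

noncomputable def Pr (q : ℝ) (P : (Sym2 (Fin n) → Bool) → Prop) : ℝ :=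
  Ex q (fun ω => if P ω then 1 else 0)

lemma wt_nonneg {q : ℝ} (h0 : 0 ≤ q) (h1 : q ≤ 1) (b : Bool) : 0 ≤ wt q b := by
  cases b <;> simp [wt] <;> linarith

lemma prW_nonneg {q : ℝ} (h0 : 0 ≤ q) (h1 : q ≤ 1) (ω : Sym2 (Fin n) → Bool) :
    0 ≤ prW q ω :=
  Finset.prod_nonneg fun e _ => wt_nonneg h0 h1 (ω e)

lemma sum_prod_bool {ι : Type*} [Fintype ι] [DecidableEq ι] (f : ι → Bool → ℝ) :
    ∑ ω : ι → Bool, ∏ i, f i (ω i) = ∏ i, (f i false + f i true) := by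
  have h := Finset.prod_univ_sum (fun _ : ι => (Finset.univ : Finset Bool)) f
  rw [Fintype.piFinset_univ] at h
  rw [← h]
  exact Finset.prod_congr rfl fun i _ => by
    rw [Fintype.sum_bool]; ring

lemma sum_prW (q : ℝ) : ∑ ω : Sym2 (Fin n) → Bool, prW q ω = 1 := by
  have h := sum_prod_bool (ι := Sym2 (Fin n)) (fun _ b => wt q b)
  simp only [prW]
  rw [h]
  have : ∀ e : Sym2 (Fin n), wt q false + wt q true = 1 := fun _ => by simp [wt]
  rw [Finset.prod_congr rfl fun e _ => this e, Finset.prod_const_one]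

lemma Ex_prod (q : ℝ) (f : Sym2 (Fin n) → Bool → ℝ) :
    Ex q (fun ω => ∏ e, f e (ω e)) = ∏ e, ((1 - q) * f e false + q * f e true) := by
  simp only [Ex, prW]
  have h1 : ∀ ω : Sym2 (Fin n) → Bool,
      (∏ e, wt q (ω e)) * (∏ e, f e (ω e)) = ∏ e, (wt q (ω e) * f e (ω e)) :=
    fun ω => (Finset.prod_mul_distrib).symm
  simp_rw [h1]
  rw [sum_prod_bool (fun e b => wt q b * f e b)]
  exact Finset.prod_congr rfl fun e _ => by simp [wt]

lemma Ex_mono {q : ℝ} (h0 : 0 ≤ q) (h1 : q ≤ 1) {X Y : (Sym2 (Fin n) → Bool) → ℝ}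
    (h : ∀ ω, X ω ≤ Y ω) : Ex q X ≤ Ex q Y :=
  Finset.sum_le_sum fun ω _ => mul_le_mul_of_nonneg_left (h ω) (prW_nonneg h0 h1 ω)

lemma Ex_sum {q : ℝ} {ι : Type*} (I : Finset ι) (g : ι → (Sym2 (Fin n) → Bool) → ℝ) :
    Ex q (fun ω => ∑ i ∈ I, g i ω) = ∑ i ∈ I, Ex q (g i) := by
  simp only [Ex, Finset.mul_sum]
  exact Finset.sum_comm

lemma Pr_nonneg {q : ℝ} (h0 : 0 ≤ q) (h1 : q ≤ 1) (P : (Sym2 (Fin n) → Bool) → Prop) :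
    0 ≤ Pr q P :=
  Finset.sum_nonneg fun ω _ => mul_nonneg (prW_nonneg h0 h1 ω) (by positivity)

lemma Pr_le_one {q : ℝ} (h0 : 0 ≤ q) (h1 : q ≤ 1) (P : (Sym2 (Fin n) → Bool) → Prop) :
    Pr q P ≤ 1 := by
  have h2 : Ex (n := n) q (fun _ => 1) = 1 := by
    simp only [Ex, mul_one]; exact sum_prW q
  calc Pr q P ≤ Ex q (fun _ => 1) :=
        Ex_mono h0 h1 (fun ω => by by_cases h : P ω <;> simp [h])
  _ = 1 := h2

lemma Pr_add_compl {q : ℝ} (P : (Sym2 (Fin n) → Bool) → Prop) :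
    Pr q P + Pr q (fun ω => ¬ P ω) = 1 := by
  have h : Pr q P + Pr q (fun ω => ¬ P ω) = ∑ ω : Sym2 (Fin n) → Bool, prW q ω := by
    simp only [Pr, Ex, ← Finset.sum_add_distrib]
    exact Finset.sum_congr rfl fun ω _ => by by_cases hP : P ω <;> simp [hP]
  rw [h, sum_prW]

lemma Pr_mono {q : ℝ} (h0 : 0 ≤ q) (h1 : q ≤ 1) {P Q : (Sym2 (Fin n) → Bool) → Prop}
    (h : ∀ ω, P ω → Q ω) : Pr q P ≤ Pr q Q :=
  Ex_mono h0 h1 fun ω => by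
    by_cases hP : P ω
    · simp [hP, h ω hP]
    · simp [hP]; positivity

lemma Pr_false {q : ℝ} : Pr (n := n) q (fun _ => False) = 0 := by
  simp [Pr, Ex]

lemma Pr_exists_le {q : ℝ} (h0 : 0 ≤ q) (h1 : q ≤ 1) {ι : Type*} (I : Finset ι)
    (P : ι → (Sym2 (Fin n) → Bool) → Prop) :
    Pr q (fun ω => ∃ i ∈ I, P i ω) ≤ ∑ i ∈ I, Pr q (P i) := by
  simp only [Pr]
  rw [← Ex_sum I (fun i ω => if P i ω then (1:ℝ) else 0)]
  apply Ex_mono h0 h1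
  intro ω
  by_cases h : ∃ i ∈ I, P i ω
  · obtain ⟨i, hi, hPi⟩ := h
    rw [if_pos ⟨i, hi, hPi⟩]
    calc (1:ℝ) = (if P i ω then (1:ℝ) else 0) := by rw [if_pos hPi]
    _ ≤ ∑ j ∈ I, (if P j ω then (1:ℝ) else 0) :=
        Finset.single_le_sum (f := fun j => if P j ω then (1:ℝ) else 0)
          (fun j _ => by positivity) hi
  · rw [if_neg h]
    positivity

lemma Pr_or_le {q : ℝ} (h0 : 0 ≤ q) (h1 : q ≤ 1) (P Q : (Sym2 (Fin n) → Bool) → Prop) :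
    Pr q (fun ω => P ω ∨ Q ω) ≤ Pr q P + Pr q Q := by
  have h : Pr q P + Pr q Q
      = Ex q (fun ω => (if P ω then (1:ℝ) else 0) + (if Q ω then 1 else 0)) := by
    simp only [Pr, Ex, ← Finset.sum_add_distrib]
    exact Finset.sum_congr rfl fun ω _ => by ring
  rw [h]
  apply Ex_mono h0 h1
  intro ω
  by_cases hP : P ω <;> by_cases hQ : Q ω <;> simp [hP, hQ]


section Indep
variable {n : ℕ}

lemma Ex_mul_indep (q : ℝ) (J : Finset (Sym2 (Fin n)))
    (F G : (Sym2 (Fin n) → Bool) → ℝ)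
    (hF : ∀ ω ω', (∀ e ∈ J, ω e = ω' e) → F ω = F ω')
    (hG : ∀ ω ω', (∀ e ∉ J, ω e = ω' e) → G ω = G ω') :
    Ex q (fun ω => F ω * G ω) = Ex q F * Ex q G := by
  classical
  set eqv := Equiv.piEquivPiSubtypeProd (fun e : Sym2 (Fin n) => e ∈ J)
    (fun _ => Bool) with heqv
  have hsum : ∀ h : (Sym2 (Fin n) → Bool) → ℝ, (∑ ω, prW q ω * h ω)
      = ∑ a : {e : Sym2 (Fin n) // e ∈ J} → Bool,
          ∑ b : {e : Sym2 (Fin n) // ¬ e ∈ J} → Bool,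
          prW q (eqv.symm (a, b)) * h (eqv.symm (a, b)) := by
    intro h
    rw [← Equiv.sum_comp eqv.symm (fun ω => prW q ω * h ω), Fintype.sum_prod_type]
  have hφ : ∀ (a : {e : Sym2 (Fin n) // e ∈ J} → Bool)
      (b : {e : Sym2 (Fin n) // ¬ e ∈ J} → Bool) (e : Sym2 (Fin n)) (he : e ∈ J),
      eqv.symm (a, b) e = a ⟨e, he⟩ := by
    intro a b e he
    simp [heqv, Equiv.piEquivPiSubtypeProd_symm_apply, he]
  have hφ' : ∀ (a : {e : Sym2 (Fin n) // e ∈ J} → Bool)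
      (b : {e : Sym2 (Fin n) // ¬ e ∈ J} → Bool) (e : Sym2 (Fin n)) (he : ¬ e ∈ J),
      eqv.symm (a, b) e = b ⟨e, he⟩ := by
    intro a b e he
    simp [heqv, Equiv.piEquivPiSubtypeProd_symm_apply, he]
  have hW : ∀ a b, prW q (eqv.symm (a, b))
      = (∏ j : {e : Sym2 (Fin n) // e ∈ J}, wt q (a j))
        * ∏ j : {e : Sym2 (Fin n) // ¬ e ∈ J}, wt q (b j) := by
    intro a b
    rw [prW, ← Fintype.prod_subtype_mul_prod_subtype (fun e : Sym2 (Fin n) => e ∈ J)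
      (fun e => wt q (eqv.symm (a, b) e))]
    congr 1
    · refine Finset.prod_congr ?_ fun j _ => by rw [hφ a b j.1 j.2]
      congr!
    · refine Finset.prod_congr ?_ fun j _ => by rw [hφ' a b j.1 j.2]
      congr!
  have hFa : ∀ a b, F (eqv.symm (a, b)) = F (eqv.symm (a, fun _ => false)) := by
    intro a b
    exact hF _ _ (fun e he => by rw [hφ a b e he, hφ a _ e he])
  have hGb : ∀ a b, G (eqv.symm (a, b)) = G (eqv.symm (fun _ => false, b)) := by
    intro a b
    exact hG _ _ (fun e he => by rw [hφ' a b e he, hφ' _ b e he])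
  have honeb : (∑ b : {e : Sym2 (Fin n) // ¬ e ∈ J} → Bool, ∏ j, wt q (b j)) = 1 := by
    rw [sum_prod_bool]
    have : ∀ j : {e : Sym2 (Fin n) // ¬ e ∈ J}, wt q false + wt q true = 1 :=
      fun _ => by simp [wt]
    rw [Finset.prod_congr rfl fun j _ => this j, Finset.prod_const_one]
  have honea : (∑ a : {e : Sym2 (Fin n) // e ∈ J} → Bool, ∏ j, wt q (a j)) = 1 := by
    rw [sum_prod_bool]
    have : ∀ j : {e : Sym2 (Fin n) // e ∈ J}, wt q false + wt q true = 1 :=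
      fun _ => by simp [wt]
    rw [Finset.prod_congr rfl fun j _ => this j, Finset.prod_const_one]
  have h2 : Ex q F = ∑ a, (∏ j, wt q (a j)) * F (eqv.symm (a, fun _ => false)) := by
    rw [Ex, hsum]
    apply Finset.sum_congr rfl
    intro a _
    have hb : ∀ b, prW q (eqv.symm (a, b)) * F (eqv.symm (a, b))
        = ((∏ j, wt q (a j)) * F (eqv.symm (a, fun _ => false))) * (∏ j, wt q (b j)) := by
      intro b; rw [hW, hFa]; ring
    simp_rw [hb]
    rw [← Finset.mul_sum, honeb, mul_one]
  have h3 : Ex q G = ∑ b, (∏ j, wt q (b j)) * G (eqv.symm (fun _ => false, b)) := by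
    rw [Ex, hsum]
    have hb : ∀ a b, prW q (eqv.symm (a, b)) * G (eqv.symm (a, b))
        = (∏ j, wt q (a j)) * ((∏ j, wt q (b j)) * G (eqv.symm (fun _ => false, b))) := by
      intro a b; rw [hW, hGb]; ring
    simp_rw [hb]
    rw [← Finset.sum_mul_sum]
    rw [honea, one_mul]
  have h1 : Ex q (fun ω => F ω * G ω)
      = (∑ a, (∏ j, wt q (a j)) * F (eqv.symm (a, fun _ => false)))
        * (∑ b, (∏ j, wt q (b j)) * G (eqv.symm (fun _ => false, b))) := by
    rw [Ex, hsum, Finset.sum_mul_sum]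
    apply Finset.sum_congr rfl
    intro a _
    apply Finset.sum_congr rfl
    intro b _
    rw [hW, hFa a b, hGb a b]
    ring
  rw [h1, h2, h3]

lemma Pr_coord_and (q : ℝ) (J₀ : Finset (Sym2 (Fin n)))
    (Q : (Sym2 (Fin n) → Bool) → Prop)
    (hQ : ∀ ω ω', (∀ e ∉ J₀, ω e = ω' e) → (Q ω ↔ Q ω')) :
    Pr q (fun ω => (∀ e ∈ J₀, ω e = true) ∧ Q ω) = q ^ J₀.card * Pr q Q := by
  classical
  have hpt : ∀ ω : Sym2 (Fin n) → Bool,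
      (if ((∀ e ∈ J₀, ω e = true) ∧ Q ω) then (1:ℝ) else 0)
      = (if (∀ e ∈ J₀, ω e = true) then (1:ℝ) else 0) * (if Q ω then 1 else 0) := by
    intro ω
    by_cases h1 : (∀ e ∈ J₀, ω e = true) <;> by_cases h2 : Q ω <;>
      simp [h1, h2]
  have hsplit := Ex_mul_indep q J₀
    (fun ω => if (∀ e ∈ J₀, ω e = true) then (1:ℝ) else 0)
    (fun ω => if Q ω then 1 else 0)
    (fun ω ω' h => by
      have : (∀ e ∈ J₀, ω e = true) ↔ (∀ e ∈ J₀, ω' e = true) := by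
        constructor
        · intro ha e he; rw [← h e he]; exact ha e he
        · intro ha e he; rw [h e he]; exact ha e he
      by_cases hω : (∀ e ∈ J₀, ω e = true)
      · rw [if_pos hω, if_pos (this.1 hω)]
      · rw [if_neg hω, if_neg (fun hc => hω (this.2 hc))])
    (fun ω ω' h => by
      by_cases hω : Q ω
      · rw [if_pos hω, if_pos ((hQ ω ω' h).1 hω)]
      · rw [if_neg hω, if_neg (fun hc => hω ((hQ ω ω' h).2 hc))])
  have hEF : Ex (n := n) q (fun ω => if (∀ e ∈ J₀, ω e = true) then (1:ℝ) else 0)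
      = q ^ J₀.card := by
    have hFprod : ∀ ω : Sym2 (Fin n) → Bool,
        (if (∀ e ∈ J₀, ω e = true) then (1:ℝ) else 0)
        = ∏ e, (if e ∈ J₀ then (if ω e = true then (1:ℝ) else 0) else 1) := by
      intro ω
      by_cases h : ∀ e ∈ J₀, ω e = true
      · rw [if_pos h]
        symm
        apply Finset.prod_eq_one
        intro e _
        by_cases he : e ∈ J₀
        · simp [he, h e he]
        · simp [he]
      · rw [if_neg h]
        push_neg at h
        obtain ⟨e₀, he₀, hne⟩ := h
        symm
        apply Finset.prod_eq_zero (Finset.mem_univ e₀)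
        simp [he₀, hne]
    simp_rw [hFprod]
    rw [Ex_prod q (fun e b => if e ∈ J₀ then (if b = true then (1:ℝ) else 0) else 1)]
    have : ∀ e : Sym2 (Fin n),
        ((1 - q) * (if e ∈ J₀ then (if (false : Bool) = true then (1:ℝ) else 0) else 1)
          + q * (if e ∈ J₀ then (if (true : Bool) = true then (1:ℝ) else 0) else 1))
        = (if e ∈ J₀ then q else 1) := by
      intro e
      by_cases he : e ∈ J₀ <;> simp [he]
    rw [Finset.prod_congr rfl fun e _ => this e]
    rw [Finset.prod_ite_mem Finset.univ J₀ (fun _ => q), Finset.univ_inter,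
      Finset.prod_const]
  have hstep : Pr q (fun ω => (∀ e ∈ J₀, ω e = true) ∧ Q ω)
      = Ex q (fun ω => (fun ω => if (∀ e ∈ J₀, ω e = true) then (1:ℝ) else 0) ω
          * (fun ω => if Q ω then (1:ℝ) else 0) ω) := by
    simp only [Pr, Ex]
    exact Finset.sum_congr rfl fun ω _ => by
      by_cases h1 : (∀ e ∈ J₀, ω e = true) <;> by_cases h2 : Q ω <;> simp [h1, h2]
  rw [hstep, hsplit, hEF]
  rfl

end Indep

section Chernoff
variable {n : ℕ}

noncomputable def cnt (P : Finset (Fin n × Fin n)) (ω : Sym2 (Fin n) → Bool) : ℕ :=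
  (P.filter (fun vw => ω s(vw.1, vw.2) = true)).card

noncomputable def wgt (P : Finset (Fin n × Fin n)) (e : Sym2 (Fin n)) : ℕ :=
  (P.filter (fun vw => s(vw.1, vw.2) = e)).card

noncomputable def img (P : Finset (Fin n × Fin n)) : Finset (Sym2 (Fin n)) :=
  P.image (fun vw => s(vw.1, vw.2))

lemma wgt_le_two (P : Finset (Fin n × Fin n)) (e : Sym2 (Fin n)) : wgt P e ≤ 2 := by
  induction e using Sym2.ind with
  | _ x y =>
    have hsub : (P.filter (fun vw => s(vw.1, vw.2) = s(x, y)))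
        ⊆ ({(x, y), (y, x)} : Finset (Fin n × Fin n)) := by
      intro ab hab
      simp only [Finset.mem_filter] at hab
      rcases Sym2.eq_iff.1 hab.2 with ⟨h1, h2⟩ | ⟨h1, h2⟩ <;>
        · simp only [Finset.mem_insert, Finset.mem_singleton]
          first
          | exact Or.inl (Prod.ext h1 h2)
          | exact Or.inr (Prod.ext h1 h2)
    calc wgt P s(x, y) ≤ ({(x, y), (y, x)} : Finset (Fin n × Fin n)).card :=
          Finset.card_le_card hsub
    _ ≤ 2 := by
        apply le_trans (Finset.card_insert_le _ _)
        simp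

lemma sum_wgt (P : Finset (Fin n × Fin n)) : ∑ e ∈ img P, wgt P e = P.card :=
  (Finset.card_eq_sum_card_image (fun vw : Fin n × Fin n => s(vw.1, vw.2)) P).symm

lemma cnt_eq_sum (P : Finset (Fin n × Fin n)) (ω : Sym2 (Fin n) → Bool) :
    (cnt P ω : ℝ) = ∑ e ∈ img P, (wgt P e : ℝ) * (if ω e = true then 1 else 0) := by
  have h1 : cnt P ω = ∑ vw ∈ P, (if ω s(vw.1, vw.2) = true then 1 else 0) := by
    rw [cnt, Finset.card_filter]
  have h2 := Finset.sum_comp (s := P) (fun e : Sym2 (Fin n) => if ω e = true then (1:ℕ) else 0)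
    (fun vw => s(vw.1, vw.2))
  rw [h1, h2]
  push_cast
  apply Finset.sum_congr rfl
  intro e _
  rw [smul_eq_mul]
  push_cast
  by_cases h : ω e = true <;> simp [h, wgt]

lemma Ex_exp_cnt (q t : ℝ) (P : Finset (Fin n × Fin n)) :
    Ex q (fun ω => Real.exp (t * (cnt P ω : ℝ)))
      = ∏ e ∈ img P, (1 - q + q * Real.exp (t * (wgt P e : ℝ))) := by
  have hexp : ∀ ω : Sym2 (Fin n) → Bool, Real.exp (t * (cnt P ω : ℝ))
      = ∏ e, (if e ∈ img P then
          Real.exp (t * (wgt P e : ℝ) * (if ω e = true then 1 else 0)) else 1) := by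
    intro ω
    rw [cnt_eq_sum, Finset.mul_sum, Real.exp_sum]
    rw [Finset.prod_ite_mem Finset.univ (img P)
      (fun e => Real.exp (t * (wgt P e : ℝ) * (if ω e = true then 1 else 0))),
      Finset.univ_inter]
    exact Finset.prod_congr rfl fun x _ => by rw [mul_assoc]
  simp_rw [hexp]
  rw [Ex_prod q (fun e b => if e ∈ img P then
    Real.exp (t * (wgt P e : ℝ) * (if b = true then 1 else 0)) else 1)]
  have hcong : ∀ e : Sym2 (Fin n),
      ((1 - q) * (if e ∈ img P then
          Real.exp (t * (wgt P e : ℝ) * (if (false : Bool) = true then 1 else 0)) else 1)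
        + q * (if e ∈ img P then
          Real.exp (t * (wgt P e : ℝ) * (if (true : Bool) = true then 1 else 0)) else 1))
      = (if e ∈ img P then (1 - q + q * Real.exp (t * (wgt P e : ℝ))) else 1) := by
    intro e
    by_cases he : e ∈ img P <;> simp [he] <;> ring
  rw [Finset.prod_congr rfl fun e _ => hcong e]
  rw [Finset.prod_ite_mem Finset.univ (img P)
    (fun e => (1 - q + q * Real.exp (t * (wgt P e : ℝ)))), Finset.univ_inter]

lemma Ex_smul (q c : ℝ) (X : (Sym2 (Fin n) → Bool) → ℝ) :
    Ex q (fun ω => c * X ω) = c * Ex q X := by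
  simp only [Ex, Finset.mul_sum]
  exact Finset.sum_congr rfl fun ω _ => by ring

lemma Pr_ge_le_mgf {q : ℝ} (h0 : 0 ≤ q) (h1 : q ≤ 1) (a t : ℝ) (ht : 0 ≤ t)
    (X : (Sym2 (Fin n) → Bool) → ℝ) :
    Pr q (fun ω => a ≤ X ω) ≤ Real.exp (-(t * a)) * Ex q (fun ω => Real.exp (t * X ω)) := by
  rw [← Ex_smul]
  apply Ex_mono h0 h1
  intro ω
  by_cases h : a ≤ X ω
  · rw [if_pos h]
    rw [← Real.exp_add]
    rw [show -(t * a) + t * X ω = t * (X ω - a) by ring]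
    exact Real.one_le_exp (by nlinarith)
  · rw [if_neg h]
    positivity

lemma Pr_le_le_mgf {q : ℝ} (h0 : 0 ≤ q) (h1 : q ≤ 1) (a t : ℝ) (ht : 0 ≤ t)
    (X : (Sym2 (Fin n) → Bool) → ℝ) :
    Pr q (fun ω => X ω ≤ a) ≤ Real.exp (t * a) * Ex q (fun ω => Real.exp (-t * X ω)) := by
  rw [← Ex_smul]
  apply Ex_mono h0 h1
  intro ω
  by_cases h : X ω ≤ a
  · rw [if_pos h]
    rw [← Real.exp_add]
    rw [show t * a + -t * X ω = t * (a - X ω) by ring]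
    exact Real.one_le_exp (by nlinarith)
  · rw [if_neg h]
    positivity

lemma exp_le_quad {x : ℝ} (hx0 : 0 ≤ x) (hx1 : x ≤ 1) :
    Real.exp x ≤ 1 + x + (3/4) * x^2 := by
  have h := Real.exp_bound (x := x) (by rwa [abs_of_nonneg hx0]) (n := 2) (by norm_num)
  have hs : ∑ m ∈ Finset.range 2, x ^ m / (m.factorial : ℝ) = 1 + x := by
    rw [Finset.sum_range_succ, Finset.sum_range_one]; norm_num
  rw [hs, abs_of_nonneg hx0] at h
  have h2 := (abs_le.1 h).2
  have h3 : x ^ 2 * ((2:ℕ).succ / ((2:ℕ).factorial * (2:ℕ) : ℝ)) = x^2 * (3/4) := by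
    norm_num [Nat.factorial]
  rw [h3] at h2
  nlinarith

lemma exp_neg_le_quad {x : ℝ} (hx0 : 0 ≤ x) (hx1 : x ≤ 1) :
    Real.exp (-x) ≤ 1 - x + (3/4) * x^2 := by
  have h := Real.exp_bound (x := -x) (by rwa [abs_neg, abs_of_nonneg hx0]) (n := 2)
    (by norm_num)
  have hs : ∑ m ∈ Finset.range 2, (-x) ^ m / (m.factorial : ℝ) = 1 - x := by
    rw [Finset.sum_range_succ, Finset.sum_range_one]; norm_num; ring
  rw [hs, abs_neg, abs_of_nonneg hx0] at h
  have h2 := (abs_le.1 h).2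
  have h3 : x ^ 2 * ((2:ℕ).succ / ((2:ℕ).factorial * (2:ℕ) : ℝ)) = x^2 * (3/4) := by
    norm_num [Nat.factorial]
  rw [h3] at h2
  nlinarith

lemma chernoff_low {q δ : ℝ} (h0 : 0 < q) (h1 : q < 1) (hδ0 : 0 < δ) (hδ1 : δ ≤ 1)
    (P : Finset (Fin n × Fin n)) :
    Pr q (fun ω => (cnt P ω : ℝ) ≤ (1 - δ) * q * P.card)
      ≤ Real.exp (-(δ^2 * q * P.card / 6)) := by
  set t : ℝ := δ/3 with hts
  have ht0 : 0 ≤ t := by positivity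
  have hstep := Pr_le_le_mgf h0.le h1.le ((1 - δ) * q * P.card) t ht0
    (fun ω => (cnt P ω : ℝ))
  have hmgf : Ex q (fun ω => Real.exp (-t * (cnt P ω : ℝ)))
      ≤ Real.exp (-(q * (t - (3/2) * t^2) * P.card)) := by
    rw [Ex_exp_cnt q (-t) P]
    have hfac : ∀ e ∈ img P, (1 - q + q * Real.exp ((-t) * (wgt P e : ℝ)))
        ≤ Real.exp (-(q * (t - (3/2)*t^2) * (wgt P e : ℝ))) := by
      intro e _
      have hc2 : (wgt P e : ℝ) ≤ 2 := by exact_mod_cast wgt_le_two P e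
      have hc0 : (0:ℝ) ≤ (wgt P e : ℝ) := Nat.cast_nonneg _
      have hx0 : 0 ≤ t * (wgt P e : ℝ) := by positivity
      have hx1 : t * (wgt P e : ℝ) ≤ 1 := by
        calc t * (wgt P e : ℝ) ≤ t * 2 := by nlinarith
        _ ≤ 1 := by rw [hts]; linarith
      have hq1 : Real.exp ((-t) * (wgt P e : ℝ)) ≤ 1 - t * (wgt P e : ℝ)
          + (3/4) * (t * (wgt P e : ℝ))^2 := by
        rw [show (-t) * (wgt P e : ℝ) = -(t * (wgt P e : ℝ)) by ring]
        exact exp_neg_le_quad hx0 hx1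
      have hquad : (3/4) * (t * (wgt P e : ℝ))^2 ≤ (3/2) * t^2 * (wgt P e : ℝ) := by
        nlinarith [mul_nonneg (mul_nonneg (sq_nonneg t) hc0) (sub_nonneg.2 hc2)]
      have hq2 : q * Real.exp ((-t) * (wgt P e : ℝ))
          ≤ q * (1 - t * (wgt P e : ℝ) + (3/2) * t^2 * (wgt P e : ℝ)) := by
        apply mul_le_mul_of_nonneg_left _ h0.le
        linarith
      calc 1 - q + q * Real.exp ((-t) * (wgt P e : ℝ))
          ≤ 1 + (-(q * (t - (3/2)*t^2) * (wgt P e : ℝ))) := by nlinarith [hq2]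
      _ ≤ Real.exp (-(q * (t - (3/2)*t^2) * (wgt P e : ℝ))) := by
          rw [add_comm]; exact Real.add_one_le_exp _
    calc ∏ e ∈ img P, (1 - q + q * Real.exp ((-t) * (wgt P e : ℝ)))
        ≤ ∏ e ∈ img P, Real.exp (-(q * (t - (3/2)*t^2) * (wgt P e : ℝ))) := by
          apply Finset.prod_le_prod
          · intro e _
            have := Real.exp_pos ((-t) * (wgt P e : ℝ))
            nlinarith
          · exact hfac
    _ = Real.exp (∑ e ∈ img P, -(q * (t - (3/2)*t^2) * (wgt P e : ℝ))) :=
        (Real.exp_sum _ _).symm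
    _ = Real.exp (-(q * (t - (3/2)*t^2) * P.card)) := by
        congr 1
        rw [Finset.sum_neg_distrib, ← Finset.mul_sum]
        rw [show ∑ e ∈ img P, (wgt P e : ℝ) = ((P.card : ℕ) : ℝ) by
          rw [← sum_wgt P]; push_cast; ring]
  calc Pr q (fun ω => (cnt P ω : ℝ) ≤ (1 - δ) * q * P.card)
      ≤ Real.exp (t * ((1 - δ) * q * P.card))
        * Ex q (fun ω => Real.exp (-t * (cnt P ω : ℝ))) := hstep
  _ ≤ Real.exp (t * ((1 - δ) * q * P.card))
        * Real.exp (-(q * (t - (3/2)*t^2) * P.card)) := by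
      apply mul_le_mul_of_nonneg_left hmgf (Real.exp_pos _).le
  _ = Real.exp (t * ((1 - δ) * q * P.card) + -(q * (t - (3/2)*t^2) * P.card)) :=
      (Real.exp_add _ _).symm
  _ ≤ Real.exp (-(δ^2 * q * P.card / 6)) := by
      apply Real.exp_le_exp.2
      rw [hts]
      ring_nf
      nlinarith [mul_nonneg (mul_nonneg h0.le (Nat.cast_nonneg (α := ℝ) P.card)) (sq_nonneg δ)]

lemma chernoff_up {q δ : ℝ} (h0 : 0 < q) (h1 : q < 1) (hδ0 : 0 < δ) (hδ1 : δ ≤ 1)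
    (P : Finset (Fin n × Fin n)) :
    Pr q (fun ω => (1 + δ) * q * P.card ≤ (cnt P ω : ℝ))
      ≤ Real.exp (-(δ^2 * q * P.card / 8)) := by
  set t : ℝ := δ/4 with hts
  have ht0 : 0 ≤ t := by positivity
  have hstep := Pr_ge_le_mgf h0.le h1.le ((1 + δ) * q * P.card) t ht0
    (fun ω => (cnt P ω : ℝ))
  have hmgf : Ex q (fun ω => Real.exp (t * (cnt P ω : ℝ)))
      ≤ Real.exp (q * (t + (3/2) * t^2) * P.card) := by
    rw [Ex_exp_cnt q t P]
    have hfac : ∀ e ∈ img P, (1 - q + q * Real.exp (t * (wgt P e : ℝ)))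
        ≤ Real.exp (q * (t + (3/2)*t^2) * (wgt P e : ℝ)) := by
      intro e _
      have hc2 : (wgt P e : ℝ) ≤ 2 := by exact_mod_cast wgt_le_two P e
      have hc0 : (0:ℝ) ≤ (wgt P e : ℝ) := Nat.cast_nonneg _
      -- key : exp(t*c) - 1 ≤ (c/2) * (exp(2t) - 1)
      have hkey : Real.exp (t * (wgt P e : ℝ)) - 1
          ≤ ((wgt P e : ℝ)/2) * (Real.exp (2*t) - 1) := by
        have h2 := wgt_le_two P e
        interval_cases h : (wgt P e)
        · simp
        · push_cast [h]
          rw [mul_one]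
          have h2t : Real.exp (2*t) = Real.exp t * Real.exp t := by
            rw [← Real.exp_add]; ring_nf
          rw [h2t]
          nlinarith [sq_nonneg (Real.exp t - 1), Real.exp_pos t]
        · push_cast [h]
          rw [show t * 2 = 2 * t by ring]
          norm_num
      have hexp2t : Real.exp (2*t) ≤ 1 + 2*t + 3*t^2 := by
        have hx0 : 0 ≤ 2*t := by positivity
        have hx1 : 2*t ≤ 1 := by rw [hts]; linarith
        have := exp_le_quad hx0 hx1
        nlinarith
      have hk2 : q * (Real.exp (t * (wgt P e : ℝ)) - 1)
          ≤ q * (((wgt P e : ℝ)/2) * (Real.exp (2*t) - 1)) :=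
        mul_le_mul_of_nonneg_left hkey h0.le
      have hk3 : q * (((wgt P e : ℝ)/2) * (Real.exp (2*t) - 1))
          ≤ q * (((wgt P e : ℝ)/2) * (2*t + 3*t^2)) := by
        apply mul_le_mul_of_nonneg_left _ h0.le
        apply mul_le_mul_of_nonneg_left _ (by positivity)
        linarith
      calc 1 - q + q * Real.exp (t * (wgt P e : ℝ))
          ≤ 1 + q * (t + (3/2)*t^2) * (wgt P e : ℝ) := by nlinarith [hk2, hk3]
      _ ≤ Real.exp (q * (t + (3/2)*t^2) * (wgt P e : ℝ)) := by
          rw [add_comm]; exact Real.add_one_le_exp _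
    calc ∏ e ∈ img P, (1 - q + q * Real.exp (t * (wgt P e : ℝ)))
        ≤ ∏ e ∈ img P, Real.exp (q * (t + (3/2)*t^2) * (wgt P e : ℝ)) := by
          apply Finset.prod_le_prod
          · intro e _
            have := Real.exp_pos (t * (wgt P e : ℝ))
            nlinarith
          · exact hfac
    _ = Real.exp (∑ e ∈ img P, q * (t + (3/2)*t^2) * (wgt P e : ℝ)) :=
        (Real.exp_sum _ _).symm
    _ = Real.exp (q * (t + (3/2)*t^2) * P.card) := by
        congr 1
        rw [← Finset.mul_sum]
        rw [show ∑ e ∈ img P, (wgt P e : ℝ) = ((P.card : ℕ) : ℝ) by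
          rw [← sum_wgt P]; push_cast; ring]
  calc Pr q (fun ω => (1 + δ) * q * P.card ≤ (cnt P ω : ℝ))
      ≤ Real.exp (-(t * ((1 + δ) * q * P.card)))
        * Ex q (fun ω => Real.exp (t * (cnt P ω : ℝ))) := hstep
  _ ≤ Real.exp (-(t * ((1 + δ) * q * P.card)))
        * Real.exp (q * (t + (3/2)*t^2) * P.card) := by
      apply mul_le_mul_of_nonneg_left hmgf (Real.exp_pos _).le
  _ = Real.exp (-(t * ((1 + δ) * q * P.card)) + q * (t + (3/2)*t^2) * P.card) :=
      (Real.exp_add _ _).symm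
  _ ≤ Real.exp (-(δ^2 * q * P.card / 8)) := by
      apply Real.exp_le_exp.2
      rw [hts]
      ring_nf
      nlinarith [mul_nonneg (mul_nonneg h0.le (Nat.cast_nonneg (α := ℝ) P.card)) (sq_nonneg δ)]

end Chernoff

section Events
variable {n : ℕ}

noncomputable def pairsF (S T : Finset (Fin n)) : Finset (Fin n × Fin n) :=
  (S ×ˢ T).filter (fun vw => ¬ vw.1 = vw.2)

lemma pairsF_card_le (S T : Finset (Fin n)) : (pairsF S T).card ≤ S.card * T.card :=
  le_trans (Finset.card_filter_le _ _) (le_of_eq (Finset.card_product S T))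

lemma pairsF_card_ge (S T : Finset (Fin n)) :
    (S.card : ℝ) * T.card ≤ ((pairsF S T).card : ℝ) + S.card := by
  have hsplit := Finset.card_filter_add_card_filter_not
    (s := S ×ˢ T) (p := fun vw => vw.1 = vw.2)
  have hdiag : ((S ×ˢ T).filter (fun vw => vw.1 = vw.2)).card ≤ S.card := by
    have hsub : ((S ×ˢ T).filter (fun vw => vw.1 = vw.2)) ⊆ S.image (fun x => (x, x)) := by
      intro ab h
      obtain ⟨a, b⟩ := ab
      simp only [Finset.mem_filter, Finset.mem_product] at h
      obtain ⟨⟨ha, _⟩, hee⟩ := h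
      simp only [Finset.mem_image]
      exact ⟨a, ha, by rw [hee]⟩
    exact le_trans (Finset.card_le_card hsub) Finset.card_image_le
  have hprod : (S ×ˢ T).card = S.card * T.card := Finset.card_product S T
  have hN : S.card * T.card ≤ (pairsF S T).card + S.card := by
    rw [pairsF]; omega
  exact_mod_cast hN

lemma adjOF (ω : Sym2 (Fin n) → Bool) (u v : Fin n) :
    (graphOfFlip ω).Adj u v ↔ (¬ u = v ∧ ω s(u, v) = true) := Iff.rfl

noncomputable def degF (ω : Sym2 (Fin n) → Bool) (u : Fin n) (T : Finset (Fin n)) : ℕ :=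
  (T.filter (fun v => (graphOfFlip ω).Adj u v)).card

lemma cnt_pairsF (ω : Sym2 (Fin n) → Bool) (S T : Finset (Fin n)) :
    cnt (pairsF S T) ω = ∑ u ∈ S, degF ω u T := by
  rw [cnt, pairsF, Finset.filter_filter, Finset.card_filter, Finset.sum_product]
  apply Finset.sum_congr rfl
  intro u _
  rw [degF, Finset.card_filter]
  apply Finset.sum_congr rfl
  intro v _
  by_cases h : (graphOfFlip ω).Adj u v
  · rw [if_pos ⟨h.1, h.2⟩, if_pos h]
  · rw [if_neg (fun hc => h ⟨hc.1, hc.2⟩), if_neg h]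

def Elow (n : ℕ) (q ε : ℝ) (M : ℕ) (ω : Sym2 (Fin n) → Bool) : Prop :=
  ∀ S B : Finset (Fin n), 130*M/(ε^2*q) ≤ (S.card : ℝ) → (n:ℝ)/M ≤ (B.card : ℝ) →
    (1 - ε/3) * q * ((pairsF S B).card : ℝ) ≤ (cnt (pairsF S B) ω : ℝ)

def Eup (n : ℕ) (q ε : ℝ) (M : ℕ) (ω : Sym2 (Fin n) → Bool) : Prop :=
  ∀ S B : Finset (Fin n), 80*M/(ε^2*q) ≤ (S.card : ℝ) → (n:ℝ)/M ≤ (B.card : ℝ) →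
    (cnt (pairsF S B) ω : ℝ) ≤ (1 + ε/2) * q * ((S.card : ℝ) * B.card)

def Ecodeg (n : ℕ) (q ε : ℝ) (M : ℕ) (ω : Sym2 (Fin n) → Bool) : Prop :=
  ∀ u : Fin n, ∀ S T : Finset (Fin n), u ∉ S → u ∉ T →
    550*M/(ε^2*q) ≤ (S.card : ℝ) → q*n/(2*M) ≤ (T.card : ℝ) →
    (∀ x ∈ S ∪ T, ω s(u, x) = true) →
    (1 - ε/3) * q * ((pairsF S T).card : ℝ) ≤ (cnt (pairsF S T) ω : ℝ)

def Eedge (n : ℕ) (q : ℝ) (ω : Sym2 (Fin n) → Bool) : Prop :=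
  (cnt (Finset.univ.offDiag) ω : ℝ)
    ≤ 2 * q * (((Finset.univ : Finset (Fin n)).offDiag.card : ℝ))

variable {q ε : ℝ} {M : ℕ}

lemma card_low_bad (hq0 : 0 < q) (hε0 : 0 < ε) (hε1 : ε < 1/2)
    (hM1 : 1 ≤ (M:ℝ)) (hn1 : (8:ℝ)/ε ≤ (n:ℝ)/M)
    (ω : Sym2 (Fin n) → Bool) (hlow : Elow n q ε M ω)
    (B : Finset (Fin n)) (hB : (n:ℝ)/M ≤ B.card) :
    ((Finset.univ.filter
        (fun u : Fin n => (degF ω u B : ℝ) < (1 - ε/2)*q*B.card)).card : ℝ)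
      < 130*M/(ε^2*q) := by
  by_contra hcon
  push_neg at hcon
  set S := Finset.univ.filter
    (fun u : Fin n => (degF ω u B : ℝ) < (1 - ε/2)*q*B.card) with hSdef
  have hev := hlow S B hcon hB
  have hcnt : (cnt (pairsF S B) ω : ℝ) = ∑ u ∈ S, (degF ω u B : ℝ) := by
    rw [cnt_pairsF]; push_cast; rfl
  have hSpos : (0:ℝ) < S.card := lt_of_lt_of_le (by positivity) hcon
  have hSne : S.Nonempty := Finset.card_pos.1 (by exact_mod_cast hSpos)
  have hlt : ∑ u ∈ S, (degF ω u B : ℝ) < (S.card : ℝ) * ((1 - ε/2)*q*B.card) := by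
    calc ∑ u ∈ S, (degF ω u B : ℝ)
        < ∑ _u ∈ S, (1 - ε/2)*q*B.card :=
          Finset.sum_lt_sum_of_nonempty hSne
            (fun u hu => (Finset.mem_filter.1 hu).2)
    _ = (S.card : ℝ) * ((1 - ε/2)*q*B.card) := by
        rw [Finset.sum_const, nsmul_eq_mul]
  have hpge := pairsF_card_ge S B
  have hB8 : (8:ℝ) ≤ ε * B.card := by
    have h1 : (8:ℝ)/ε ≤ B.card := le_trans hn1 hB
    rw [div_le_iff₀ hε0] at h1
    linarith [h1]
  have hBpos : (0:ℝ) < B.card := by nlinarith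
  have hkey : (1 - ε/2) * (B.card : ℝ) ≤ (1 - ε/3) * ((B.card : ℝ) - 1) := by
    nlinarith
  have hqS : (0:ℝ) ≤ q * S.card := by positivity
  have hmul := mul_le_mul_of_nonneg_left hkey hqS
  have h13 : (0:ℝ) ≤ (1 - ε/3) * q := by nlinarith
  have hNge : (S.card : ℝ) * B.card - S.card ≤ ((pairsF S B).card : ℝ) := by linarith
  have hchain := mul_le_mul_of_nonneg_left hNge h13
  nlinarith [hchain, hmul, hev, hcnt, hlt]

lemma card_up_bad (hq0 : 0 < q) (hε0 : 0 < ε)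
    (hM1 : 1 ≤ (M:ℝ))
    (ω : Sym2 (Fin n) → Bool) (hup : Eup n q ε M ω)
    (B : Finset (Fin n)) (hB : (n:ℝ)/M ≤ B.card) :
    ((Finset.univ.filter
        (fun u : Fin n => (1 + ε/2)*q*B.card < (degF ω u B : ℝ))).card : ℝ)
      < 80*M/(ε^2*q) := by
  by_contra hcon
  push_neg at hcon
  set S := Finset.univ.filter
    (fun u : Fin n => (1 + ε/2)*q*B.card < (degF ω u B : ℝ)) with hSdef
  have hev := hup S B hcon hB
  have hcnt : (cnt (pairsF S B) ω : ℝ) = ∑ u ∈ S, (degF ω u B : ℝ) := by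
    rw [cnt_pairsF]; push_cast; rfl
  have hSpos : (0:ℝ) < S.card := lt_of_lt_of_le (by positivity) hcon
  have hSne : S.Nonempty := Finset.card_pos.1 (by exact_mod_cast hSpos)
  have hlt : (S.card : ℝ) * ((1 + ε/2)*q*B.card) < ∑ u ∈ S, (degF ω u B : ℝ) := by
    calc (S.card : ℝ) * ((1 + ε/2)*q*B.card)
        = ∑ _u ∈ S, (1 + ε/2)*q*B.card := by rw [Finset.sum_const, nsmul_eq_mul]
    _ < ∑ u ∈ S, (degF ω u B : ℝ) :=
          Finset.sum_lt_sum_of_nonempty hSne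
            (fun u hu => (Finset.mem_filter.1 hu).2)
  nlinarith [hev, hcnt, hlt]

noncomputable def nbrT (ω : Sym2 (Fin n) → Bool) (u : Fin n) (B' : Finset (Fin n)) :
    Finset (Fin n) := B'.filter (fun v => (graphOfFlip ω).Adj u v)

noncomputable def badPartners (ω : Sym2 (Fin n) → Bool) (q ε : ℝ) (u : Fin n)
    (B' : Finset (Fin n)) : Finset (Fin n) :=
  Finset.univ.filter (fun v => (graphOfFlip ω).Adj u v ∧
    ((degF ω v (nbrT ω u B') : ℝ) < (1 - ε)*q^2*B'.card))

lemma card_codeg_bad (hq0 : 0 < q) (hε0 : 0 < ε) (hε1 : ε < 1/2)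
    (hM1 : 1 ≤ (M:ℝ)) (hn2 : 16*M/ε ≤ q*n)
    (ω : Sym2 (Fin n) → Bool) (hcod : Ecodeg n q ε M ω)
    (B' : Finset (Fin n)) (hB : (n:ℝ)/M ≤ B'.card)
    (u : Fin n) (hudeg : (1 - ε/2)*q*B'.card ≤ (degF ω u B' : ℝ)) :
    ((badPartners ω q ε u B').card : ℝ) < 550*M/(ε^2*q) := by
  by_contra hcon
  push_neg at hcon
  set T := nbrT ω u B' with hTdef
  set S := badPartners ω q ε u B' with hSdef
  have huS : u ∉ S := fun hu => ((Finset.mem_filter.1 hu).2.1).1 rfl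
  have huT : u ∉ T := fun hu => ((Finset.mem_filter.1 hu).2).1 rfl
  have hT1 : (T.card : ℝ) = (degF ω u B' : ℝ) := rfl
  have hMpos : (0:ℝ) < M := lt_of_lt_of_le one_pos hM1
  have h16 : (16:ℝ)*M ≤ q*n*ε := by
    rw [div_le_iff₀ hε0] at hn2; linarith
  have hqn : (0:ℝ) < q*n := by nlinarith
  have hB0 : (0:ℝ) ≤ B'.card := Nat.cast_nonneg _
  have hqB : (0:ℝ) ≤ q*B'.card := by positivity
  have hT2 : q*n/(2*M) ≤ (T.card : ℝ) := by
    have hm1 : q*((n:ℝ)/M) ≤ q*(B'.card : ℝ) := mul_le_mul_of_nonneg_left hB hq0.le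
    have hm2 : (0:ℝ) ≤ q*B'.card * (1 - ε) := mul_nonneg hqB (by linarith)
    have hTd : (1 - ε/2)*q*(B'.card:ℝ) ≤ (T.card : ℝ) := by rw [hT1]; exact hudeg
    have hm3 : q*(n:ℝ)/(2*M) = q*((n:ℝ)/M)/2 := by ring
    nlinarith [hm1, hm2, hTd, hm3]
  have hcoord : ∀ x ∈ S ∪ T, ω s(u, x) = true := by
    intro x hx
    rcases Finset.mem_union.1 hx with hx | hx
    · exact ((Finset.mem_filter.1 hx).2.1).2
    · exact ((Finset.mem_filter.1 hx).2).2
  have hev := hcod u S T huS huT hcon hT2 hcoord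
  have hcnt : (cnt (pairsF S T) ω : ℝ) = ∑ v ∈ S, (degF ω v T : ℝ) := by
    rw [cnt_pairsF]; push_cast; rfl
  have hSpos : (0:ℝ) < S.card := lt_of_lt_of_le (by positivity) hcon
  have hSne : S.Nonempty := Finset.card_pos.1 (by exact_mod_cast hSpos)
  have hlt : ∑ v ∈ S, (degF ω v T : ℝ) < (S.card : ℝ) * ((1-ε)*q^2*B'.card) := by
    calc ∑ v ∈ S, (degF ω v T : ℝ)
        < ∑ _v ∈ S, (1-ε)*q^2*B'.card :=
          Finset.sum_lt_sum_of_nonempty hSne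
            (fun v hv => (Finset.mem_filter.1 hv).2.2)
    _ = (S.card : ℝ) * ((1-ε)*q^2*B'.card) := by
        rw [Finset.sum_const, nsmul_eq_mul]
  have hpge := pairsF_card_ge S T
  have hT8 : (8:ℝ) ≤ ε * T.card := by
    have h1 : (8:ℝ)/ε ≤ q*n/(2*M) := by
      rw [div_le_div_iff₀ hε0 (by positivity)]
      linarith
    have h2 : (8:ℝ)/ε ≤ (T.card : ℝ) := le_trans h1 hT2
    rw [div_le_iff₀ hε0] at h2
    linarith
  have a1 : (1 - ε/8)*(T.card : ℝ) ≤ (T.card : ℝ) - 1 := by nlinarith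
  have a2 : (1 - ε/2)*(q*(B'.card:ℝ)) ≤ (T.card : ℝ) := by
    rw [hT1]; nlinarith [hudeg]
  have key3 : (1-ε:ℝ) ≤ (1-ε/3)*(1-ε/8)*(1-ε/2) := by nlinarith
  have h13 : (0:ℝ) ≤ 1-ε/3 := by linarith
  have h138 : (0:ℝ) ≤ (1-ε/3)*(1-ε/8) := by nlinarith
  have b1 := mul_le_mul_of_nonneg_left a1 h13
  have b2 := mul_le_mul_of_nonneg_left a2 h138
  have b3 := mul_le_mul_of_nonneg_right key3 hqB
  have c1 : (1-ε)*(q*(B'.card:ℝ)) ≤ (1-ε/3)*((T.card : ℝ) - 1) := by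
    nlinarith [b1, b2, b3]
  have hqS : (0:ℝ) ≤ q*(S.card : ℝ) := by positivity
  have hmul := mul_le_mul_of_nonneg_left c1 hqS
  have hNge : (S.card : ℝ)*T.card - S.card ≤ ((pairsF S T).card : ℝ) := by linarith
  have hchain := mul_le_mul_of_nonneg_left hNge (mul_nonneg h13 hq0.le)
  nlinarith [hmul, hchain, hev, hcnt, hlt]

noncomputable def Bfin (B : Set (Fin n)) : Finset (Fin n) := (Set.toFinite B).toFinset

lemma Bfin_card (B : Set (Fin n)) : (Bfin B).card = B.ncard :=
  (Set.ncard_eq_toFinset_card B (Set.toFinite B)).symm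

lemma mem_Bfin {B : Set (Fin n)} {v : Fin n} : v ∈ Bfin B ↔ v ∈ B :=
  Set.Finite.mem_toFinset _

lemma degIn_eq_degF (ω : Sym2 (Fin n) → Bool) (u : Fin n) (B : Set (Fin n)) :
    degIn (graphOfFlip ω) u B = degF ω u (Bfin B) := by
  rw [degIn, degF]
  have hset : (graphOfFlip ω).neighborSet u ∩ B
      = ↑((Bfin B).filter (fun v => (graphOfFlip ω).Adj u v)) := by
    ext v
    simp only [Set.mem_inter_iff, SimpleGraph.mem_neighborSet, Finset.coe_filter,
      Set.mem_setOf_eq, mem_Bfin]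
    tauto
  rw [hset, Set.ncard_coe_finset]

lemma codeg_eq_degF (ω : Sym2 (Fin n) → Bool) (u v : Fin n) (B : Set (Fin n)) :
    ((graphOfFlip ω).neighborSet u ∩ (graphOfFlip ω).neighborSet v ∩ B).ncard
      = degF ω v (nbrT ω u (Bfin B)) := by
  rw [degF]
  have hset : (graphOfFlip ω).neighborSet u ∩ (graphOfFlip ω).neighborSet v ∩ B
      = ↑((nbrT ω u (Bfin B)).filter (fun w => (graphOfFlip ω).Adj v w)) := by
    ext w
    simp only [Set.mem_inter_iff, SimpleGraph.mem_neighborSet, Finset.coe_filter,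
      Set.mem_setOf_eq, nbrT, Finset.mem_filter, mem_Bfin]
    tauto
  rw [hset, Set.ncard_coe_finset]

lemma det_large (hq0 : 0 < q) (hq1 : q < 1) (hε0 : 0 < ε) (hε1 : ε < 1/2)
    (hM1 : 1 ≤ (M:ℝ)) (hn1 : (8:ℝ)/ε ≤ (n:ℝ)/M) (hn2 : 16*M/ε ≤ q*n)
    (ω : Sym2 (Fin n) → Bool)
    (hlow : Elow n q ε M ω) (hup : Eup n q ε M ω) (hcod : Ecodeg n q ε M ω)
    (A B : Set (Fin n)) (hA : (n:ℝ)/M ≤ A.ncard) (hB : (n:ℝ)/M ≤ B.ncard) :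
    ((Set.ncard {e : Sym2 (Fin n) | e ∈ (graphOfFlip ω).edgeSet ∧
      ∃ u v : Fin n, e = s(u, v) ∧
      ¬ (((1 - ε) * q * A.ncard ≤ (degIn (graphOfFlip ω) u A : ℝ) ∧
            (degIn (graphOfFlip ω) u A : ℝ) ≤ (1 + ε) * q * A.ncard) ∧
          ((1 - ε) * q * A.ncard ≤ (degIn (graphOfFlip ω) v A : ℝ) ∧
            (degIn (graphOfFlip ω) v A : ℝ) ≤ (1 + ε) * q * A.ncard) ∧
          ((1 - ε) * q * B.ncard ≤ (degIn (graphOfFlip ω) u B : ℝ) ∧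
            (degIn (graphOfFlip ω) u B : ℝ) ≤ (1 + ε) * q * B.ncard) ∧
          ((1 - ε) * q * B.ncard ≤ (degIn (graphOfFlip ω) v B : ℝ) ∧
            (degIn (graphOfFlip ω) v B : ℝ) ≤ (1 + ε) * q * B.ncard) ∧
          (1 - ε) * q ^ 2 * B.ncard
            ≤ (((graphOfFlip ω).neighborSet u ∩ (graphOfFlip ω).neighborSet v
                ∩ B).ncard : ℝ))}) : ℝ)
      ≤ 10 ^ 3 * M * (ε⁻¹) ^ 2 * q⁻¹ * n := by
  classical
  have hA'card : (((Bfin A).card : ℕ) : ℝ) = (A.ncard : ℝ) := by rw [Bfin_card]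
  have hB'card : (((Bfin B).card : ℕ) : ℝ) = (B.ncard : ℝ) := by rw [Bfin_card]
  set A' := Bfin A with hA'def
  set B' := Bfin B with hB'def
  have hA' : (n:ℝ)/M ≤ A'.card := by rw [hA'card]; exact hA
  have hB' : (n:ℝ)/M ≤ B'.card := by rw [hB'card]; exact hB
  set UA1 := Finset.univ.filter
    (fun u : Fin n => (degF ω u A' : ℝ) < (1 - ε/2)*q*A'.card) with hUA1def
  set UA2 := Finset.univ.filter
    (fun u : Fin n => (1 + ε/2)*q*A'.card < (degF ω u A' : ℝ)) with hUA2def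
  set UB1 := Finset.univ.filter
    (fun u : Fin n => (degF ω u B' : ℝ) < (1 - ε/2)*q*B'.card) with hUB1def
  set UB2 := Finset.univ.filter
    (fun u : Fin n => (1 + ε/2)*q*B'.card < (degF ω u B' : ℝ)) with hUB2def
  set U := UA1 ∪ UA2 ∪ UB1 ∪ UB2 with hUdef
  have hUA1c := card_low_bad hq0 hε0 hε1 hM1 hn1 ω hlow A' hA'
  have hUB1c := card_low_bad hq0 hε0 hε1 hM1 hn1 ω hlow B' hB'
  have hUA2c := card_up_bad hq0 hε0 hM1 ω hup A' hA'
  have hUB2c := card_up_bad hq0 hε0 hM1 ω hup B' hB'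
  have hUcard : (U.card : ℝ) ≤ 420*M/(ε^2*q) := by
    have h1 : U.card ≤ UA1.card + UA2.card + UB1.card + UB2.card := by
      calc U.card ≤ (UA1 ∪ UA2 ∪ UB1).card + UB2.card := Finset.card_union_le _ _
      _ ≤ ((UA1 ∪ UA2).card + UB1.card) + UB2.card :=
          Nat.add_le_add_right (Finset.card_union_le _ _) _
      _ ≤ ((UA1.card + UA2.card) + UB1.card) + UB2.card :=
          Nat.add_le_add_right (Nat.add_le_add_right (Finset.card_union_le _ _) _) _
    have h2 : ((U.card : ℕ) : ℝ)
        ≤ ((UA1.card + UA2.card + UB1.card + UB2.card : ℕ) : ℝ) := by exact_mod_cast h1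
    push_cast at h2
    have hrw : (420:ℝ)*M/(ε^2*q) = 130*M/(ε^2*q) + 80*M/(ε^2*q)
        + 130*M/(ε^2*q) + 80*M/(ε^2*q) := by ring
    rw [hrw]
    linarith [hUA1c, hUA2c, hUB1c, hUB2c, h2]
  set F1 := U.biUnion (fun u => Finset.univ.image (fun v => s(u, v))) with hF1def
  set F2 := Finset.univ.biUnion (fun u : Fin n =>
    if (1 - ε/2)*q*B'.card ≤ (degF ω u B' : ℝ) then
      (badPartners ω q ε u B').image (fun v => s(u, v)) else ∅) with hF2def
  have hgood : ∀ w : Fin n, w ∉ U →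
      ((1 - ε/2)*q*A'.card ≤ (degF ω w A' : ℝ) ∧ (degF ω w A' : ℝ) ≤ (1 + ε/2)*q*A'.card
        ∧ (1 - ε/2)*q*B'.card ≤ (degF ω w B' : ℝ)
        ∧ (degF ω w B' : ℝ) ≤ (1 + ε/2)*q*B'.card) := by
    intro w hw
    rw [hUdef] at hw
    simp only [Finset.mem_union, not_or] at hw
    obtain ⟨⟨⟨h1, h2⟩, h3⟩, h4⟩ := hw
    rw [hUA1def] at h1; rw [hUA2def] at h2; rw [hUB1def] at h3; rw [hUB2def] at h4
    simp only [Finset.mem_filter, Finset.mem_univ, true_and, not_lt] at h1 h2 h3 h4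
    exact ⟨h1, h2, h3, h4⟩
  have hsub : {e : Sym2 (Fin n) | e ∈ (graphOfFlip ω).edgeSet ∧
      ∃ u v : Fin n, e = s(u, v) ∧
      ¬ (((1 - ε) * q * A.ncard ≤ (degIn (graphOfFlip ω) u A : ℝ) ∧
            (degIn (graphOfFlip ω) u A : ℝ) ≤ (1 + ε) * q * A.ncard) ∧
          ((1 - ε) * q * A.ncard ≤ (degIn (graphOfFlip ω) v A : ℝ) ∧
            (degIn (graphOfFlip ω) v A : ℝ) ≤ (1 + ε) * q * A.ncard) ∧
          ((1 - ε) * q * B.ncard ≤ (degIn (graphOfFlip ω) u B : ℝ) ∧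
            (degIn (graphOfFlip ω) u B : ℝ) ≤ (1 + ε) * q * B.ncard) ∧
          ((1 - ε) * q * B.ncard ≤ (degIn (graphOfFlip ω) v B : ℝ) ∧
            (degIn (graphOfFlip ω) v B : ℝ) ≤ (1 + ε) * q * B.ncard) ∧
          (1 - ε) * q ^ 2 * B.ncard
            ≤ (((graphOfFlip ω).neighborSet u ∩ (graphOfFlip ω).neighborSet v
                ∩ B).ncard : ℝ))} ⊆ ↑(F1 ∪ F2) := by
    intro e he
    obtain ⟨heE, u, v, he', hnot⟩ := he
    subst he'
    have hadj : (graphOfFlip ω).Adj u v := (SimpleGraph.mem_edgeSet _).1 heE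
    rw [Finset.coe_union, Set.mem_union]
    by_cases hu : u ∈ U
    · left
      rw [Finset.mem_coe]
      exact Finset.mem_biUnion.2 ⟨u, hu,
        Finset.mem_image.2 ⟨v, Finset.mem_univ v, rfl⟩⟩
    by_cases hv : v ∈ U
    · left
      rw [Finset.mem_coe]
      exact Finset.mem_biUnion.2 ⟨v, hv,
        Finset.mem_image.2 ⟨u, Finset.mem_univ u, (Sym2.eq_swap)⟩⟩
    obtain ⟨hu1, hu2, hu3, hu4⟩ := hgood u hu
    obtain ⟨hv1, hv2, hv3, hv4⟩ := hgood v hv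
    have hεqA : (0:ℝ) ≤ ε*(q*(A'.card:ℝ)) := by positivity
    have hεqB : (0:ℝ) ≤ ε*(q*(B'.card:ℝ)) := by positivity
    have hdegu : (degIn (graphOfFlip ω) u A : ℝ) = (degF ω u A' : ℝ) := by
      rw [degIn_eq_degF]
    have hdegv : (degIn (graphOfFlip ω) v A : ℝ) = (degF ω v A' : ℝ) := by
      rw [degIn_eq_degF]
    have hdegu' : (degIn (graphOfFlip ω) u B : ℝ) = (degF ω u B' : ℝ) := by
      rw [degIn_eq_degF]
    have hdegv' : (degIn (graphOfFlip ω) v B : ℝ) = (degF ω v B' : ℝ) := by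
      rw [degIn_eq_degF]
    have hcodbad : ((((graphOfFlip ω).neighborSet u ∩ (graphOfFlip ω).neighborSet v
        ∩ B).ncard : ℕ) : ℝ) < (1 - ε) * q ^ 2 * B.ncard := by
      by_contra hc
      push_neg at hc
      apply hnot
      refine ⟨⟨?_, ?_⟩, ⟨?_, ?_⟩, ⟨?_, ?_⟩, ⟨?_, ?_⟩, hc⟩
      · rw [hdegu, ← hA'card]; linarith only [hu1, hεqA]
      · rw [hdegu, ← hA'card]; linarith only [hu2, hεqA]
      · rw [hdegv, ← hA'card]; linarith only [hv1, hεqA]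
      · rw [hdegv, ← hA'card]; linarith only [hv2, hεqA]
      · rw [hdegu', ← hB'card]; linarith only [hu3, hεqB]
      · rw [hdegu', ← hB'card]; linarith only [hu4, hεqB]
      · rw [hdegv', ← hB'card]; linarith only [hv3, hεqB]
      · rw [hdegv', ← hB'card]; linarith only [hv4, hεqB]
    right
    rw [Finset.mem_coe]
    refine Finset.mem_biUnion.2 ⟨u, Finset.mem_univ u, ?_⟩
    rw [if_pos hu3]
    refine Finset.mem_image.2 ⟨v, ?_, rfl⟩
    refine Finset.mem_filter.2 ⟨Finset.mem_univ v, hadj, ?_⟩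
    have hcod2 : ((degF ω v (nbrT ω u B') : ℕ) : ℝ)
        = ((((graphOfFlip ω).neighborSet u ∩ (graphOfFlip ω).neighborSet v
            ∩ B).ncard : ℕ) : ℝ) := by
      rw [hB'def, ← codeg_eq_degF]
    rw [← hB'card] at hcodbad
    rw [hcod2]
    exact hcodbad
  have hncard : ((Set.ncard {e : Sym2 (Fin n) | e ∈ (graphOfFlip ω).edgeSet ∧
      ∃ u v : Fin n, e = s(u, v) ∧
      ¬ (((1 - ε) * q * A.ncard ≤ (degIn (graphOfFlip ω) u A : ℝ) ∧
            (degIn (graphOfFlip ω) u A : ℝ) ≤ (1 + ε) * q * A.ncard) ∧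
          ((1 - ε) * q * A.ncard ≤ (degIn (graphOfFlip ω) v A : ℝ) ∧
            (degIn (graphOfFlip ω) v A : ℝ) ≤ (1 + ε) * q * A.ncard) ∧
          ((1 - ε) * q * B.ncard ≤ (degIn (graphOfFlip ω) u B : ℝ) ∧
            (degIn (graphOfFlip ω) u B : ℝ) ≤ (1 + ε) * q * B.ncard) ∧
          ((1 - ε) * q * B.ncard ≤ (degIn (graphOfFlip ω) v B : ℝ) ∧
            (degIn (graphOfFlip ω) v B : ℝ) ≤ (1 + ε) * q * B.ncard) ∧
          (1 - ε) * q ^ 2 * B.ncard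
            ≤ (((graphOfFlip ω).neighborSet u ∩ (graphOfFlip ω).neighborSet v
                ∩ B).ncard : ℝ))} : ℕ) : ℝ) ≤ ((F1 ∪ F2).card : ℝ) := by
    have h := Set.ncard_le_ncard hsub ((F1 ∪ F2).finite_toSet)
    rw [Set.ncard_coe_finset] at h
    exact_mod_cast h
  have hF1c : ((F1.card : ℕ) : ℝ) ≤ (U.card : ℝ) * n := by
    have h1 : F1.card ≤ ∑ u ∈ U, (Finset.univ.image (fun v : Fin n => s(u, v))).card :=
      Finset.card_biUnion_le
    have h2 : ∑ u ∈ U, (Finset.univ.image (fun v : Fin n => s(u, v))).card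
        ≤ ∑ _u ∈ U, n :=
      Finset.sum_le_sum (fun u _ => le_trans Finset.card_image_le
        (le_of_eq (Finset.card_fin n)))
    have h3 : F1.card ≤ U.card * n := le_trans h1 (le_trans h2 (le_of_eq (by
      rw [Finset.sum_const, smul_eq_mul])))
    exact_mod_cast h3
  have hF2c : ((F2.card : ℕ) : ℝ) ≤ (n : ℝ) * (550*M/(ε^2*q)) := by
    have h1 : F2.card ≤ ∑ u ∈ Finset.univ,
        (if (1 - ε/2)*q*B'.card ≤ (degF ω u B' : ℝ) then
          (badPartners ω q ε u B').image (fun v => s(u, v)) else ∅).card :=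
      Finset.card_biUnion_le
    have h2 : ((F2.card : ℕ) : ℝ) ≤ ∑ u ∈ Finset.univ,
        (((if (1 - ε/2)*q*B'.card ≤ (degF ω u B' : ℝ) then
          (badPartners ω q ε u B').image (fun v => s(u, v)) else ∅).card : ℕ) : ℝ) := by
      exact_mod_cast h1
    have h3 : ∀ u : Fin n,
        (((if (1 - ε/2)*q*B'.card ≤ (degF ω u B' : ℝ) then
          (badPartners ω q ε u B').image (fun v => s(u, v)) else ∅).card : ℕ) : ℝ)
        ≤ 550*M/(ε^2*q) := by
      intro u
      by_cases hcase : (1 - ε/2)*q*B'.card ≤ (degF ω u B' : ℝ)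
      · rw [if_pos hcase]
        have hb := card_codeg_bad hq0 hε0 hε1 hM1 hn2 ω hcod B' hB' u hcase
        have hc : (((badPartners ω q ε u B').image (fun v => s(u, v))).card : ℝ)
            ≤ ((badPartners ω q ε u B').card : ℝ) := by
          exact_mod_cast Finset.card_image_le
        linarith
      · rw [if_neg hcase]
        simp only [Finset.card_empty, Nat.cast_zero]
        positivity
    calc ((F2.card : ℕ) : ℝ) ≤ ∑ u ∈ Finset.univ,
          (((if (1 - ε/2)*q*B'.card ≤ (degF ω u B' : ℝ) then
            (badPartners ω q ε u B').image (fun v => s(u, v)) else ∅).card : ℕ) : ℝ) := h2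
    _ ≤ ∑ _u ∈ (Finset.univ : Finset (Fin n)), (550*M/(ε^2*q) : ℝ) :=
        Finset.sum_le_sum (fun u _ => h3 u)
    _ = (n : ℝ) * (550*M/(ε^2*q)) := by
        rw [Finset.sum_const, nsmul_eq_mul, Finset.card_fin]
  have hunion : ((F1 ∪ F2).card : ℝ) ≤ ((F1.card : ℕ) : ℝ) + ((F2.card : ℕ) : ℝ) := by
    exact_mod_cast Finset.card_union_le F1 F2
  have hrhs : 10 ^ 3 * (M:ℝ) * (ε⁻¹) ^ 2 * q⁻¹ * n = (1000*M/(ε^2*q))*n := by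
    rw [div_eq_mul_inv, mul_inv]
    ring
  rw [hrhs]
  have hn0 : (0:ℝ) ≤ n := Nat.cast_nonneg n
  have hKpos : (0:ℝ) ≤ M/(ε^2*q) := by positivity
  calc ((Set.ncard _ : ℕ) : ℝ) ≤ ((F1 ∪ F2).card : ℝ) := hncard
  _ ≤ ((F1.card : ℕ) : ℝ) + ((F2.card : ℕ) : ℝ) := hunion
  _ ≤ (U.card : ℝ) * n + (n : ℝ) * (550*M/(ε^2*q)) := by
      linarith only [hF1c, hF2c]
  _ ≤ (420*M/(ε^2*q)) * n + (n : ℝ) * (550*M/(ε^2*q)) := by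
      have hstep3 := mul_le_mul_of_nonneg_right hUcard hn0
      linarith only [hstep3]
  _ ≤ (1000*M/(ε^2*q))*n := by
      have hgap : (1000*(M:ℝ)/(ε^2*q))*n - ((420*M/(ε^2*q)) * n + (n:ℝ) * (550*M/(ε^2*q)))
          = (30*M/(ε^2*q))*n := by ring
      have hgap0 : (0:ℝ) ≤ (30*(M:ℝ)/(ε^2*q))*n := by positivity
      linarith only [hgap, hgap0]

lemma det_small (hq0 : 0 < q) (hε0 : 0 < ε) (hM1 : 1 ≤ (M:ℝ))
    (hq2 : q^2*n ≤ 500*M/ε^2)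
    (ω : Sym2 (Fin n) → Bool) (hedge : Eedge n q ω)
    (A B : Set (Fin n)) :
    ((Set.ncard {e : Sym2 (Fin n) | e ∈ (graphOfFlip ω).edgeSet ∧
      ∃ u v : Fin n, e = s(u, v) ∧
      ¬ (((1 - ε) * q * A.ncard ≤ (degIn (graphOfFlip ω) u A : ℝ) ∧
            (degIn (graphOfFlip ω) u A : ℝ) ≤ (1 + ε) * q * A.ncard) ∧
          ((1 - ε) * q * A.ncard ≤ (degIn (graphOfFlip ω) v A : ℝ) ∧
            (degIn (graphOfFlip ω) v A : ℝ) ≤ (1 + ε) * q * A.ncard) ∧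
          ((1 - ε) * q * B.ncard ≤ (degIn (graphOfFlip ω) u B : ℝ) ∧
            (degIn (graphOfFlip ω) u B : ℝ) ≤ (1 + ε) * q * B.ncard) ∧
          ((1 - ε) * q * B.ncard ≤ (degIn (graphOfFlip ω) v B : ℝ) ∧
            (degIn (graphOfFlip ω) v B : ℝ) ≤ (1 + ε) * q * B.ncard) ∧
          (1 - ε) * q ^ 2 * B.ncard
            ≤ (((graphOfFlip ω).neighborSet u ∩ (graphOfFlip ω).neighborSet v
                ∩ B).ncard : ℝ))}) : ℝ)
      ≤ 10 ^ 3 * M * (ε⁻¹) ^ 2 * q⁻¹ * n := by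
  classical
  set EF := ((Finset.univ.offDiag.filter
    (fun vw : Fin n × Fin n => ω s(vw.1, vw.2) = true)).image
      (fun vw => s(vw.1, vw.2))) with hEFdef
  have hsub : {e : Sym2 (Fin n) | e ∈ (graphOfFlip ω).edgeSet ∧
      ∃ u v : Fin n, e = s(u, v) ∧
      ¬ (((1 - ε) * q * A.ncard ≤ (degIn (graphOfFlip ω) u A : ℝ) ∧
            (degIn (graphOfFlip ω) u A : ℝ) ≤ (1 + ε) * q * A.ncard) ∧
          ((1 - ε) * q * A.ncard ≤ (degIn (graphOfFlip ω) v A : ℝ) ∧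
            (degIn (graphOfFlip ω) v A : ℝ) ≤ (1 + ε) * q * A.ncard) ∧
          ((1 - ε) * q * B.ncard ≤ (degIn (graphOfFlip ω) u B : ℝ) ∧
            (degIn (graphOfFlip ω) u B : ℝ) ≤ (1 + ε) * q * B.ncard) ∧
          ((1 - ε) * q * B.ncard ≤ (degIn (graphOfFlip ω) v B : ℝ) ∧
            (degIn (graphOfFlip ω) v B : ℝ) ≤ (1 + ε) * q * B.ncard) ∧
          (1 - ε) * q ^ 2 * B.ncard
            ≤ (((graphOfFlip ω).neighborSet u ∩ (graphOfFlip ω).neighborSet v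
                ∩ B).ncard : ℝ))} ⊆ ↑EF := by
    intro e he
    have heE : e ∈ (graphOfFlip ω).edgeSet := he.1
    clear he
    induction e using Sym2.ind with
    | _ x y =>
      have hadj : (graphOfFlip ω).Adj x y := (SimpleGraph.mem_edgeSet _).1 heE
      rw [Finset.mem_coe]
      refine Finset.mem_image.2 ⟨(x, y), Finset.mem_filter.2 ⟨?_, hadj.2⟩, rfl⟩
      exact Finset.mem_offDiag.2 ⟨Finset.mem_univ x, Finset.mem_univ y, hadj.1⟩
  have h1 : ((Set.ncard {e : Sym2 (Fin n) | e ∈ (graphOfFlip ω).edgeSet ∧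
      ∃ u v : Fin n, e = s(u, v) ∧
      ¬ (((1 - ε) * q * A.ncard ≤ (degIn (graphOfFlip ω) u A : ℝ) ∧
            (degIn (graphOfFlip ω) u A : ℝ) ≤ (1 + ε) * q * A.ncard) ∧
          ((1 - ε) * q * A.ncard ≤ (degIn (graphOfFlip ω) v A : ℝ) ∧
            (degIn (graphOfFlip ω) v A : ℝ) ≤ (1 + ε) * q * A.ncard) ∧
          ((1 - ε) * q * B.ncard ≤ (degIn (graphOfFlip ω) u B : ℝ) ∧
            (degIn (graphOfFlip ω) u B : ℝ) ≤ (1 + ε) * q * B.ncard) ∧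
          ((1 - ε) * q * B.ncard ≤ (degIn (graphOfFlip ω) v B : ℝ) ∧
            (degIn (graphOfFlip ω) v B : ℝ) ≤ (1 + ε) * q * B.ncard) ∧
          (1 - ε) * q ^ 2 * B.ncard
            ≤ (((graphOfFlip ω).neighborSet u ∩ (graphOfFlip ω).neighborSet v
                ∩ B).ncard : ℝ))} : ℕ) : ℝ) ≤ ((EF.card : ℕ) : ℝ) := by
    have h := Set.ncard_le_ncard hsub EF.finite_toSet
    rw [Set.ncard_coe_finset] at h
    exact_mod_cast h
  have h2 : ((EF.card : ℕ) : ℝ) ≤ (cnt Finset.univ.offDiag ω : ℝ) := by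
    have : EF.card ≤ cnt Finset.univ.offDiag ω := by
      rw [hEFdef, cnt]
      exact Finset.card_image_le
    exact_mod_cast this
  have h4 : ((((Finset.univ : Finset (Fin n)).offDiag.card) : ℕ) : ℝ) ≤ (n:ℝ)*n := by
    have hsub2 : (Finset.univ : Finset (Fin n)).offDiag ⊆ Finset.univ ×ˢ Finset.univ := by
      intro vw hvw
      have h := Finset.mem_offDiag.1 hvw
      exact Finset.mem_product.2 ⟨h.1, h.2.1⟩
    have := Finset.card_le_card hsub2
    rw [Finset.card_product, Finset.card_fin] at this
    exact_mod_cast this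
  have hn0 : (0:ℝ) ≤ n := Nat.cast_nonneg n
  have h6 : q^2*(n:ℝ)*ε^2 ≤ 500*M := by
    have hmul := mul_le_mul_of_nonneg_right hq2 (sq_nonneg ε)
    have : (500*(M:ℝ)/ε^2)*ε^2 = 500*M := by field_simp
    linarith
  have key : 2*q*((n:ℝ)*n) ≤ 10^3*M*(ε⁻¹)^2*q⁻¹*n := by
    rw [show (10:ℝ)^3*M*(ε⁻¹)^2*q⁻¹*n = (1000*M/(ε^2*q))*n from by
      rw [div_eq_mul_inv, mul_inv]; ring]
    rw [div_mul_eq_mul_div, le_div_iff₀ (by positivity : (0:ℝ) < ε^2*q)]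
    have hmul2 := mul_le_mul_of_nonneg_right h6 (by positivity : (0:ℝ) ≤ 2*(n:ℝ))
    nlinarith [hmul2]
  have hcnt2 : (cnt Finset.univ.offDiag ω : ℝ) ≤ 2*q*((n:ℝ)*n) := by
    have h3 : (cnt Finset.univ.offDiag ω : ℝ)
        ≤ 2 * q * ((Finset.univ : Finset (Fin n)).offDiag.card : ℝ) := hedge
    have h5 : 2*q*(((Finset.univ : Finset (Fin n)).offDiag.card : ℕ) : ℝ) ≤ 2*q*((n:ℝ)*n) :=
      mul_le_mul_of_nonneg_left h4 (by positivity)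
    linarith
  linarith

lemma exp_ge_pow16 {x : ℝ} (hx : 0 ≤ x) : (1 + x/16)^(16:ℕ) ≤ Real.exp x := by
  have h1 : 1 + x/16 ≤ Real.exp (x/16) := by
    have := Real.add_one_le_exp (x/16); linarith
  calc (1 + x/16)^(16:ℕ) ≤ (Real.exp (x/16))^(16:ℕ) :=
        pow_le_pow_left₀ (by positivity) h1 16
  _ = Real.exp x := by
      rw [← Real.exp_nat_mul]; congr 1; push_cast; ring

lemma four_le_exp : (4:ℝ) ≤ Real.exp (3/2) := by
  have h := exp_ge_pow16 (x := 3/2) (by norm_num)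
  have h2 : (4:ℝ) ≤ (1 + (3/2)/16)^(16:ℕ) := by norm_num
  linarith

lemma pow4_le_exp (n : ℕ) : (2:ℝ)^n * 2^n ≤ Real.exp (3*(n:ℝ)/2) := by
  have h44 : (2:ℝ)^n * 2^n = 4^n := by rw [← mul_pow]; norm_num
  rw [h44]
  calc (4:ℝ)^n ≤ (Real.exp (3/2))^n := pow_le_pow_left₀ (by norm_num) four_le_exp n
  _ = Real.exp ((n:ℝ) * (3/2)) := by rw [Real.exp_nat_mul]
  _ = Real.exp (3*(n:ℝ)/2) := by ring_nf

lemma Pr_not_Elow (h0 : 0 < q) (h1 : q < 1) (hε0 : 0 < ε) (hε1 : ε < 1/2)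
    (hM1 : 1 ≤ (M:ℝ)) (hn8 : (8:ℝ) ≤ (n:ℝ)/M) :
    Pr q (fun ω => ¬ Elow n q ε M ω) ≤ Real.exp (-(n:ℝ)/2) := by
  classical
  set I : Finset (Finset (Fin n) × Finset (Fin n)) := Finset.univ with hIdef
  have hMpos : (0:ℝ) < M := lt_of_lt_of_le one_pos hM1
  have hnM0 : (0:ℝ) ≤ (n:ℝ)/M := le_trans (by norm_num) hn8
  have himp : ∀ ω, (¬ Elow n q ε M ω) → ∃ SB ∈ I,
      (130*M/(ε^2*q) ≤ (SB.1.card : ℝ) ∧ (n:ℝ)/M ≤ (SB.2.card : ℝ)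
        ∧ (cnt (pairsF SB.1 SB.2) ω : ℝ)
            < (1 - ε/3) * q * ((pairsF SB.1 SB.2).card : ℝ)) := by
    intro ω h
    rw [Elow] at h
    push_neg at h
    obtain ⟨S, B, hS, hB, hlt⟩ := h
    exact ⟨(S, B), Finset.mem_univ _, hS, hB, hlt⟩
  have hPr1 : Pr q (fun ω => ¬ Elow n q ε M ω) ≤ ∑ SB ∈ I, Pr q (fun ω =>
      130*M/(ε^2*q) ≤ (SB.1.card : ℝ) ∧ (n:ℝ)/M ≤ (SB.2.card : ℝ)
        ∧ (cnt (pairsF SB.1 SB.2) ω : ℝ)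
            < (1 - ε/3) * q * ((pairsF SB.1 SB.2).card : ℝ)) :=
    le_trans (Pr_mono h0.le h1.le himp) (Pr_exists_le h0.le h1.le I _)
  have hterm : ∀ SB ∈ I, Pr q (fun ω =>
      130*M/(ε^2*q) ≤ (SB.1.card : ℝ) ∧ (n:ℝ)/M ≤ (SB.2.card : ℝ)
        ∧ (cnt (pairsF SB.1 SB.2) ω : ℝ)
            < (1 - ε/3) * q * ((pairsF SB.1 SB.2).card : ℝ))
      ≤ Real.exp (-(2*(n:ℝ))) := by
    intro SB _
    by_cases hadm : 130*M/(ε^2*q) ≤ (SB.1.card : ℝ) ∧ (n:ℝ)/M ≤ (SB.2.card : ℝ)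
    · obtain ⟨hS, hB⟩ := hadm
      have hB8 : (8:ℝ) ≤ (SB.2.card : ℝ) := le_trans hn8 hB
      have hKpos : (0:ℝ) < 130*M/(ε^2*q) := by positivity
      have hSpos : (0:ℝ) < (SB.1.card : ℝ) := lt_of_lt_of_le hKpos hS
      have h78 : (7/8)*(SB.2.card:ℝ) ≤ (SB.2.card:ℝ) - 1 := by linarith
      have hstep1 : (130*M/(ε^2*q)) * ((7/8)*(SB.2.card:ℝ))
          ≤ (SB.1.card:ℝ) * ((SB.2.card:ℝ) - 1) :=
        mul_le_mul hS h78 (by positivity) hSpos.le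
      have hstep2 : (SB.1.card:ℝ)*((SB.2.card:ℝ)-1) ≤ ((pairsF SB.1 SB.2).card : ℝ) := by
        linarith [pairsF_card_ge SB.1 SB.2]
      have hstep3 : (130*M/(ε^2*q)) * ((7/8)*((n:ℝ)/M))
          ≤ (130*M/(ε^2*q)) * ((7/8)*(SB.2.card:ℝ)) := by
        apply mul_le_mul_of_nonneg_left _ hKpos.le
        linarith
      have hN : (130*(M:ℝ)/(ε^2*q)) * ((7/8)*((n:ℝ)/M)) ≤ ((pairsF SB.1 SB.2).card : ℝ) :=
        le_trans hstep3 (le_trans hstep1 hstep2)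
      have heq : (130*(M:ℝ)/(ε^2*q)) * ((7/8)*((n:ℝ)/M)) = (910/8)*((n:ℝ)/(ε^2*q)) := by
        field_simp
        ring
      rw [heq] at hN
      have hexp : 2*(n:ℝ) ≤ (ε/3)^2 * q * ((pairsF SB.1 SB.2).card : ℝ) / 6 := by
        have hmul := mul_le_mul_of_nonneg_left hN (by positivity : (0:ℝ) ≤ ε^2*q/54)
        have heq2 : (ε^2*q/54) * ((910/8)*((n:ℝ)/(ε^2*q))) = (910/432)*(n:ℝ) := by
          field_simp
          ring
        rw [heq2] at hmul
        have heq3 : (ε/3)^2 * q * ((pairsF SB.1 SB.2).card : ℝ) / 6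
            = (ε^2*q/54) * ((pairsF SB.1 SB.2).card : ℝ) := by ring
        rw [heq3]
        have hn0 : (0:ℝ) ≤ (n:ℝ) := Nat.cast_nonneg n
        linarith
      calc Pr q (fun ω =>
          130*M/(ε^2*q) ≤ (SB.1.card : ℝ) ∧ (n:ℝ)/M ≤ (SB.2.card : ℝ)
            ∧ (cnt (pairsF SB.1 SB.2) ω : ℝ)
                < (1 - ε/3) * q * ((pairsF SB.1 SB.2).card : ℝ))
          ≤ Pr q (fun ω => (cnt (pairsF SB.1 SB.2) ω : ℝ)
              ≤ (1 - ε/3) * q * ((pairsF SB.1 SB.2).card : ℝ)) :=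
            Pr_mono h0.le h1.le (fun ω hh => le_of_lt hh.2.2)
      _ ≤ Real.exp (-((ε/3)^2 * q * ((pairsF SB.1 SB.2).card : ℝ) / 6)) :=
            chernoff_low h0 h1 (by positivity) (by linarith) _
      _ ≤ Real.exp (-(2*(n:ℝ))) := by
            apply Real.exp_le_exp.2; linarith
    · have hle : Pr q (fun ω =>
          130*M/(ε^2*q) ≤ (SB.1.card : ℝ) ∧ (n:ℝ)/M ≤ (SB.2.card : ℝ)
            ∧ (cnt (pairsF SB.1 SB.2) ω : ℝ)
                < (1 - ε/3) * q * ((pairsF SB.1 SB.2).card : ℝ))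
          ≤ Pr q (fun _ => False) :=
        Pr_mono h0.le h1.le (fun ω hh => absurd ⟨hh.1, hh.2.1⟩ hadm)
      rw [Pr_false] at hle
      exact le_trans hle (Real.exp_pos _).le
  have hcard : ((I.card : ℕ) : ℝ) = (2:ℝ)^n * 2^n := by
    rw [hIdef, Finset.card_univ, Fintype.card_prod, Fintype.card_finset, Fintype.card_fin]
    push_cast
    ring
  calc Pr q (fun ω => ¬ Elow n q ε M ω)
      ≤ ∑ SB ∈ I, Pr q (fun ω =>
        130*M/(ε^2*q) ≤ (SB.1.card : ℝ) ∧ (n:ℝ)/M ≤ (SB.2.card : ℝ)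
          ∧ (cnt (pairsF SB.1 SB.2) ω : ℝ)
              < (1 - ε/3) * q * ((pairsF SB.1 SB.2).card : ℝ)) := hPr1
  _ ≤ ∑ _SB ∈ I, Real.exp (-(2*(n:ℝ))) := Finset.sum_le_sum hterm
  _ = ((I.card : ℕ) : ℝ) * Real.exp (-(2*(n:ℝ))) := by
      rw [Finset.sum_const, nsmul_eq_mul]
  _ ≤ Real.exp (3*(n:ℝ)/2) * Real.exp (-(2*(n:ℝ))) := by
      rw [hcard]
      exact mul_le_mul_of_nonneg_right (pow4_le_exp n) (Real.exp_pos _).le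
  _ = Real.exp (-(n:ℝ)/2) := by
      rw [← Real.exp_add]; ring_nf

lemma Pr_not_Eup (h0 : 0 < q) (h1 : q < 1) (hε0 : 0 < ε) (hε1 : ε < 1/2)
    (hM1 : 1 ≤ (M:ℝ)) (hn8 : (8:ℝ) ≤ (n:ℝ)/M) :
    Pr q (fun ω => ¬ Eup n q ε M ω) ≤ Real.exp (-(n:ℝ)/2) := by
  classical
  set I : Finset (Finset (Fin n) × Finset (Fin n)) := Finset.univ with hIdef
  have hMpos : (0:ℝ) < M := lt_of_lt_of_le one_pos hM1
  have himp : ∀ ω, (¬ Eup n q ε M ω) → ∃ SB ∈ I,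
      (80*M/(ε^2*q) ≤ (SB.1.card : ℝ) ∧ (n:ℝ)/M ≤ (SB.2.card : ℝ)
        ∧ (1 + ε/2) * q * ((SB.1.card : ℝ) * SB.2.card)
            < (cnt (pairsF SB.1 SB.2) ω : ℝ)) := by
    intro ω h
    rw [Eup] at h
    push_neg at h
    obtain ⟨S, B, hS, hB, hlt⟩ := h
    exact ⟨(S, B), Finset.mem_univ _, hS, hB, hlt⟩
  have hPr1 : Pr q (fun ω => ¬ Eup n q ε M ω) ≤ ∑ SB ∈ I, Pr q (fun ω =>
      80*M/(ε^2*q) ≤ (SB.1.card : ℝ) ∧ (n:ℝ)/M ≤ (SB.2.card : ℝ)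
        ∧ (1 + ε/2) * q * ((SB.1.card : ℝ) * SB.2.card)
            < (cnt (pairsF SB.1 SB.2) ω : ℝ)) :=
    le_trans (Pr_mono h0.le h1.le himp) (Pr_exists_le h0.le h1.le I _)
  have hterm : ∀ SB ∈ I, Pr q (fun ω =>
      80*M/(ε^2*q) ≤ (SB.1.card : ℝ) ∧ (n:ℝ)/M ≤ (SB.2.card : ℝ)
        ∧ (1 + ε/2) * q * ((SB.1.card : ℝ) * SB.2.card)
            < (cnt (pairsF SB.1 SB.2) ω : ℝ))
      ≤ Real.exp (-(2*(n:ℝ))) := by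
    intro SB _
    by_cases hadm : 80*M/(ε^2*q) ≤ (SB.1.card : ℝ) ∧ (n:ℝ)/M ≤ (SB.2.card : ℝ)
    · obtain ⟨hS, hB⟩ := hadm
      have hB8 : (8:ℝ) ≤ (SB.2.card : ℝ) := le_trans hn8 hB
      have hKpos : (0:ℝ) < 80*M/(ε^2*q) := by positivity
      have hSpos : (0:ℝ) < (SB.1.card : ℝ) := lt_of_lt_of_le hKpos hS
      have h78 : (7/8)*(SB.2.card:ℝ) ≤ (SB.2.card:ℝ) - 1 := by linarith
      have hstep1 : (80*M/(ε^2*q)) * ((7/8)*(SB.2.card:ℝ))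
          ≤ (SB.1.card:ℝ) * ((SB.2.card:ℝ) - 1) :=
        mul_le_mul hS h78 (by positivity) hSpos.le
      have hstep2 : (SB.1.card:ℝ)*((SB.2.card:ℝ)-1) ≤ ((pairsF SB.1 SB.2).card : ℝ) := by
        linarith [pairsF_card_ge SB.1 SB.2]
      have hstep3 : (80*M/(ε^2*q)) * ((7/8)*((n:ℝ)/M))
          ≤ (80*M/(ε^2*q)) * ((7/8)*(SB.2.card:ℝ)) := by
        apply mul_le_mul_of_nonneg_left _ hKpos.le
        linarith
      have hN : (80*(M:ℝ)/(ε^2*q)) * ((7/8)*((n:ℝ)/M)) ≤ ((pairsF SB.1 SB.2).card : ℝ) :=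
        le_trans hstep3 (le_trans hstep1 hstep2)
      have heq : (80*(M:ℝ)/(ε^2*q)) * ((7/8)*((n:ℝ)/M)) = (560/8)*((n:ℝ)/(ε^2*q)) := by
        field_simp
        ring
      rw [heq] at hN
      have hexp : 2*(n:ℝ) ≤ (ε/2)^2 * q * ((pairsF SB.1 SB.2).card : ℝ) / 8 := by
        have hmul := mul_le_mul_of_nonneg_left hN (by positivity : (0:ℝ) ≤ ε^2*q/32)
        have heq2 : (ε^2*q/32) * ((560/8)*((n:ℝ)/(ε^2*q))) = (560/256)*(n:ℝ) := by
          field_simp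
          ring
        rw [heq2] at hmul
        have heq3 : (ε/2)^2 * q * ((pairsF SB.1 SB.2).card : ℝ) / 8
            = (ε^2*q/32) * ((pairsF SB.1 SB.2).card : ℝ) := by ring
        rw [heq3]
        have hn0 : (0:ℝ) ≤ (n:ℝ) := Nat.cast_nonneg n
        linarith
      have hmono : Pr q (fun ω =>
          80*M/(ε^2*q) ≤ (SB.1.card : ℝ) ∧ (n:ℝ)/M ≤ (SB.2.card : ℝ)
            ∧ (1 + ε/2) * q * ((SB.1.card : ℝ) * SB.2.card)
                < (cnt (pairsF SB.1 SB.2) ω : ℝ))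
          ≤ Pr q (fun ω => (1 + ε/2) * q * ((pairsF SB.1 SB.2).card : ℝ)
              ≤ (cnt (pairsF SB.1 SB.2) ω : ℝ)) := by
        apply Pr_mono h0.le h1.le
        intro ω hh
        have hNle : ((pairsF SB.1 SB.2).card : ℝ) ≤ (SB.1.card : ℝ) * SB.2.card := by
          exact_mod_cast pairsF_card_le SB.1 SB.2
        have h12 : (0:ℝ) ≤ (1 + ε/2) * q := by positivity
        nlinarith [hh.2.2, mul_le_mul_of_nonneg_left hNle h12]
      calc Pr q (fun ω =>
          80*M/(ε^2*q) ≤ (SB.1.card : ℝ) ∧ (n:ℝ)/M ≤ (SB.2.card : ℝ)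
            ∧ (1 + ε/2) * q * ((SB.1.card : ℝ) * SB.2.card)
                < (cnt (pairsF SB.1 SB.2) ω : ℝ)) ≤ _ := hmono
      _ ≤ Real.exp (-((ε/2)^2 * q * ((pairsF SB.1 SB.2).card : ℝ) / 8)) :=
            chernoff_up h0 h1 (by positivity) (by linarith) _
      _ ≤ Real.exp (-(2*(n:ℝ))) := by
            apply Real.exp_le_exp.2; linarith
    · have hle : Pr q (fun ω =>
          80*M/(ε^2*q) ≤ (SB.1.card : ℝ) ∧ (n:ℝ)/M ≤ (SB.2.card : ℝ)
            ∧ (1 + ε/2) * q * ((SB.1.card : ℝ) * SB.2.card)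
                < (cnt (pairsF SB.1 SB.2) ω : ℝ))
          ≤ Pr q (fun _ => False) :=
        Pr_mono h0.le h1.le (fun ω hh => absurd ⟨hh.1, hh.2.1⟩ hadm)
      rw [Pr_false] at hle
      exact le_trans hle (Real.exp_pos _).le
  have hcard : ((I.card : ℕ) : ℝ) = (2:ℝ)^n * 2^n := by
    rw [hIdef, Finset.card_univ, Fintype.card_prod, Fintype.card_finset, Fintype.card_fin]
    push_cast
    ring
  calc Pr q (fun ω => ¬ Eup n q ε M ω)
      ≤ ∑ SB ∈ I, Pr q (fun ω =>
        80*M/(ε^2*q) ≤ (SB.1.card : ℝ) ∧ (n:ℝ)/M ≤ (SB.2.card : ℝ)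
          ∧ (1 + ε/2) * q * ((SB.1.card : ℝ) * SB.2.card)
              < (cnt (pairsF SB.1 SB.2) ω : ℝ)) := hPr1
  _ ≤ ∑ _SB ∈ I, Real.exp (-(2*(n:ℝ))) := Finset.sum_le_sum hterm
  _ = ((I.card : ℕ) : ℝ) * Real.exp (-(2*(n:ℝ))) := by
      rw [Finset.sum_const, nsmul_eq_mul]
  _ ≤ Real.exp (3*(n:ℝ)/2) * Real.exp (-(2*(n:ℝ))) := by
      rw [hcard]
      exact mul_le_mul_of_nonneg_right (pow4_le_exp n) (Real.exp_pos _).le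
  _ = Real.exp (-(n:ℝ)/2) := by
      rw [← Real.exp_add]; ring_nf

lemma Pr_not_Eedge (h0 : 0 < q) (h1 : q < 1)
    (hn3 : 3 ≤ n) (hn4 : 100*Real.log n ≤ q*n) :
    Pr q (fun ω => ¬ Eedge n q ω) ≤ Real.exp (-(n:ℝ)/2) := by
  classical
  have hlog1 : (1:ℝ) ≤ Real.log n := by
    have h3 : Real.exp 1 ≤ 3 := by
      have := Real.exp_one_lt_d9
      linarith
    have hl3 : (1:ℝ) ≤ Real.log 3 := (Real.le_log_iff_exp_le (by norm_num)).2 h3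
    have hmono : Real.log 3 ≤ Real.log n :=
      Real.log_le_log (by norm_num) (by exact_mod_cast hn3)
    linarith
  have hoffcard : ((Finset.univ : Finset (Fin n)).offDiag.card : ℝ)
      = (n:ℝ)*(n:ℝ) - n := by
    rw [Finset.offDiag_card, Finset.card_fin]
    have h1 : n ≤ n * n := Nat.le_mul_of_pos_left n (by omega)
    rw [Nat.cast_sub h1]
    push_cast
    ring
  have hmono : Pr q (fun ω => ¬ Eedge n q ω)
      ≤ Pr q (fun ω => (1 + 1) * q * (((Finset.univ : Finset (Fin n)).offDiag.card) : ℝ)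
          ≤ (cnt ((Finset.univ : Finset (Fin n)).offDiag) ω : ℝ)) := by
    apply Pr_mono h0.le h1.le
    intro ω hh
    rw [Eedge] at hh
    push_neg at hh
    linarith
  have hch := chernoff_up (n := n) h0 h1 (δ := 1) one_pos le_rfl (Finset.univ : Finset (Fin n)).offDiag
  have hexp : (n:ℝ)/2 ≤ 1^2 * q * (((Finset.univ : Finset (Fin n)).offDiag.card) : ℝ) / 8 := by
    rw [hoffcard]
    have hn1 : (1:ℝ) ≤ (n:ℝ) := by
      have : (3:ℝ) ≤ (n:ℝ) := by exact_mod_cast hn3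
      linarith
    have hq1 : 100 ≤ q*n := by nlinarith [hn4, hlog1]
    have h2 : q*((n:ℝ)*(n:ℝ) - n) = (q*n)*((n:ℝ)-1) := by ring
    have h3 : (100:ℝ)*((n:ℝ)-1) ≤ (q*n)*((n:ℝ)-1) :=
      mul_le_mul_of_nonneg_right hq1 (by linarith)
    nlinarith [h3]
  calc Pr q (fun ω => ¬ Eedge n q ω)
      ≤ Pr q (fun ω => (1 + 1) * q * (((Finset.univ : Finset (Fin n)).offDiag.card) : ℝ)
          ≤ (cnt ((Finset.univ : Finset (Fin n)).offDiag) ω : ℝ)) := hmono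
  _ ≤ Real.exp (-(1^2 * q * (((Finset.univ : Finset (Fin n)).offDiag.card) : ℝ) / 8)) := hch
  _ ≤ Real.exp (-(n:ℝ)/2) := by
      apply Real.exp_le_exp.2
      linarith

lemma sum_pow_subsets (s : Finset (Fin n)) (x : ℝ) :
    ∑ b ∈ s.powerset, x ^ b.card = (1 + x)^s.card := by
  have h := Finset.prod_add (fun _ : Fin n => x) (fun _ => (1:ℝ)) s
  rw [Finset.prod_const] at h
  have h2 : ∀ t ∈ s.powerset, (∏ _i ∈ t, x) * (∏ _i ∈ s \ t, (1:ℝ)) = x ^ t.card := by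
    intro t _
    rw [Finset.prod_const, Finset.prod_const_one, mul_one]
  rw [Finset.sum_congr rfl h2] at h
  rw [add_comm (1:ℝ) x]
  exact h.symm

lemma sum_pow_union_card (x : ℝ) (hx : 0 ≤ x) :
    ∑ S : Finset (Fin n), ∑ T : Finset (Fin n), x ^ ((S ∪ T).card)
      ≤ Real.exp (3*x*n) := by
  have hcard : ∀ S T : Finset (Fin n), (S ∪ T).card = S.card + (T \ S).card := by
    intro S T
    rw [← Finset.union_sdiff_self_eq_union (s := S) (t := T)]
    exact Finset.card_union_of_disjoint Finset.disjoint_sdiff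
  have hre : ∀ S : Finset (Fin n), ∑ T : Finset (Fin n), x^((T \ S).card)
      = (2:ℝ)^S.card * (1+x)^((Finset.univ \ S).card) := by
    intro S
    have hbij : ∑ T : Finset (Fin n), x^((T \ S).card)
        = ∑ ab ∈ S.powerset ×ˢ (Finset.univ \ S).powerset, x^(ab.2.card) := by
      apply Finset.sum_nbij' (i := fun T => (T ∩ S, T \ S))
        (j := fun ab => ab.1 ∪ ab.2)
      · intro T _
        refine Finset.mem_product.2 ⟨Finset.mem_powerset.2 Finset.inter_subset_right, ?_⟩
        exact Finset.mem_powerset.2 (Finset.sdiff_subset_sdiff (Finset.subset_univ T) le_rfl)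
      · intro ab _
        exact Finset.mem_univ _
      · intro T _
        ext z
        simp only [Finset.mem_union, Finset.mem_inter, Finset.mem_sdiff]
        tauto
      · intro ab hab
        obtain ⟨ha, hb⟩ := Finset.mem_product.1 hab
        rw [Finset.mem_powerset] at ha hb
        have hbS : ∀ z ∈ ab.2, z ∉ S := fun z hz => (Finset.mem_sdiff.1 (hb hz)).2
        have h1 : (ab.1 ∪ ab.2) ∩ S = ab.1 := by
          ext z
          simp only [Finset.mem_inter, Finset.mem_union]
          constructor
          · rintro ⟨hz | hz, hzS⟩
            · exact hz
            · exact absurd hzS (hbS z hz)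
          · intro hz
            exact ⟨Or.inl hz, ha hz⟩
        have h2 : (ab.1 ∪ ab.2) \ S = ab.2 := by
          ext z
          simp only [Finset.mem_sdiff, Finset.mem_union]
          constructor
          · rintro ⟨hz | hz, hzS⟩
            · exact absurd (ha hz) hzS
            · exact hz
          · intro hz
            exact ⟨Or.inr hz, hbS z hz⟩
        rw [Prod.ext_iff]
        exact ⟨h1, h2⟩
      · intro T _
        rfl
    rw [hbij, Finset.sum_product]
    have hin : ∀ a ∈ S.powerset, ∑ b ∈ (Finset.univ \ S).powerset, x^(b.card)
        = (1+x)^((Finset.univ \ S).card) := fun a _ => sum_pow_subsets _ x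
    rw [Finset.sum_congr rfl hin, Finset.sum_const, nsmul_eq_mul, Finset.card_powerset]
    push_cast
    ring
  have houter : ∑ S : Finset (Fin n), ∑ T : Finset (Fin n), x ^ ((S ∪ T).card)
      = ∑ S : Finset (Fin n), (2*x)^S.card * (1+x)^((Finset.univ \ S).card) := by
    apply Finset.sum_congr rfl
    intro S _
    have : ∑ T : Finset (Fin n), x ^ ((S ∪ T).card)
        = x^S.card * ∑ T : Finset (Fin n), x^((T \ S).card) := by
      rw [Finset.mul_sum]
      apply Finset.sum_congr rfl
      intro T _
      rw [hcard S T, pow_add]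
    rw [this, hre S, mul_pow]
    ring
  have hbinom : ∑ S : Finset (Fin n), (2*x)^S.card * (1+x)^((Finset.univ \ S).card)
      = (2*x + (1+x))^(n:ℕ) := by
    have h := Finset.prod_add (fun _ : Fin n => 2*x) (fun _ => (1+x)) Finset.univ
    rw [Finset.prod_const, Finset.card_fin] at h
    rw [h, Finset.powerset_univ]
    apply Finset.sum_congr rfl
    intro t _
    rw [Finset.prod_const, Finset.prod_const]
  rw [houter, hbinom]
  have h3x : (0:ℝ) ≤ 1 + 3*x := by linarith
  have h1 : 2*x + (1+x) = 1 + 3*x := by ring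
  rw [h1]
  calc (1 + 3*x)^(n:ℕ) ≤ (Real.exp (3*x))^(n:ℕ) := by
        apply pow_le_pow_left₀ h3x
        have := Real.add_one_le_exp (3*x)
        linarith
  _ = Real.exp (3*x*n) := by
      rw [← Real.exp_nat_mul]
      ring_nf

lemma exp_1417 : (50:ℝ)/13 ≤ Real.exp (1417/1000) := by
  have h := exp_ge_pow16 (x := 1417/1000) (by norm_num)
  have h2 : (50:ℝ)/13 ≤ (1 + (1417/1000)/16)^(16:ℕ) := by norm_num
  linarith

lemma Pr_not_Ecodeg (h0 : 0 < q) (h1 : q < 1) (hε0 : 0 < ε) (hε1 : ε < 1/2)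
    (hM1 : 1 ≤ (M:ℝ)) (hn2 : 16*M/ε ≤ q*n) (hq2 : 500*M/ε^2 ≤ q^2*n) :
    Pr q (fun ω => ¬ Ecodeg n q ε M ω) ≤ (n:ℝ) * Real.exp (-(q*n)/2) := by
  classical
  have hMpos : (0:ℝ) < M := lt_of_lt_of_le one_pos hM1
  set s₂ : ℝ := 550*M/(ε^2*q) with hs₂def
  set t₀ : ℝ := q*n/(2*M) with ht₀def
  set c₀ : ℝ := 7*ε^2*q/432 with hc₀def
  set c₁ : ℝ := (7/20)*c₀*(min s₂ t₀) with hc₁def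
  set A : ℝ := (3/10)*c₀*(s₂*t₀) with hAdef
  have hs₂pos : (0:ℝ) < s₂ := by rw [hs₂def]; positivity
  have h16 : (16:ℝ)*M ≤ q*n*ε := by
    rw [div_le_iff₀ hε0] at hn2; linarith
  have hqn : (0:ℝ) < q*n := by nlinarith
  have ht₀pos : (0:ℝ) < t₀ := by rw [ht₀def]; positivity
  have hc₀pos : (0:ℝ) < c₀ := by rw [hc₀def]; positivity
  have hc₁pos : (0:ℝ) < c₁ := by
    rw [hc₁def]
    have := lt_min hs₂pos ht₀pos
    positivity
  have hc₁ge : (1417:ℝ)/1000 ≤ c₁ := by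
    rcases le_total s₂ t₀ with hmin | hmin
    · rw [hc₁def, min_eq_left hmin, hs₂def, hc₀def]
      have heq : (7:ℝ)/20*(7*ε^2*q/432)*(550*M/(ε^2*q)) = (26950/8640)*M := by
        field_simp
        ring
      rw [heq]
      nlinarith
    · rw [hc₁def, min_eq_right hmin, ht₀def, hc₀def]
      have heq : (7:ℝ)/20*(7*ε^2*q/432)*(q*n/(2*M)) = (49/17280)*(ε^2*(q^2*n)/M) := by
        field_simp
        ring
      rw [heq]
      have hM500 : (500:ℝ)*M ≤ ε^2*(q^2*n) := by
        rw [div_le_iff₀ (by positivity : (0:ℝ) < ε^2)] at hq2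
        nlinarith
      have h500 : (500:ℝ) ≤ ε^2*(q^2*n)/M := by
        rw [le_div_iff₀ hMpos]
        nlinarith
      nlinarith
  have hxe : Real.exp (-c₁) ≤ 13/50 := by
    rw [Real.exp_neg]
    have h2 : Real.exp (1417/1000) ≤ Real.exp c₁ := Real.exp_le_exp.2 hc₁ge
    have h3 : (50:ℝ)/13 ≤ Real.exp c₁ := le_trans exp_1417 h2
    have h4 := inv_anti₀ (by norm_num : (0:ℝ) < 50/13) h3
    norm_num at h4
    linarith
  have ht₀8 : (8:ℝ) ≤ t₀ := by
    have hεt : (8:ℝ) ≤ ε*t₀ := by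
      rw [ht₀def]
      rw [show ε*(q*(n:ℝ)/(2*M)) = (q*(n:ℝ)*ε)/(2*M) from by ring]
      rw [le_div_iff₀ (by positivity : (0:ℝ) < 2*M)]
      linarith
    nlinarith [ht₀pos]
  set x : ℝ := q * Real.exp (-c₁) with hxdef
  have hx0 : (0:ℝ) ≤ x := by rw [hxdef]; positivity
  -- the per-index events
  have himp : ∀ ω, (¬ Ecodeg n q ε M ω) →
      ∃ i ∈ (Finset.univ : Finset (Fin n × Finset (Fin n) × Finset (Fin n))),
        ((i.1 ∉ i.2.1 ∧ i.1 ∉ i.2.2 ∧ s₂ ≤ (i.2.1.card : ℝ) ∧ t₀ ≤ (i.2.2.card : ℝ)) ∧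
          ((∀ e ∈ (i.2.1 ∪ i.2.2).image (fun y => s(i.1, y)), ω e = true) ∧
            (cnt (pairsF i.2.1 i.2.2) ω : ℝ)
              < (1 - ε/3) * q * ((pairsF i.2.1 i.2.2).card : ℝ))) := by
    intro ω h
    rw [Ecodeg] at h
    push_neg at h
    obtain ⟨u, S, T, h1', h2', h3', h4', h5', h6'⟩ := h
    refine ⟨(u, S, T), Finset.mem_univ _, ⟨h1', h2', h3', h4'⟩, ?_, h6'⟩
    intro e he
    obtain ⟨y, hy, rfl⟩ := Finset.mem_image.1 he
    exact h5' y hy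
  have hterm : ∀ i : Fin n × Finset (Fin n) × Finset (Fin n),
      Pr q (fun ω =>
        ((i.1 ∉ i.2.1 ∧ i.1 ∉ i.2.2 ∧ s₂ ≤ (i.2.1.card : ℝ) ∧ t₀ ≤ (i.2.2.card : ℝ)) ∧
          ((∀ e ∈ (i.2.1 ∪ i.2.2).image (fun y => s(i.1, y)), ω e = true) ∧
            (cnt (pairsF i.2.1 i.2.2) ω : ℝ)
              < (1 - ε/3) * q * ((pairsF i.2.1 i.2.2).card : ℝ))))
      ≤ Real.exp (-A) * x ^ ((i.2.1 ∪ i.2.2).card) := by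
    rintro ⟨u, S, T⟩
    by_cases hadm : u ∉ S ∧ u ∉ T ∧ s₂ ≤ (S.card : ℝ) ∧ t₀ ≤ (T.card : ℝ)
    · obtain ⟨huS, huT, hS, hT⟩ := hadm
      have hstep1 : Pr q (fun ω =>
          ((u ∉ S ∧ u ∉ T ∧ s₂ ≤ (S.card : ℝ) ∧ t₀ ≤ (T.card : ℝ)) ∧
            ((∀ e ∈ (S ∪ T).image (fun y => s(u, y)), ω e = true) ∧
              (cnt (pairsF S T) ω : ℝ)
                < (1 - ε/3) * q * ((pairsF S T).card : ℝ))))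
          ≤ Pr q (fun ω =>
            (∀ e ∈ (S ∪ T).image (fun y => s(u, y)), ω e = true) ∧
              (cnt (pairsF S T) ω : ℝ)
                < (1 - ε/3) * q * ((pairsF S T).card : ℝ)) :=
        Pr_mono h0.le h1.le (fun ω hh => hh.2)
      have hQind : ∀ ω ω' : Sym2 (Fin n) → Bool,
          (∀ e ∉ (S ∪ T).image (fun y => s(u, y)), ω e = ω' e) →
          (((cnt (pairsF S T) ω : ℝ) < (1 - ε/3) * q * ((pairsF S T).card : ℝ))
            ↔ ((cnt (pairsF S T) ω' : ℝ) < (1 - ε/3) * q * ((pairsF S T).card : ℝ))) := by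
        intro ω ω' hagree
        have hcnt_eq : cnt (pairsF S T) ω = cnt (pairsF S T) ω' := by
          rw [cnt, cnt]
          congr 1
          apply Finset.filter_congr
          intro vw hvw
          have hvw2 := Finset.mem_filter.1 hvw
          have hvwS : vw.1 ∈ S := (Finset.mem_product.1 hvw2.1).1
          have hvwT : vw.2 ∈ T := (Finset.mem_product.1 hvw2.1).2
          have hnot : s(vw.1, vw.2) ∉ (S ∪ T).image (fun y => s(u, y)) := by
            intro hmem
            obtain ⟨y, _, heq⟩ := Finset.mem_image.1 hmem
            rcases Sym2.eq_iff.1 heq with ⟨hu1, _⟩ | ⟨hu2, _⟩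
            · exact huS (hu1 ▸ hvwS)
            · exact huT (hu2 ▸ hvwT)
          rw [hagree _ hnot]
        rw [hcnt_eq]
      have hstep2 := Pr_coord_and q ((S ∪ T).image (fun y => s(u, y)))
        (fun ω => (cnt (pairsF S T) ω : ℝ)
          < (1 - ε/3) * q * ((pairsF S T).card : ℝ)) hQind
      have hinj : Function.Injective (fun y : Fin n => s(u, y)) := by
        intro y z h
        rcases Sym2.eq_iff.1 h with ⟨_, h2⟩ | ⟨h1', h2'⟩
        · exact h2
        · rw [← h1', h2']
      have hcard : ((S ∪ T).image (fun y => s(u, y))).card = (S ∪ T).card :=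
        Finset.card_image_of_injective _ hinj
      have hbadch : Pr q (fun ω => (cnt (pairsF S T) ω : ℝ)
          < (1 - ε/3) * q * ((pairsF S T).card : ℝ))
          ≤ Real.exp (-((ε/3)^2 * q * ((pairsF S T).card : ℝ) / 6)) := by
        refine le_trans (Pr_mono h0.le h1.le (fun ω hh => le_of_lt hh)) ?_
        exact chernoff_low h0 h1 (by positivity) (by linarith) _
      -- exponent bound
      have hSpos : (0:ℝ) < (S.card : ℝ) := lt_of_lt_of_le hs₂pos hS
      have hTpos : (0:ℝ) < (T.card : ℝ) := lt_of_lt_of_le ht₀pos hT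
      have hT8 : (8:ℝ) ≤ (T.card : ℝ) := le_trans ht₀8 hT
      have hN78 : (7/8)*((S.card:ℝ)*(T.card:ℝ)) ≤ ((pairsF S T).card : ℝ) := by
        have hpge := pairsF_card_ge S T
        nlinarith
      have hsplit : A + c₁*(((S ∪ T).card : ℕ) : ℝ) ≤ c₀*((S.card:ℝ)*(T.card:ℝ)) := by
        have hu' : (((S ∪ T).card : ℕ) : ℝ) ≤ (S.card : ℝ) + (T.card : ℝ) := by
          exact_mod_cast Finset.card_union_le S T
        have ha : (3/10)*c₀*(s₂*t₀) ≤ (3/10)*c₀*((S.card:ℝ)*(T.card:ℝ)) := by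
          apply mul_le_mul_of_nonneg_left _ (by positivity)
          exact mul_le_mul hS hT ht₀pos.le hSpos.le
        have hbb : c₁ ≤ (7/20)*c₀*(T.card:ℝ) := by
          rw [hc₁def]
          apply mul_le_mul_of_nonneg_left (le_trans (min_le_right _ _) hT) (by positivity)
        have hcc : c₁ ≤ (7/20)*c₀*(S.card:ℝ) := by
          rw [hc₁def]
          apply mul_le_mul_of_nonneg_left (le_trans (min_le_left _ _) hS) (by positivity)
        have hb2 := mul_le_mul_of_nonneg_right hbb hSpos.le
        have hc2 := mul_le_mul_of_nonneg_right hcc hTpos.le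
        have hu2 := mul_le_mul_of_nonneg_left hu' hc₁pos.le
        rw [hAdef]
        nlinarith [ha, hb2, hc2, hu2]
      have hexpmono : Real.exp (-((ε/3)^2 * q * ((pairsF S T).card : ℝ) / 6))
          ≤ Real.exp (-(A + c₁*(((S ∪ T).card : ℕ) : ℝ))) := by
        apply Real.exp_le_exp.2
        have heq54 : (ε/3)^2 * q * ((pairsF S T).card : ℝ) / 6
            = (ε^2*q/54) * ((pairsF S T).card : ℝ) := by ring
        have hc₀N : c₀*((S.card:ℝ)*(T.card:ℝ)) ≤ (ε^2*q/54) * ((pairsF S T).card : ℝ) := by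
          have := mul_le_mul_of_nonneg_left hN78 (by positivity : (0:ℝ) ≤ ε^2*q/54)
          rw [hc₀def]
          nlinarith [this]
        rw [heq54]
        linarith [hsplit, hc₀N]
      have hqpow : (0:ℝ) ≤ q ^ ((S ∪ T).card) := by positivity
      have hfinal : q ^ ((S ∪ T).card) * Real.exp (-(A + c₁*(((S ∪ T).card : ℕ) : ℝ)))
          = Real.exp (-A) * x ^ ((S ∪ T).card) := by
        have hxpow : x ^ ((S ∪ T).card)
            = q ^ ((S ∪ T).card) * Real.exp ((((S ∪ T).card : ℕ) : ℝ) * (-c₁)) := by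
          rw [hxdef, mul_pow, Real.exp_nat_mul]
        rw [hxpow]
        rw [show -(A + c₁*(((S ∪ T).card : ℕ) : ℝ))
          = -A + (((S ∪ T).card : ℕ) : ℝ) * (-c₁) from by ring]
        rw [Real.exp_add]
        ring
      calc Pr q (fun ω =>
          ((u ∉ S ∧ u ∉ T ∧ s₂ ≤ (S.card : ℝ) ∧ t₀ ≤ (T.card : ℝ)) ∧
            ((∀ e ∈ (S ∪ T).image (fun y => s(u, y)), ω e = true) ∧
              (cnt (pairsF S T) ω : ℝ)
                < (1 - ε/3) * q * ((pairsF S T).card : ℝ))))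
          ≤ Pr q (fun ω =>
            (∀ e ∈ (S ∪ T).image (fun y => s(u, y)), ω e = true) ∧
              (cnt (pairsF S T) ω : ℝ)
                < (1 - ε/3) * q * ((pairsF S T).card : ℝ)) := hstep1
      _ = q ^ (((S ∪ T).image (fun y => s(u, y))).card)
            * Pr q (fun ω => (cnt (pairsF S T) ω : ℝ)
              < (1 - ε/3) * q * ((pairsF S T).card : ℝ)) := hstep2
      _ ≤ q ^ ((S ∪ T).card)
            * Real.exp (-((ε/3)^2 * q * ((pairsF S T).card : ℝ) / 6)) := by
          rw [hcard]
          exact mul_le_mul_of_nonneg_left hbadch hqpow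
      _ ≤ q ^ ((S ∪ T).card)
            * Real.exp (-(A + c₁*(((S ∪ T).card : ℕ) : ℝ))) :=
          mul_le_mul_of_nonneg_left hexpmono hqpow
      _ = Real.exp (-A) * x ^ ((S ∪ T).card) := hfinal
    · have hle : Pr q (fun ω =>
          ((u ∉ S ∧ u ∉ T ∧ s₂ ≤ (S.card : ℝ) ∧ t₀ ≤ (T.card : ℝ)) ∧
            ((∀ e ∈ (S ∪ T).image (fun y => s(u, y)), ω e = true) ∧
              (cnt (pairsF S T) ω : ℝ)
                < (1 - ε/3) * q * ((pairsF S T).card : ℝ))))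
          ≤ Pr q (fun _ => False) :=
        Pr_mono h0.le h1.le (fun ω hh => absurd hh.1 hadm)
      rw [Pr_false] at hle
      refine le_trans hle ?_
      positivity
  -- sum everything
  have hsum1 : Pr q (fun ω => ¬ Ecodeg n q ε M ω)
      ≤ ∑ i : Fin n × Finset (Fin n) × Finset (Fin n),
        Real.exp (-A) * x ^ ((i.2.1 ∪ i.2.2).card) := by
    refine le_trans (Pr_mono h0.le h1.le himp) ?_
    refine le_trans (Pr_exists_le h0.le h1.le Finset.univ _) ?_
    exact Finset.sum_le_sum (fun i _ => hterm i)
  have hsum2 : ∑ i : Fin n × Finset (Fin n) × Finset (Fin n),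
      Real.exp (-A) * x ^ ((i.2.1 ∪ i.2.2).card)
      ≤ (n:ℝ) * (Real.exp (-A) * Real.exp (3*x*n)) := by
    rw [Fintype.sum_prod_type]
    have hin : ∀ u : Fin n, ∑ ST : Finset (Fin n) × Finset (Fin n),
        Real.exp (-A) * x ^ ((ST.1 ∪ ST.2).card)
        ≤ Real.exp (-A) * Real.exp (3*x*n) := by
      intro u
      rw [Fintype.sum_prod_type]
      have h5 : ∑ S : Finset (Fin n), ∑ T : Finset (Fin n),
          Real.exp (-A) * x ^ ((S ∪ T).card)
          = Real.exp (-A) * ∑ S : Finset (Fin n), ∑ T : Finset (Fin n),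
            x ^ ((S ∪ T).card) := by
        rw [Finset.mul_sum]
        apply Finset.sum_congr rfl
        intro S _
        rw [Finset.mul_sum]
      rw [h5]
      exact mul_le_mul_of_nonneg_left (sum_pow_union_card x hx0) (Real.exp_pos _).le
    calc ∑ u : Fin n, ∑ ST : Finset (Fin n) × Finset (Fin n),
          Real.exp (-A) * x ^ ((ST.1 ∪ ST.2).card)
        ≤ ∑ _u : Fin n, Real.exp (-A) * Real.exp (3*x*n) :=
          Finset.sum_le_sum (fun u _ => hin u)
    _ = (n:ℝ) * (Real.exp (-A) * Real.exp (3*x*n)) := by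
        rw [Finset.sum_const, nsmul_eq_mul, Finset.card_fin]
  have hfinexp : Real.exp (-A) * Real.exp (3*x*n) ≤ Real.exp (-(q*n)/2) := by
    rw [← Real.exp_add]
    apply Real.exp_le_exp.2
    have hAval : A = (11550/8640)*(q*(n:ℝ)) := by
      rw [hAdef, hc₀def, hs₂def, ht₀def]
      field_simp
      ring
    have hx3 : 3*x*(n:ℝ) ≤ (39/50)*(q*(n:ℝ)) := by
      rw [hxdef]
      have h3n : (0:ℝ) ≤ 3*(n:ℝ) := by positivity
      nlinarith [mul_le_mul_of_nonneg_left hxe h0.le, Nat.cast_nonneg (α := ℝ) n]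
    rw [hAval]
    nlinarith [hqn.le]
  calc Pr q (fun ω => ¬ Ecodeg n q ε M ω)
      ≤ ∑ i : Fin n × Finset (Fin n) × Finset (Fin n),
        Real.exp (-A) * x ^ ((i.2.1 ∪ i.2.2).card) := hsum1
  _ ≤ (n:ℝ) * (Real.exp (-A) * Real.exp (3*x*n)) := hsum2
  _ ≤ (n:ℝ) * Real.exp (-(q*n)/2) :=
      mul_le_mul_of_nonneg_left hfinexp (Nat.cast_nonneg n)

end Events

section Bridge
variable {n : ℕ} {q : ℝ}

lemma singleton_eq_pi (ω : Sym2 (Fin n) → Bool) :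
    ({ω} : Set (Sym2 (Fin n) → Bool)) = Set.pi Set.univ (fun e => {ω e}) := by
  ext ω'
  simp only [Set.mem_singleton_iff, Set.mem_pi, Set.mem_univ, forall_true_left,
    true_implies]
  constructor
  · intro h e; rw [h]
  · intro h; funext e; exact h e

lemma msSingleton (ω : Sym2 (Fin n) → Bool) :
    MeasurableSet ({ω} : Set (Sym2 (Fin n) → Bool)) := by
  rw [singleton_eq_pi]
  exact MeasurableSet.univ_pi (fun e => measurableSet_singleton _)

lemma ofReal_prod {ι : Type*} (s : Finset ι) (f : ι → ℝ) (h : ∀ i ∈ s, 0 ≤ f i) :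
    ENNReal.ofReal (∏ i ∈ s, f i) = ∏ i ∈ s, ENNReal.ofReal (f i) := by
  classical
  induction s using Finset.cons_induction with
  | empty => simp
  | cons a s ha ih =>
    rw [Finset.prod_cons, Finset.prod_cons,
      ENNReal.ofReal_mul (h a (Finset.mem_cons_self a s)),
      ih (fun i hi => h i (Finset.mem_cons_of_mem hi))]

lemma gnp_singleton (hq0 : 0 ≤ q) (hq1 : q ≤ 1) (ω : Sym2 (Fin n) → Bool) :
    gnp n q {ω} = ENNReal.ofReal (prW q ω) := by
  rw [gnp, singleton_eq_pi, MeasureTheory.Measure.pi_pi]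
  have hmin : min (Real.toNNReal q) 1 = Real.toNNReal q := by
    apply min_eq_left
    rw [show (1:NNReal) = Real.toNNReal 1 from by simp]
    exact Real.toNNReal_le_toNNReal hq1
  have hbe : ∀ e : Sym2 (Fin n),
      ((PMF.bernoulli (min (Real.toNNReal q) 1) (min_le_right _ _)).toMeasure) {ω e}
        = ENNReal.ofReal (wt q (ω e)) := by
    intro e
    rw [PMF.toMeasure_apply_singleton _ _ (measurableSet_singleton _),
      PMF.bernoulli_apply, hmin]
    cases hb : ω e
    · rw [cond_false]
      change (1 : ENNReal) - ENNReal.ofReal q = _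
      simp only [wt, Bool.false_eq_true, if_false]
      rw [ENNReal.ofReal_sub 1 hq0, ENNReal.ofReal_one]
    · rw [cond_true]
      simp [wt]
      rfl
  rw [Finset.prod_congr rfl (fun e _ => hbe e), prW,
    ofReal_prod Finset.univ (fun e => wt q (ω e)) (fun e _ => wt_nonneg hq0 hq1 (ω e))]

lemma gnp_eq_Pr (hq0 : 0 ≤ q) (hq1 : q ≤ 1) (Sset : Set (Sym2 (Fin n) → Bool)) :
    gnp n q Sset = ENNReal.ofReal (Pr q (fun ω => ω ∈ Sset)) := by
  classical
  have hfin : Sset.Finite := Set.toFinite Sset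
  have hdecomp : Sset = ⋃ ω ∈ hfin.toFinset, ({ω} : Set (Sym2 (Fin n) → Bool)) := by
    ext ω'
    constructor
    · intro h
      exact Set.mem_iUnion₂.2 ⟨ω', (Set.Finite.mem_toFinset hfin).2 h, rfl⟩
    · intro h
      obtain ⟨ω'', hω'', hmem⟩ := Set.mem_iUnion₂.1 h
      rw [Set.mem_singleton_iff] at hmem
      subst hmem
      exact (Set.Finite.mem_toFinset hfin).1 hω''
  have hmeas : gnp n q Sset = ∑ ω ∈ hfin.toFinset, gnp n q {ω} := by
    conv_lhs => rw [hdecomp]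
    exact measure_biUnion_finset
      (by intro a _ b _ hab; exact Set.disjoint_singleton.2 hab)
      (fun ω _ => msSingleton ω)
  have hpt : ∀ ω : Sym2 (Fin n) → Bool,
      prW q ω * (if ω ∈ Sset then (1:ℝ) else 0)
        = if ω ∈ hfin.toFinset then prW q ω else 0 := by
    intro ω
    by_cases h : ω ∈ Sset
    · rw [if_pos h, if_pos ((Set.Finite.mem_toFinset hfin).2 h), mul_one]
    · rw [if_neg h, if_neg (fun hc => h ((Set.Finite.mem_toFinset hfin).1 hc)), mul_zero]
  have hPr : Pr q (fun ω => ω ∈ Sset) = ∑ ω ∈ hfin.toFinset, prW q ω := by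
    rw [Pr, Ex]
    calc ∑ ω : Sym2 (Fin n) → Bool, prW q ω * (if ω ∈ Sset then (1:ℝ) else 0)
        = ∑ ω : Sym2 (Fin n) → Bool, (if ω ∈ hfin.toFinset then prW q ω else 0) :=
          Finset.sum_congr rfl (fun ω _ => hpt ω)
    _ = ∑ ω ∈ Finset.univ ∩ hfin.toFinset, prW q ω := Finset.sum_ite_mem _ _ _
    _ = ∑ ω ∈ hfin.toFinset, prW q ω := by rw [Finset.univ_inter]
  rw [hmeas, Finset.sum_congr rfl (fun ω _ => gnp_singleton hq0 hq1 ω),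
    ← ENNReal.ofReal_sum_of_nonneg (fun ω _ => prW_nonneg hq0 hq1 ω), hPr]

end Bridge

def GoodSet (n : ℕ) (q ε : ℝ) (M : ℕ) : Set (Sym2 (Fin n) → Bool) :=
  {ω |
    let G := graphOfFlip ω
    ∀ A B : Set (Fin n), (n : ℝ) / M ≤ (A.ncard : ℝ) → (n : ℝ) / M ≤ (B.ncard : ℝ) →
      ((Set.ncard {e : Sym2 (Fin n) | e ∈ G.edgeSet ∧ ∃ u v : Fin n, e = s(u, v) ∧
        ¬ (((1 - ε) * q * A.ncard ≤ (degIn G u A : ℝ) ∧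
              (degIn G u A : ℝ) ≤ (1 + ε) * q * A.ncard) ∧
            ((1 - ε) * q * A.ncard ≤ (degIn G v A : ℝ) ∧
              (degIn G v A : ℝ) ≤ (1 + ε) * q * A.ncard) ∧
            ((1 - ε) * q * B.ncard ≤ (degIn G u B : ℝ) ∧
              (degIn G u B : ℝ) ≤ (1 + ε) * q * B.ncard) ∧
            ((1 - ε) * q * B.ncard ≤ (degIn G v B : ℝ) ∧
              (degIn G v B : ℝ) ≤ (1 + ε) * q * B.ncard) ∧
            (1 - ε) * q ^ 2 * B.ncard
              ≤ ((G.neighborSet u ∩ G.neighborSet v ∩ B).ncard : ℝ))}) : ℝ)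
        ≤ 10 ^ 3 * M * (ε⁻¹) ^ 2 * q⁻¹ * n}

lemma log_ge_one {n : ℕ} (hn3 : 3 ≤ n) : 1 ≤ Real.log n := by
  have h3 : Real.exp 1 ≤ 3 := by
    have := Real.exp_one_lt_d9
    linarith
  have hl3 : (1:ℝ) ≤ Real.log 3 := (Real.le_log_iff_exp_le (by norm_num)).2 h3
  have hmono : Real.log 3 ≤ Real.log n :=
    Real.log_le_log (by norm_num) (by exact_mod_cast hn3)
  linarith

lemma main_bound {n : ℕ} {q ε : ℝ} {M : ℕ}
    (hq0 : 0 < q) (hq1 : q < 1) (hε0 : 0 < ε) (hε1 : ε < 1/2) (hM1 : 1 ≤ (M:ℝ))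
    (hn3 : 3 ≤ n) (hn1 : (8:ℝ)/ε ≤ (n:ℝ)/M) (hn2 : 16*M/ε ≤ q*n)
    (hn4 : 100*Real.log n ≤ q*n) :
    1 - (3*Real.exp (-(n:ℝ)/2) + 1/(n:ℝ))
      ≤ Pr q (fun ω => ω ∈ GoodSet n q ε M) := by
  classical
  have hn0 : (0:ℝ) < n := by
    have : (3:ℝ) ≤ (n:ℝ) := by exact_mod_cast hn3
    linarith
  have hexp0 : (0:ℝ) ≤ Real.exp (-(n:ℝ)/2) := (Real.exp_pos _).le
  have hninv : (0:ℝ) ≤ 1/(n:ℝ) := by positivity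
  have hlog1 := log_ge_one hn3
  rcases le_or_gt (q^2*(n:ℝ)) (500*M/ε^2) with hsmall | hbig
  · have himp : ∀ ω, Eedge n q ω → ω ∈ GoodSet n q ε M := by
      intro ω hE
      exact fun A B hA hB => det_small hq0 hε0 hM1 hsmall ω hE A B
    have h1 : Pr q (fun ω => Eedge n q ω) ≤ Pr q (fun ω => ω ∈ GoodSet n q ε M) :=
      Pr_mono hq0.le hq1.le himp
    have h2 := Pr_add_compl (q := q) (fun ω => Eedge n q ω)
    have h3 := Pr_not_Eedge hq0 hq1 hn3 hn4
    linarith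
  · have himp : ∀ ω, (Elow n q ε M ω ∧ Eup n q ε M ω ∧ Ecodeg n q ε M ω)
        → ω ∈ GoodSet n q ε M := by
      intro ω h
      exact fun A B hA hB =>
        det_large hq0 hq1 hε0 hε1 hM1 hn1 hn2 ω h.1 h.2.1 h.2.2 A B hA hB
    have h1 : Pr q (fun ω => Elow n q ε M ω ∧ Eup n q ε M ω ∧ Ecodeg n q ε M ω)
        ≤ Pr q (fun ω => ω ∈ GoodSet n q ε M) :=
      Pr_mono hq0.le hq1.le himp
    have h2 := Pr_add_compl (q := q)
      (fun ω => Elow n q ε M ω ∧ Eup n q ε M ω ∧ Ecodeg n q ε M ω)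
    have hor : Pr q (fun ω => ¬(Elow n q ε M ω ∧ Eup n q ε M ω ∧ Ecodeg n q ε M ω))
        ≤ Pr q (fun ω => (¬ Elow n q ε M ω) ∨ ((¬ Eup n q ε M ω) ∨ (¬ Ecodeg n q ε M ω))) := by
      apply Pr_mono hq0.le hq1.le
      intro ω h
      by_contra hc
      push_neg at hc
      exact h ⟨hc.1, hc.2.1, hc.2.2⟩
    have hor2 : Pr q (fun ω => (¬ Elow n q ε M ω) ∨ ((¬ Eup n q ε M ω) ∨ (¬ Ecodeg n q ε M ω)))
        ≤ Pr q (fun ω => ¬ Elow n q ε M ω)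
          + (Pr q (fun ω => ¬ Eup n q ε M ω) + Pr q (fun ω => ¬ Ecodeg n q ε M ω)) := by
      refine le_trans (Pr_or_le hq0.le hq1.le _ _) ?_
      have := Pr_or_le hq0.le hq1.le (fun ω => ¬ Eup n q ε M ω) (fun ω => ¬ Ecodeg n q ε M ω)
      linarith
    have hn8 : (8:ℝ) ≤ (n:ℝ)/M := by
      have h8ε : (8:ℝ) ≤ 8/ε := by
        rw [le_div_iff₀ hε0]
        linarith
      linarith
    have hb1 := Pr_not_Elow hq0 hq1 hε0 hε1 hM1 hn8
    have hb2 := Pr_not_Eup hq0 hq1 hε0 hε1 hM1 hn8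
    have hb3 := Pr_not_Ecodeg hq0 hq1 hε0 hε1 hM1 hn2 hbig.le
    have hkey : (n:ℝ)*Real.exp (-(q*n)/2) ≤ 1/n := by
      rw [le_div_iff₀ hn0]
      have hn_eq : (n:ℝ) = Real.exp (Real.log n) := (Real.exp_log hn0).symm
      calc (n:ℝ)*Real.exp (-(q*n)/2)*(n:ℝ)
          = Real.exp (Real.log n)*Real.exp (-(q*n)/2)*Real.exp (Real.log n) := by
            rw [← hn_eq]
      _ = Real.exp (Real.log n + -(q*(n:ℝ))/2 + Real.log n) := by
            rw [Real.exp_add, Real.exp_add]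
      _ ≤ Real.exp 0 := Real.exp_le_exp.2 (by nlinarith)
      _ = 1 := Real.exp_zero
    linarith

end GnpAux

/-- **Lemma 4.2.** For any two large sets `A, B`, all but `O(p⁻¹ n)` edges `uv`
of `G(n,p)` have typical degrees into `A` and `B` and a typical common
neighbourhood in `B`. -/
theorem gnp_typical_edges (ε : ℝ) (hε0 : 0 < ε) (hε1 : ε < 1 / 2) (M : ℕ) (hM : 0 < M)
    (p : ℕ → ℝ) (hp : ∀ n, 0 < p n ∧ p n < 1)
    (hgrow : Filter.Tendsto (fun n => p n * n / Real.log n) Filter.atTop Filter.atTop) :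
    Filter.Tendsto (fun n => gnp n (p n)
      {ω |
        let G := graphOfFlip ω
        ∀ A B : Set (Fin n), (n : ℝ) / M ≤ (A.ncard : ℝ) → (n : ℝ) / M ≤ (B.ncard : ℝ) →
          ((Set.ncard {e : Sym2 (Fin n) | e ∈ G.edgeSet ∧ ∃ u v : Fin n, e = s(u, v) ∧
            ¬ (((1 - ε) * p n * A.ncard ≤ (degIn G u A : ℝ) ∧
                  (degIn G u A : ℝ) ≤ (1 + ε) * p n * A.ncard) ∧
                ((1 - ε) * p n * A.ncard ≤ (degIn G v A : ℝ) ∧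
                  (degIn G v A : ℝ) ≤ (1 + ε) * p n * A.ncard) ∧
                ((1 - ε) * p n * B.ncard ≤ (degIn G u B : ℝ) ∧
                  (degIn G u B : ℝ) ≤ (1 + ε) * p n * B.ncard) ∧
                ((1 - ε) * p n * B.ncard ≤ (degIn G v B : ℝ) ∧
                  (degIn G v B : ℝ) ≤ (1 + ε) * p n * B.ncard) ∧
                (1 - ε) * (p n) ^ 2 * B.ncard
                  ≤ ((G.neighborSet u ∩ G.neighborSet v ∩ B).ncard : ℝ))}) : ℝ)
            ≤ 10 ^ 3 * M * (ε⁻¹) ^ 2 * (p n)⁻¹ * n})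
      Filter.atTop (nhds 1) := by
  classical
  have hM1 : (1:ℝ) ≤ (M:ℝ) := by exact_mod_cast hM
  have hMpos : (0:ℝ) < (M:ℝ) := lt_of_lt_of_le one_pos hM1
  have hconv : Filter.Tendsto
      (fun n => GnpAux.Pr (p n) (fun ω => ω ∈ GnpAux.GoodSet n (p n) ε M))
      Filter.atTop (nhds 1) := by
    have hev : ∀ᶠ n : ℕ in Filter.atTop,
        1 - (3*Real.exp (-(n:ℝ)/2) + 1/(n:ℝ))
          ≤ GnpAux.Pr (p n) (fun ω => ω ∈ GnpAux.GoodSet n (p n) ε M) := by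
      have hg1 := hgrow.eventually_ge_atTop (100 + 16*(M:ℝ)/ε)
      filter_upwards [hg1, Filter.eventually_ge_atTop 3,
        Filter.eventually_ge_atTop ⌈(8:ℝ)*M/ε⌉₊] with n hC' hn3 hn8'
      have hq0 := (hp n).1
      have hq1 := (hp n).2
      have hlog1 := GnpAux.log_ge_one hn3
      have hlogpos : (0:ℝ) < Real.log n := lt_of_lt_of_le one_pos hlog1
      have hC : (100 + 16*(M:ℝ)/ε) * Real.log n ≤ p n * n := by
        rw [← le_div_iff₀ hlogpos]
        exact hC'
      have h16Mε : (0:ℝ) ≤ 16*(M:ℝ)/ε := by positivity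
      have hn4 : 100*Real.log n ≤ p n * n := by nlinarith
      have hn2 : 16*M/ε ≤ p n * n := by nlinarith
      have hn1 : (8:ℝ)/ε ≤ (n:ℝ)/M := by
        have h8 : (8:ℝ)*M/ε ≤ n := Nat.ceil_le.1 hn8'
        rw [div_le_div_iff₀ hε0 hMpos]
        rw [div_le_iff₀ hε0] at h8
        linarith
      exact GnpAux.main_bound hq0 hq1 hε0 hε1 hM1 hn3 hn1 hn2 hn4
    have hupper : ∀ᶠ n : ℕ in Filter.atTop,
        GnpAux.Pr (p n) (fun ω => ω ∈ GnpAux.GoodSet n (p n) ε M) ≤ 1 :=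
      Filter.Eventually.of_forall
        (fun n => GnpAux.Pr_le_one (hp n).1.le (hp n).2.le _)
    have hexp : Filter.Tendsto (fun n : ℕ => Real.exp (-(n:ℝ)/2))
        Filter.atTop (nhds 0) := by
      apply Real.tendsto_exp_atBot.comp
      have h1 : Filter.Tendsto (fun n : ℕ => (n:ℝ)) Filter.atTop Filter.atTop :=
        tendsto_natCast_atTop_atTop
      have h2 : Filter.Tendsto (fun x : ℝ => -x/2) Filter.atTop Filter.atBot := by
        have h3 : Filter.Tendsto (fun x : ℝ => x/2) Filter.atTop Filter.atTop :=
          Filter.Tendsto.atTop_div_const (by norm_num) Filter.tendsto_id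
        have h4 := Filter.tendsto_neg_atTop_atBot.comp h3
        refine h4.congr (fun x => ?_)
        simp only [Function.comp_apply]
        ring
      exact h2.comp h1
    have hinv : Filter.Tendsto (fun n : ℕ => 1/(n:ℝ)) Filter.atTop (nhds 0) :=
      tendsto_one_div_atTop_nhds_zero_nat
    have hlowt : Filter.Tendsto (fun n : ℕ => 1 - (3*Real.exp (-(n:ℝ)/2) + 1/(n:ℝ)))
        Filter.atTop (nhds 1) := by
      have h5 := (hexp.const_mul 3).add hinv
      have h6 := (tendsto_const_nhds (x := (1:ℝ)) (f := Filter.atTop)).sub h5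
      simpa using h6
    exact tendsto_of_tendsto_of_tendsto_of_le_of_le' hlowt tendsto_const_nhds hev hupper
  have hfin := ENNReal.tendsto_ofReal hconv
  rw [ENNReal.ofReal_one] at hfin
  refine hfin.congr (fun n => ?_)
  exact (GnpAux.gnp_eq_Pr (hp n).1.le (hp n).2.le (GnpAux.GoodSet n (p n) ε M)).symm
end

section
/- Let 0 < γ ≤ 1/10, let ε = γ²/10⁴ and η = γ²/10³ + 3ε, let p > 0, and let H be a graph on n vertices with minimum degree δ(H) ≥ (2/5 + γ)·p·n. Let X ∪ Y be a partition of V(H) such that e_H(X) ≤ η·p·n², e_H(Y) ≤ η·p·n², and e_H(X,Y) ≤ (1+ε)·p·|X|·|Y|. Then (2/5 + γ/2)·n ≤ |X| ≤ (3/5 − γ/2)·n and (2/5 + γ/2)·n ≤ |Y| ≤ (3/5 − γ/2)·n. -/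
open MeasureTheory Filter

set_option maxHeartbeats 1000000

open scoped Classical in
open Finset in
lemma edgeCount_eq_sum {V : Type*} [Fintype V] [DecidableEq V] (G : SimpleGraph V)
    (A B : Set V) : edgeCount G A B = ∑ v : V, if v ∈ A then degIn G v B else 0 := by
  classical
  have h : {q : V × V | q.1 ∈ A ∧ q.2 ∈ B ∧ G.Adj q.1 q.2} =
      ↑((Finset.univ : Finset (V × V)).filter fun q => q.1 ∈ A ∧ q.2 ∈ B ∧ G.Adj q.1 q.2) := by
    ext q; simp
  rw [edgeCount, h, Set.ncard_coe_finset]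
  rw [Finset.card_eq_sum_card_fiberwise (f := Prod.fst) (t := Finset.univ) (fun x _ => mem_univ _)]
  refine Finset.sum_congr rfl fun v _ => ?_
  by_cases hv : v ∈ A
  · rw [if_pos hv]
    rw [degIn]
    have h2 : G.neighborSet v ∩ B = ↑((Finset.univ : Finset V).filter fun w => G.Adj v w ∧ w ∈ B) := by
      ext w; simp [SimpleGraph.mem_neighborSet, and_comm]
    rw [h2, Set.ncard_coe_finset]
    apply Finset.card_bij (fun q _ => q.2)
    · intro q hq; simp only [mem_filter, mem_univ, true_and] at hq ⊢
      obtain ⟨⟨_, hb, hadj⟩, h1⟩ := hq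
      exact ⟨h1 ▸ hadj, hb⟩
    · intro q1 h1 q2 h2 he
      simp only [mem_filter] at h1 h2
      exact Prod.ext (h1.2.trans h2.2.symm) he
    · intro w hw; simp only [mem_filter, mem_univ, true_and] at hw
      exact ⟨(v, w), by simp [hv, hw.1, hw.2], rfl⟩
  · rw [if_neg hv]
    rw [Finset.card_eq_zero, Finset.filter_eq_empty_iff]
    rintro q hq
    simp only [mem_filter] at hq
    rintro rfl
    exact hv hq.2.1

open scoped Classical in
open Finset in
lemma edgeCount_self {V : Type*} [Fintype V] [DecidableEq V] (G : SimpleGraph V)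
    (A : Set V) : edgeCount G A A = 2 * edgesIn G A := by
  have h : {q : V × V | q.1 ∈ A ∧ q.2 ∈ A ∧ G.Adj q.1 q.2} =
      ↑((Finset.univ : Finset (V × V)).filter fun q => q.1 ∈ A ∧ q.2 ∈ A ∧ G.Adj q.1 q.2) := by
    ext q; simp
  have h2 : {e ∈ G.edgeSet | ∀ v ∈ e, v ∈ A} =
      ↑((Finset.univ : Finset (Sym2 V)).filter fun e => e ∈ G.edgeSet ∧ ∀ v ∈ e, v ∈ A) := by
    ext e; simp
  rw [edgeCount, edgesIn, h, h2, Set.ncard_coe_finset, Set.ncard_coe_finset]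
  rw [Finset.card_eq_sum_card_fiberwise
    (f := fun q : V × V => Sym2.mk q.1 q.2)
    (t := (Finset.univ : Finset (Sym2 V)).filter fun e : Sym2 V => e ∈ G.edgeSet ∧ ∀ v ∈ e, v ∈ A)
    (fun q hq => by
      simp only [Finset.mem_coe, mem_filter, mem_univ, true_and] at hq ⊢
      obtain ⟨h1, h2, h3⟩ := hq
      refine ⟨h3, ?_⟩
      intro v hv
      rw [Sym2.mem_iff] at hv
      rcases hv with rfl | rfl <;> assumption)]
  rw [Finset.sum_congr rfl (g := fun _ => 2), Finset.sum_const, smul_eq_mul, mul_comm]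
  intro e he
  simp only [mem_filter, mem_univ, true_and] at he
  obtain ⟨he1, he2⟩ := he
  induction e with
  | _ a b =>
    have hab : G.Adj a b := he1
    have hne : a ≠ b := hab.ne
    have : (Finset.univ.filter fun q : V × V => (q.1 ∈ A ∧ q.2 ∈ A ∧ G.Adj q.1 q.2) ∧
        Sym2.mk q.1 q.2 = s(a, b)) = {(a, b), (b, a)} := by
      ext q
      simp only [mem_filter, mem_univ, true_and, mem_insert, mem_singleton]
      constructor
      · rintro ⟨_, hs⟩
        rw [Sym2.eq_iff] at hs
        rcases hs with ⟨rfl, rfl⟩ | ⟨rfl, rfl⟩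
        · left; exact Prod.ext rfl rfl
        · right; exact Prod.ext rfl rfl
      · rintro (rfl | rfl)
        · exact ⟨⟨he2 a (by simp), he2 b (by simp), hab⟩, rfl⟩
        · exact ⟨⟨he2 b (by simp), he2 a (by simp), hab.symm⟩, Sym2.eq_swap⟩
    rw [Finset.filter_filter, this, Finset.card_insert_of_notMem (by simp [hne]),
      Finset.card_singleton]

lemma edgeCount_comm {V : Type*} (G : SimpleGraph V) (A B : Set V) :
    edgeCount G B A = edgeCount G A B := by
  rw [edgeCount, edgeCount]
  have h : {q : V × V | q.1 ∈ B ∧ q.2 ∈ A ∧ G.Adj q.1 q.2} =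
      Prod.swap '' {q : V × V | q.1 ∈ A ∧ q.2 ∈ B ∧ G.Adj q.1 q.2} := by
    ext ⟨a, b⟩
    constructor
    · rintro ⟨ha, hb, hadj⟩
      exact ⟨(b, a), ⟨hb, ha, hadj.symm⟩, rfl⟩
    · rintro ⟨⟨c, d⟩, ⟨hc, hd, hadj⟩, heq⟩
      rw [Prod.swap_prod_mk] at heq
      cases heq
      exact ⟨hd, hc, hadj.symm⟩
  rw [h, Set.ncard_image_of_injective _ Prod.swap_injective]

lemma arith_key (γ p n x y : ℝ) (hγ0 : 0 < γ) (hγ1 : γ ≤ 1 / 10) (hp : 0 < p)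
    (hy : 0 ≤ y) (hxy : x + y = n)
    (h : (2/5+γ)*p*n*x ≤ 2*((γ^2/10^3 + 3*(γ^2/10^4))*p*n^2) + (1+γ^2/10^4)*p*x*y) :
    (2/5+γ/2)*n ≤ y := by
  by_contra hc
  push_neg at hc
  have hn : 0 < n := by nlinarith
  have h' : (2/5+γ)*n*x ≤ 2*((γ^2/10^3 + 3*(γ^2/10^4))*n^2) + (1+γ^2/10^4)*x*y := by
    have := mul_le_mul_of_nonneg_left h (le_of_lt (inv_pos.mpr hp))
    have hp' : p ≠ 0 := ne_of_gt hp
    field_simp at this ⊢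
    nlinarith [this]
  have hxlb : (3/5-γ/2)*n < x := by nlinarith
  have hx0 : 0 < x := by nlinarith
  have hε0 : (0:ℝ) < 1 + γ^2/10^4 := by positivity
  have h1 : (1+γ^2/10^4)*x*y ≤ (1+γ^2/10^4)*x*((2/5+γ/2)*n) := by
    have := mul_le_mul_of_nonneg_left hc.le (le_of_lt (mul_pos hε0 hx0))
    calc (1+γ^2/10^4)*x*y = (1+γ^2/10^4)*x*y := rfl
      _ ≤ (1+γ^2/10^4)*x*((2/5+γ/2)*n) := by nlinarith [this]
  have hcpos : 0 < γ/2 - (γ^2/10^4)*(2/5+γ/2) := by nlinarith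
  have h2 : (γ/2 - (γ^2/10^4)*(2/5+γ/2))*(n*x) ≤ 2*((γ^2/10^3 + 3*(γ^2/10^4))*n^2) := by
    linarith [h', h1]
  have h3 : (γ/2 - (γ^2/10^4)*(2/5+γ/2))*((3/5-γ/2)*n*n) <
      (γ/2 - (γ^2/10^4)*(2/5+γ/2))*(n*x) := by
    apply mul_lt_mul_of_pos_left _ hcpos
    calc (3/5-γ/2)*n*n = ((3/5-γ/2)*n)*n := by ring
      _ < x*n := by exact mul_lt_mul_of_pos_right hxlb hn
      _ = n*x := by ring
  have hs2 : γ^2 ≤ γ/10 := by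
    have h := mul_le_mul_of_nonneg_left hγ1 hγ0.le; linarith [h]
  have hs3 : γ^3 ≤ γ^2/10 := by
    have h := mul_le_mul_of_nonneg_left hs2 hγ0.le; nlinarith [h]
  have hs4 : γ^4 ≤ γ^3/10 := by
    have h := mul_le_mul_of_nonneg_left hs3 hγ0.le; nlinarith [h]
  have hs40 : 0 ≤ γ^4 := by positivity
  have hpoly : 2*(γ^2/10^3 + 3*(γ^2/10^4)) ≤ (γ/2 - (γ^2/10^4)*(2/5+γ/2))*(3/5-γ/2) := by
    nlinarith [hs2, hs3, hs4, hs40]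
  nlinarith [mul_pos hn hn, mul_le_mul_of_nonneg_right hpoly (mul_pos hn hn).le]

open scoped Classical in
/-- Sum of degrees over a side of the partition. -/
lemma side_ineq {n : ℕ} (H : SimpleGraph (Fin n)) (γ p : ℝ)
    (hdeg : ∀ v : Fin n, (2 / 5 + γ) * p * n ≤ ((H.neighborSet v).ncard : ℝ))
    (A B : Set (Fin n)) (hdisj : Disjoint A B) (hcover : A ∪ B = Set.univ) :
    (2/5+γ)*p*n*(A.ncard) ≤ 2*(edgesIn H A : ℝ) + (edgeCount H A B : ℝ) := by
  have hsplit : ∀ v : Fin n, ((H.neighborSet v).ncard : ℕ) = degIn H v A + degIn H v B := by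
    intro v
    rw [degIn, degIn, ← Set.ncard_union_eq
      (Set.disjoint_of_subset Set.inter_subset_right Set.inter_subset_right hdisj)
      (Set.toFinite _) (Set.toFinite _)]
    rw [← Set.inter_union_distrib_left, hcover, Set.inter_univ]
  have hcard : A.ncard = (Finset.univ.filter fun v : Fin n => v ∈ A).card := by
    rw [← Set.ncard_coe_finset]
    congr 1
    ext v; simp
  have hsum : (edgeCount H A A : ℝ) + (edgeCount H A B : ℝ) =
      ∑ v : Fin n, if v ∈ A then ((H.neighborSet v).ncard : ℝ) else 0 := by
    rw [edgeCount_eq_sum, edgeCount_eq_sum]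
    push_cast
    rw [← Finset.sum_add_distrib]
    refine Finset.sum_congr rfl fun v _ => ?_
    by_cases hv : v ∈ A
    · rw [if_pos hv, if_pos hv, if_pos hv, hsplit v]; push_cast; ring
    · simp [hv]
  have hlb : (2/5+γ)*p*n*(A.ncard) ≤
      ∑ v : Fin n, if v ∈ A then ((H.neighborSet v).ncard : ℝ) else 0 := by
    have : ∑ v : Fin n, (if v ∈ A then (2/5+γ)*p*(n:ℝ) else 0) ≤
        ∑ v : Fin n, if v ∈ A then ((H.neighborSet v).ncard : ℝ) else 0 := by
      apply Finset.sum_le_sum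
      intro v _
      by_cases hv : v ∈ A
      · rw [if_pos hv, if_pos hv]; exact hdeg v
      · simp [hv]
    calc (2/5+γ)*p*n*(A.ncard)
        = ∑ v : Fin n, (if v ∈ A then (2/5+γ)*p*(n:ℝ) else 0) := by
          rw [← Finset.sum_filter, Finset.sum_const, ← hcard, nsmul_eq_mul]
          ring
      _ ≤ _ := this
  rw [edgeCount_self] at hsum
  push_cast at hsum
  linarith [hlb, hsum]

/-- **Claim 5.2** (deterministic form). Bounds on the sizes of the sides of a
partition `X ∪ Y` of a graph with minimum degree `(2/5 + γ)pn`, few edges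
inside `X` and `Y`, and not too many edges between `X` and `Y`. -/
theorem sizes_of_cut (γ : ℝ) (hγ0 : 0 < γ) (hγ1 : γ ≤ 1 / 10) (p : ℝ) (hp : 0 < p)
    (n : ℕ) (H : SimpleGraph (Fin n))
    (hdeg : ∀ v : Fin n, (2 / 5 + γ) * p * n ≤ ((H.neighborSet v).ncard : ℝ))
    (X Y : Set (Fin n)) (hdisj : Disjoint X Y) (hcover : X ∪ Y = Set.univ)
    (hX : (edgesIn H X : ℝ) ≤ (γ ^ 2 / 10 ^ 3 + 3 * (γ ^ 2 / 10 ^ 4)) * p * n ^ 2)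
    (hY : (edgesIn H Y : ℝ) ≤ (γ ^ 2 / 10 ^ 3 + 3 * (γ ^ 2 / 10 ^ 4)) * p * n ^ 2)
    (hXY : (edgeCount H X Y : ℝ) ≤ (1 + γ ^ 2 / 10 ^ 4) * p * X.ncard * Y.ncard) :
    ((2 / 5 + γ / 2) * n ≤ (X.ncard : ℝ) ∧ (X.ncard : ℝ) ≤ (3 / 5 - γ / 2) * n) ∧
    ((2 / 5 + γ / 2) * n ≤ (Y.ncard : ℝ) ∧ (Y.ncard : ℝ) ≤ (3 / 5 - γ / 2) * n) := by
  have hYX : (edgeCount H Y X : ℝ) ≤ (1 + γ ^ 2 / 10 ^ 4) * p * X.ncard * Y.ncard := by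
    rw [edgeCount_comm]; exact hXY
  have hcardsum : (X.ncard : ℝ) + (Y.ncard : ℝ) = n := by
    have := Set.ncard_union_eq hdisj (Set.toFinite _) (Set.toFinite _)
    rw [hcover] at this
    have h2 : (Set.univ : Set (Fin n)).ncard = n := by
      rw [Set.ncard_univ]; simp
    rw [h2] at this
    exact_mod_cast this.symm
  have hx0 : (0:ℝ) ≤ (X.ncard : ℝ) := Nat.cast_nonneg _
  have hy0 : (0:ℝ) ≤ (Y.ncard : ℝ) := Nat.cast_nonneg _
  have hIX := side_ineq H γ p hdeg X Y hdisj hcover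
  have hIY := side_ineq H γ p hdeg Y X hdisj.symm (by rw [Set.union_comm]; exact hcover)
  -- inequality for X side gives lower bound on Y
  have hYlb : (2/5+γ/2)*(n:ℝ) ≤ (Y.ncard : ℝ) := by
    apply arith_key γ p n (X.ncard) (Y.ncard) hγ0 hγ1 hp hy0 hcardsum
    calc (2/5+γ)*p*(n:ℝ)*(X.ncard) ≤ 2*(edgesIn H X : ℝ) + (edgeCount H X Y : ℝ) := hIX
      _ ≤ 2*((γ^2/10^3 + 3*(γ^2/10^4))*p*(n:ℝ)^2) + (1+γ^2/10^4)*p*(X.ncard)*(Y.ncard) := by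
          linarith [hX, hXY]
  have hXlb : (2/5+γ/2)*(n:ℝ) ≤ (X.ncard : ℝ) := by
    apply arith_key γ p n (Y.ncard) (X.ncard) hγ0 hγ1 hp hx0 (by linarith)
    calc (2/5+γ)*p*(n:ℝ)*(Y.ncard) ≤ 2*(edgesIn H Y : ℝ) + (edgeCount H Y X : ℝ) := hIY
      _ ≤ 2*((γ^2/10^3 + 3*(γ^2/10^4))*p*(n:ℝ)^2) + (1+γ^2/10^4)*p*(Y.ncard)*(X.ncard) := by
          nlinarith [hY, hYX]
  refine ⟨⟨hXlb, ?_⟩, ⟨hYlb, ?_⟩⟩ <;> linarith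
end
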